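/- arXiv:1909.08276 — 5 statements merged into one kernel-verified Lean document; each statement's English description precedes it below -/
import Mathlib

section
/- Assume B : (0,∞) → [0,∞) is continuous and bounded on some neighborhood of 0. Then for every locally bounded f : (0,∞) → ℝ there exists a unique locally bounded function φ : [0,∞) × (0,∞) → ℝ such that for all t ≥ 0 and x > 0, φ(t,x) = f(x e^t) exp(−∫₀^t B(x e^s) ds) + 2 ∫₀^t B(x e^τ) exp(−∫₀^τ B(x e^s) ds) φ(t−τ, x e^τ/2) dτ. -/
open MeasureTheory Real Set Filter Topology

noncomputable section

/-- A function on `(0,∞)` is locally bounded if it is bounded on the intersection of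
`(0,∞)` with every bounded set. -/
def LocBddOn (f : ℝ → ℝ) : Prop :=
  ∀ r > 0, ∃ C, ∀ x, 0 < x → x ≤ r → |f x| ≤ C

/-- A function on `[0,∞) × (0,∞)` is locally bounded if it is bounded on the intersection of
`[0,∞) × (0,∞)` with every bounded set. -/
def LocBdd2 (φ : ℝ → ℝ → ℝ) : Prop :=
  ∀ r > 0, ∃ C, ∀ t x, 0 ≤ t → t ≤ r → 0 < x → x ≤ r → |φ t x| ≤ C

/-- Mild solution of the dual mitosis equation with initial datum `f`. -/
def IsMildSol (B f : ℝ → ℝ) (φ : ℝ → ℝ → ℝ) : Prop :=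
  ∀ t ≥ 0, ∀ x > 0,
    φ t x = f (x * exp t) * Real.exp (-∫ s in (0:ℝ)..t, B (x * exp s))
      + 2 * ∫ τ in (0:ℝ)..t,
          B (x * exp τ) * Real.exp (-∫ s in (0:ℝ)..τ, B (x * exp s)) * φ (t - τ) (x * exp τ / 2)

/-- `B : (0,∞) → [0,∞)` is continuous and bounded on some neighborhood of `0`. -/
def Bhyp (B : ℝ → ℝ) : Prop :=
  ContinuousOn B (Ioi 0) ∧ (∀ x > 0, 0 ≤ B x) ∧
    ∃ ε > 0, ∃ C, ∀ x, 0 < x → x < ε → B x ≤ C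

namespace Mitosis

def J (B : ℝ → ℝ) (y c : ℝ) : ℝ := ∫ u in c..(0:ℝ), B (y * Real.exp u)

/-- Picard iterates (the `f`-free kernels). -/
def G (B : ℝ → ℝ) : ℕ → ℝ → ℝ → ℝ
  | 0 => fun t y => Real.exp (-(J B y (-t)))
  | (n+1) => fun t y => Real.exp (-(J B y (-t))) *
      ∫ σ in (0:ℝ)..t, B (y * Real.exp (-σ)) * Real.exp (J B y (-σ)) * G B n σ (y/2)

def Phi (B f : ℝ → ℝ) (t y : ℝ) : ℝ := ∑' n : ℕ, (2:ℝ)^n * f (y / 2^n) * G B n t y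

variable {B : ℝ → ℝ}

lemma contB (hc : ContinuousOn B (Ioi 0)) {y : ℝ} (hy : 0 < y) :
    Continuous fun u => B (y * Real.exp u) :=
  hc.comp_continuous (continuous_const.mul Real.continuous_exp)
    fun u => mem_Ioi.2 (mul_pos hy (Real.exp_pos u))

lemma intB (hc : ContinuousOn B (Ioi 0)) {y : ℝ} (hy : 0 < y) (a b : ℝ) :
    IntervalIntegrable (fun u => B (y * Real.exp u)) volume a b :=
  (contB hc hy).intervalIntegrable a b

lemma J_cont (hc : ContinuousOn B (Ioi 0)) {y : ℝ} (hy : 0 < y) : Continuous (J B y) := by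
  have : J B y = fun c => -∫ u in (0:ℝ)..c, B (y * Real.exp u) := by
    funext c; rw [J, intervalIntegral.integral_symm]
  rw [this]
  exact (intervalIntegral.continuous_primitive (fun a b => intB hc hy a b) 0).neg

lemma J_nonneg (hpos : ∀ x > 0, 0 ≤ B x) {y : ℝ} (hy : 0 < y) {c : ℝ} (hc : c ≤ 0) :
    0 ≤ J B y c :=
  intervalIntegral.integral_nonneg hc fun u _ => hpos _ (mul_pos hy (Real.exp_pos u))

lemma J_mono (hc : ContinuousOn B (Ioi 0)) (hpos : ∀ x > 0, 0 ≤ B x) {y : ℝ} (hy : 0 < y)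
    {c d : ℝ} (hcd : c ≤ d) (hd : d ≤ 0) : J B y d ≤ J B y c := by
  have h := intervalIntegral.integral_add_adjacent_intervals (intB hc hy c d) (intB hc hy d 0)
  have h2 : J B y c = (∫ u in c..d, B (y * Real.exp u)) + J B y d := by
    rw [J, J, ← h]
  rw [h2]
  have : 0 ≤ ∫ u in c..d, B (y * Real.exp u) :=
    intervalIntegral.integral_nonneg hcd fun u _ => hpos _ (mul_pos hy (Real.exp_pos u))
  linarith

lemma G_cont (hc : ContinuousOn B (Ioi 0)) :
    ∀ (n : ℕ) {y : ℝ}, 0 < y → Continuous fun t => G B n t y := by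
  intro n
  induction n with
  | zero =>
    intro y hy
    exact Real.continuous_exp.comp ((J_cont hc hy).comp continuous_neg).neg
  | succ n ih =>
    intro y hy
    have hcont : Continuous fun σ =>
        B (y * Real.exp (-σ)) * Real.exp (J B y (-σ)) * G B n σ (y/2) :=
      (((contB hc hy).comp continuous_neg).mul
        (Real.continuous_exp.comp ((J_cont hc hy).comp continuous_neg))).mul (ih (half_pos hy))
    exact (Real.continuous_exp.comp ((J_cont hc hy).comp continuous_neg).neg).mul
      (intervalIntegral.continuous_primitive (fun a b => hcont.intervalIntegrable a b) 0)

lemma G_bound (hc : ContinuousOn B (Ioi 0)) (hpos : ∀ x > 0, 0 ≤ B x) {R M : ℝ}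
    (hM : ∀ z, 0 < z → z ≤ R → B z ≤ M) (hM0 : 0 ≤ M) :
    ∀ (n : ℕ) {y : ℝ}, 0 < y → y ≤ R → ∀ {t : ℝ}, 0 ≤ t →
      0 ≤ G B n t y ∧ G B n t y ≤ M ^ n * t ^ n / n.factorial := by
  intro n
  induction n with
  | zero =>
    intro y hy hyR t ht
    constructor
    · exact (Real.exp_pos _).le
    · simp only [G, pow_zero, Nat.factorial_zero, Nat.cast_one, mul_one, one_mul, div_one]
      exact Real.exp_le_one_iff.2 (neg_nonpos.2 (J_nonneg hpos hy (neg_nonpos.2 ht)))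
  | succ n ih =>
    intro y hy hyR t ht
    have hy2 : 0 < y / 2 := half_pos hy
    have hy2R : y / 2 ≤ R := (half_le_self hy.le).trans hyR
    have hyeR : ∀ σ : ℝ, y * Real.exp (-σ) > 0 := fun σ => mul_pos hy (Real.exp_pos _)
    have hint1 : IntervalIntegrable
        (fun σ => B (y * Real.exp (-σ)) * Real.exp (J B y (-σ)) * G B n σ (y/2))
        volume 0 t := by
      have hcont : Continuous fun σ =>
          B (y * Real.exp (-σ)) * Real.exp (J B y (-σ)) * G B n σ (y/2) :=
        (((contB hc hy).comp continuous_neg).mul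
          (Real.continuous_exp.comp ((J_cont hc hy).comp continuous_neg))).mul
          (G_cont hc n hy2)
      exact hcont.intervalIntegrable 0 t
    have hint2 : IntervalIntegrable
        (fun σ => M * Real.exp (J B y (-t)) * (M ^ n / n.factorial) * σ ^ n) volume 0 t :=
      (continuous_const.mul (continuous_pow n)).intervalIntegrable 0 t
    constructor
    · refine mul_nonneg (Real.exp_pos _).le (intervalIntegral.integral_nonneg ht ?_)
      intro σ hσ
      exact mul_nonneg (mul_nonneg (hpos _ (hyeR σ)) (Real.exp_pos _).le)
        (ih hy2 hy2R hσ.1).1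
    · have hptwise : ∀ σ ∈ Icc (0:ℝ) t,
          B (y * Real.exp (-σ)) * Real.exp (J B y (-σ)) * G B n σ (y/2) ≤
            M * Real.exp (J B y (-t)) * (M ^ n / n.factorial) * σ ^ n := by
        intro σ hσ
        have hBle : B (y * Real.exp (-σ)) ≤ M := by
          refine hM _ (hyeR σ) ?_
          calc y * Real.exp (-σ) ≤ y * 1 := by
                have := Real.exp_le_one_iff.2 (neg_nonpos.2 hσ.1)
                nlinarith [hy]
            _ ≤ R := by linarith
        have hexp : Real.exp (J B y (-σ)) ≤ Real.exp (J B y (-t)) :=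
          Real.exp_le_exp.2 (J_mono hc hpos hy (neg_le_neg hσ.2) (neg_nonpos.2 hσ.1))
        have hG := ih hy2 hy2R hσ.1
        calc B (y * Real.exp (-σ)) * Real.exp (J B y (-σ)) * G B n σ (y/2)
            ≤ M * Real.exp (J B y (-t)) * (M ^ n * σ ^ n / n.factorial) := by
              apply mul_le_mul
              · exact mul_le_mul hBle hexp (Real.exp_pos _).le hM0
              · exact hG.2
              · exact hG.1
              · positivity
          _ = M * Real.exp (J B y (-t)) * (M ^ n / n.factorial) * σ ^ n := by ring
      have hle := intervalIntegral.integral_mono_on ht hint1 hint2 hptwise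
      have hval : (∫ σ in (0:ℝ)..t,
          M * Real.exp (J B y (-t)) * (M ^ n / n.factorial) * σ ^ n)
          = M * Real.exp (J B y (-t)) * (M ^ n / n.factorial) * (t ^ (n+1) / (n+1)) := by
        rw [intervalIntegral.integral_const_mul, integral_pow]
        simp
      have := mul_le_mul_of_nonneg_left hle (Real.exp_pos (-(J B y (-t)))).le
      rw [hval] at this
      refine le_trans this (le_of_eq ?_)
      rw [Real.exp_neg]
      have hne : Real.exp (J B y (-t)) ≠ 0 := (Real.exp_pos _).ne'
      have hfac : ((n+1).factorial : ℝ) = (n+1) * n.factorial := by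
        push_cast [Nat.factorial_succ]; ring
      rw [hfac]
      field_simp
      ring


variable {f : ℝ → ℝ}

lemma Bbdd (hB : Bhyp B) (R : ℝ) : ∃ M, 0 ≤ M ∧ ∀ z, 0 < z → z ≤ R → B z ≤ M := by
  obtain ⟨hc, hpos, ε, hε, Cb, hCb⟩ := hB
  obtain ⟨C2, hC2⟩ := (isCompact_Icc (a := ε) (b := R)).exists_bound_of_continuousOn
    (hc.mono (fun z hz => lt_of_lt_of_le hε hz.1))
  refine ⟨max (max Cb C2) 0, le_max_right _ _, fun z hz hzR => ?_⟩
  rcases lt_or_ge z ε with h | h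
  · exact le_trans (hCb z hz h) (le_trans (le_max_left _ _) (le_max_left _ _))
  · have := hC2 z ⟨h, hzR⟩
    rw [Real.norm_eq_abs] at this
    exact le_trans (le_trans (le_abs_self _) this)
      (le_trans (le_max_right Cb C2) (le_max_left _ _))

lemma fbdd (hf : LocBddOn f) {R : ℝ} (hR : 0 < R) :
    ∃ C, 0 ≤ C ∧ ∀ z, 0 < z → z ≤ R → |f z| ≤ C := by
  obtain ⟨C, hC⟩ := hf R hR
  exact ⟨max C 0, le_max_right _ _, fun z hz hzR => le_trans (hC z hz hzR) (le_max_left _ _)⟩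

lemma intJ_eq (hc : ContinuousOn B (Ioi 0)) {x : ℝ} (hx : 0 < x) (t τ : ℝ) :
    (∫ s in (0:ℝ)..τ, B (x * Real.exp s))
      = J B (x * Real.exp t) (-t) - J B (x * Real.exp t) (τ - t) := by
  set y := x * Real.exp t with hy'
  have hy : 0 < y := mul_pos hx (Real.exp_pos t)
  have h1 : ∀ s : ℝ, x * Real.exp s = y * Real.exp (s - t) := by
    intro s
    rw [hy', mul_assoc, ← Real.exp_add]
    congr 1
    ring
  have step1 : (∫ s in (0:ℝ)..τ, B (x * Real.exp s))
      = ∫ u in (0:ℝ) - t..τ - t, B (y * Real.exp u) := by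
    simp only [h1]
    exact intervalIntegral.integral_comp_sub_right (fun u => B (y * Real.exp u)) t
  have hadj := intervalIntegral.integral_add_adjacent_intervals
    (intB hc hy (0 - t) (τ - t)) (intB hc hy (τ - t) 0)
  rw [step1, eq_sub_of_add_eq hadj]
  rw [J, J, zero_sub]

lemma exp_term (hc : ContinuousOn B (Ioi 0)) {x t : ℝ} (hx : 0 < x) :
    (∫ s in (0:ℝ)..t, B (x * Real.exp s)) = J B (x * Real.exp t) (-t) := by
  rw [intJ_eq hc hx t t, sub_self]
  simp [J]

lemma transform (hc : ContinuousOn B (Ioi 0)) (χ : ℝ → ℝ → ℝ) {t x : ℝ} (hx : 0 < x) :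
    (∫ τ in (0:ℝ)..t, B (x * Real.exp τ) *
        Real.exp (-∫ s in (0:ℝ)..τ, B (x * Real.exp s)) * χ (t - τ) (x * Real.exp τ / 2))
      = Real.exp (-(J B (x * Real.exp t) (-t))) *
        ∫ σ in (0:ℝ)..t, B ((x * Real.exp t) * Real.exp (-σ)) *
          Real.exp (J B (x * Real.exp t) (-σ)) * χ σ (x * Real.exp t / 2 * Real.exp (-σ)) := by
  set y := x * Real.exp t with hy'
  have hy : 0 < y := mul_pos hx (Real.exp_pos t)
  have hint : ∀ τ : ℝ, B (x * Real.exp τ) *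
        Real.exp (-∫ s in (0:ℝ)..τ, B (x * Real.exp s)) * χ (t - τ) (x * Real.exp τ / 2)
      = Real.exp (-(J B y (-t))) * ((fun σ => B (y * Real.exp (-σ)) *
          Real.exp (J B y (-σ)) * χ σ (y / 2 * Real.exp (-σ))) (t - τ)) := by
    intro τ
    have e1 : y * Real.exp (-(t - τ)) = x * Real.exp τ := by
      rw [hy', mul_assoc, ← Real.exp_add]
      congr 1
      ring
    have e2 : y / 2 * Real.exp (-(t - τ)) = x * Real.exp τ / 2 := by
      rw [div_mul_eq_mul_div, e1]
    have e3 : Real.exp (-(J B y (-t) - J B y (τ - t)))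
        = Real.exp (J B y (τ - t)) * Real.exp (-(J B y (-t))) := by
      rw [← Real.exp_add]
      congr 1
      ring
    rw [intJ_eq hc hx t τ, ← hy']
    simp only [e1, e2]
    rw [show -(t - τ) = τ - t from neg_sub t τ, e3]
    ring
  rw [intervalIntegral.integral_congr (fun τ _ => hint τ),
    intervalIntegral.integral_const_mul,
    intervalIntegral.integral_comp_sub_left
      (fun σ => B (y * Real.exp (-σ)) * Real.exp (J B y (-σ)) * χ σ (y / 2 * Real.exp (-σ))) t]
  simp


lemma term_bound (hc : ContinuousOn B (Ioi 0)) (hpos : ∀ x > 0, 0 ≤ B x) {R M C : ℝ}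
    (hM : ∀ z, 0 < z → z ≤ R → B z ≤ M) (hM0 : 0 ≤ M)
    (hC : ∀ z, 0 < z → z ≤ R → |f z| ≤ C) (n : ℕ) {y t : ℝ}
    (hy : 0 < y) (hyR : y ≤ R) (ht : 0 ≤ t) :
    |(2:ℝ)^n * f (y / 2^n) * G B n t y| ≤ C * ((2*M*t)^n / n.factorial) := by
  have hyn : 0 < y / 2^n := by positivity
  have hynR : y / 2^n ≤ R := by
    refine le_trans ?_ hyR
    exact div_le_self hy.le (one_le_pow₀ (by norm_num))
  have hG := G_bound hc hpos hM hM0 n hy hyR ht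
  have hC0 : 0 ≤ C := le_trans (abs_nonneg _) (hC y hy hyR)
  rw [abs_mul, abs_mul, abs_of_nonneg hG.1, abs_of_nonneg (by positivity : (0:ℝ) ≤ (2:ℝ)^n)]
  calc (2:ℝ)^n * |f (y / 2^n)| * G B n t y
      ≤ (2:ℝ)^n * C * (M^n * t^n / n.factorial) := by
        apply mul_le_mul
        · exact mul_le_mul_of_nonneg_left (hC _ hyn hynR) (by positivity)
        · exact hG.2
        · exact hG.1
        · positivity
    _ = C * ((2*M*t)^n / n.factorial) := by
        rw [mul_pow, mul_pow]; ring

lemma summable_term (hc : ContinuousOn B (Ioi 0)) (hpos : ∀ x > 0, 0 ≤ B x) {R M C : ℝ}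
    (hM : ∀ z, 0 < z → z ≤ R → B z ≤ M) (hM0 : 0 ≤ M)
    (hC : ∀ z, 0 < z → z ≤ R → |f z| ≤ C) {y t : ℝ}
    (hy : 0 < y) (hyR : y ≤ R) (ht : 0 ≤ t) :
    Summable (fun n : ℕ => (2:ℝ)^n * f (y / 2^n) * G B n t y) := by
  refine Summable.of_norm (Summable.of_nonneg_of_le (fun n => norm_nonneg _) (fun n => ?_)
    ((Real.summable_pow_div_factorial (2*M*t)).mul_left C))
  rw [Real.norm_eq_abs]
  exact term_bound hc hpos hM hM0 hC n hy hyR ht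

lemma Phi_bound (hc : ContinuousOn B (Ioi 0)) (hpos : ∀ x > 0, 0 ≤ B x) {R M C : ℝ}
    (hM : ∀ z, 0 < z → z ≤ R → B z ≤ M) (hM0 : 0 ≤ M)
    (hC : ∀ z, 0 < z → z ≤ R → |f z| ≤ C) {y t : ℝ}
    (hy : 0 < y) (hyR : y ≤ R) (ht : 0 ≤ t) :
    |Phi B f t y| ≤ C * Real.exp (2*M*t) := by
  have hC0 : 0 ≤ C := le_trans (abs_nonneg _) (hC y hy hyR)
  have hnorm : Summable (fun n : ℕ => ‖(2:ℝ)^n * f (y / 2^n) * G B n t y‖) := by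
    refine Summable.of_nonneg_of_le (fun n => norm_nonneg _) (fun n => ?_)
      ((Real.summable_pow_div_factorial (2*M*t)).mul_left C)
    rw [Real.norm_eq_abs]
    exact term_bound hc hpos hM hM0 hC n hy hyR ht
  have h1 : |Phi B f t y| ≤ ∑' n : ℕ, ‖(2:ℝ)^n * f (y / 2^n) * G B n t y‖ := by
    rw [← Real.norm_eq_abs]
    exact norm_tsum_le_tsum_norm hnorm
  refine le_trans h1 ?_
  have h2 : ∑' n : ℕ, ‖(2:ℝ)^n * f (y / 2^n) * G B n t y‖
      ≤ ∑' n : ℕ, C * ((2*M*t)^n / n.factorial) := by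
    refine Summable.tsum_le_tsum (fun n => ?_) hnorm
      ((Real.summable_pow_div_factorial (2*M*t)).mul_left C)
    rw [Real.norm_eq_abs]
    exact term_bound hc hpos hM hM0 hC n hy hyR ht
  refine le_trans h2 (le_of_eq ?_)
  rw [tsum_mul_left]
  congr 1
  rw [Real.exp_eq_exp_ℝ, NormedSpace.exp_eq_tsum_div]

lemma Phi_master (hB : Bhyp B) (hf : LocBddOn f) {y t : ℝ} (hy : 0 < y) (ht : 0 ≤ t) :
    Phi B f t y = f y * Real.exp (-(J B y (-t))) + 2 * (Real.exp (-(J B y (-t))) *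
      ∫ σ in (0:ℝ)..t, B (y * Real.exp (-σ)) * Real.exp (J B y (-σ)) * Phi B f σ (y/2)) := by
  have hc := hB.1
  have hpos := hB.2.1
  obtain ⟨M, hM0, hM⟩ := Bbdd hB y
  obtain ⟨C, hC0, hC⟩ := fbdd hf hy
  have hy2 : 0 < y / 2 := half_pos hy
  have hy2R : y / 2 ≤ y := half_le_self hy.le
  set Fn : ℕ → ℝ → ℝ := fun n σ => B (y * Real.exp (-σ)) * Real.exp (J B y (-σ)) *
      ((2:ℝ)^n * f (y/2 / 2^n) * G B n σ (y/2)) with hFn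
  have hFcont : ∀ n, Continuous (Fn n) :=
    fun n => (((contB hc hy).comp continuous_neg).mul
      (Real.continuous_exp.comp ((J_cont hc hy).comp continuous_neg))).mul
      (continuous_const.mul (G_cont hc n hy2))
  have hbnd0 : ∀ n : ℕ, (0:ℝ) ≤ C * ((2*M*t)^n / n.factorial) := by
    intro n; positivity
  have hptb : ∀ n : ℕ, ∀ σ ∈ Ioc (0:ℝ) t,
      ‖Fn n σ‖ ≤ M * Real.exp (J B y (-t)) * (C * ((2*M*t)^n / n.factorial)) := by
    intro n σ hσ
    have hBle : B (y * Real.exp (-σ)) ≤ M := by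
      refine hM _ (mul_pos hy (Real.exp_pos _)) ?_
      calc y * Real.exp (-σ) ≤ y * 1 :=
            mul_le_mul_of_nonneg_left (Real.exp_le_one_iff.2 (neg_nonpos.2 hσ.1.le)) hy.le
        _ = y := mul_one y
    have hexp : Real.exp (J B y (-σ)) ≤ Real.exp (J B y (-t)) :=
      Real.exp_le_exp.2 (J_mono hc hpos hy (neg_le_neg hσ.2) (neg_nonpos.2 hσ.1.le))
    have htb2 : |(2:ℝ)^n * f (y/2 / 2^n) * G B n σ (y/2)| ≤ C * ((2*M*t)^n / n.factorial) := by
      refine le_trans (term_bound hc hpos hM hM0 hC n hy2 hy2R hσ.1.le) ?_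
      have h0 : (0:ℝ) ≤ 2*M*σ := mul_nonneg (by positivity) hσ.1.le
      gcongr
      exact hσ.2
    rw [hFn]
    simp only [Real.norm_eq_abs]
    rw [abs_mul, abs_mul]
    rw [abs_of_nonneg (hpos _ (mul_pos hy (Real.exp_pos _))),
        abs_of_nonneg (Real.exp_pos _).le]
    apply mul_le_mul
    · exact mul_le_mul hBle hexp (Real.exp_pos _).le hM0
    · exact htb2
    · exact abs_nonneg _
    · positivity
  have hmeas : ∀ n, AEStronglyMeasurable (Fn n) (volume.restrict (Ioc (0:ℝ) t)) :=
    fun n => (hFcont n).aestronglyMeasurable.restrict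
  have hbound : ∑' n : ℕ, ∫⁻ σ in Ioc (0:ℝ) t, ‖Fn n σ‖₊ ≠ ⊤ := by
    have hone : ∀ n : ℕ, (∫⁻ σ in Ioc (0:ℝ) t, ‖Fn n σ‖₊)
        ≤ ENNReal.ofReal ((M * Real.exp (J B y (-t)) * (C * ((2*M*t)^n / n.factorial))) * t) := by
      intro n
      calc (∫⁻ σ in Ioc (0:ℝ) t, ‖Fn n σ‖₊)
          ≤ ∫⁻ _ in Ioc (0:ℝ) t,
              ENNReal.ofReal (M * Real.exp (J B y (-t)) * (C * ((2*M*t)^n / n.factorial))) := by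
            refine setLIntegral_mono measurable_const (fun σ hσ => ?_)
            rw [← ENNReal.ofReal_coe_nnreal, coe_nnnorm]
            exact ENNReal.ofReal_le_ofReal (hptb n σ hσ)
        _ = ENNReal.ofReal (M * Real.exp (J B y (-t)) * (C * ((2*M*t)^n / n.factorial)))
              * volume (Ioc (0:ℝ) t) := setLIntegral_const _ _
        _ = ENNReal.ofReal ((M * Real.exp (J B y (-t)) * (C * ((2*M*t)^n / n.factorial))) * t) := by
            rw [Real.volume_Ioc, sub_zero, ← ENNReal.ofReal_mul (by positivity)]
    have hsummable : Summable (fun n : ℕ =>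
        (M * Real.exp (J B y (-t)) * (C * ((2*M*t)^n / n.factorial))) * t) := by
      have : (fun n : ℕ => (M * Real.exp (J B y (-t)) * (C * ((2*M*t)^n / n.factorial))) * t)
          = fun n : ℕ => (M * Real.exp (J B y (-t)) * C * t) * ((2*M*t)^n / n.factorial) := by
        funext n; ring
      rw [this]
      exact (Real.summable_pow_div_factorial (2*M*t)).mul_left _
    refine ne_top_of_le_ne_top ?_ (ENNReal.tsum_le_tsum hone)
    rw [← ENNReal.ofReal_tsum_of_nonneg (fun n => by positivity) hsummable]
    exact ENNReal.ofReal_ne_top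
  have key : (∫ σ in (0:ℝ)..t, B (y * Real.exp (-σ)) * Real.exp (J B y (-σ)) * Phi B f σ (y/2))
      = ∑' n : ℕ, ∫ σ in (0:ℝ)..t, Fn n σ := by
    have h1 : ∀ σ : ℝ, B (y * Real.exp (-σ)) * Real.exp (J B y (-σ)) * Phi B f σ (y/2)
        = ∑' n : ℕ, Fn n σ := by
      intro σ
      rw [Phi, ← tsum_mul_left]
    rw [intervalIntegral.integral_congr (fun σ _ => h1 σ), intervalIntegral.integral_of_le ht,
      MeasureTheory.integral_tsum hmeas hbound]
    refine tsum_congr (fun n => ?_)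
    rw [← intervalIntegral.integral_of_le ht]
  have hterm : ∀ n : ℕ, (∫ σ in (0:ℝ)..t, Fn n σ) = (2:ℝ)^n * f (y/2 / 2^n) *
      (∫ σ in (0:ℝ)..t, B (y * Real.exp (-σ)) * Real.exp (J B y (-σ)) * G B n σ (y/2)) := by
    intro n
    have h2 : ∀ σ : ℝ, Fn n σ = ((2:ℝ)^n * f (y/2 / 2^n)) *
        (B (y * Real.exp (-σ)) * Real.exp (J B y (-σ)) * G B n σ (y/2)) := by
      intro σ; rw [hFn]; ring
    rw [intervalIntegral.integral_congr (fun σ _ => h2 σ), intervalIntegral.integral_const_mul]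
  have hsum : Summable (fun n : ℕ => (2:ℝ)^n * f (y / 2^n) * G B n t y) :=
    summable_term hc hpos hM hM0 hC hy le_rfl ht
  have harg : ∀ n : ℕ, y / 2 / 2^n = y / 2^(n+1) := by
    intro n
    rw [div_div, pow_succ]
    ring_nf
  have hGsucc : ∀ n : ℕ, G B (n+1) t y = Real.exp (-(J B y (-t))) *
      ∫ σ in (0:ℝ)..t, B (y * Real.exp (-σ)) * Real.exp (J B y (-σ)) * G B n σ (y/2) :=
    fun n => rfl
  calc Phi B f t y
      = (2:ℝ)^0 * f (y / 2^0) * G B 0 t y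
        + ∑' n : ℕ, (2:ℝ)^(n+1) * f (y / 2^(n+1)) * G B (n+1) t y := hsum.tsum_eq_zero_add
    _ = f y * Real.exp (-(J B y (-t)))
        + ∑' n : ℕ, 2 * (Real.exp (-(J B y (-t))) * ((2:ℝ)^n * f (y/2 / 2^n) *
            (∫ σ in (0:ℝ)..t, B (y * Real.exp (-σ)) * Real.exp (J B y (-σ)) * G B n σ (y/2)))) := by
        congr 1
        · norm_num [G]
        · refine tsum_congr (fun n => ?_)
          rw [hGsucc n, harg n, pow_succ]
          ring
    _ = f y * Real.exp (-(J B y (-t))) + 2 * (Real.exp (-(J B y (-t))) *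
          ∫ σ in (0:ℝ)..t, B (y * Real.exp (-σ)) * Real.exp (J B y (-σ)) * Phi B f σ (y/2)) := by
        rw [key, tsum_congr hterm, tsum_mul_left, tsum_mul_left]


lemma primitive_aemeasurable (g : ℝ → ℝ) (T : ℝ) :
    AEMeasurable (fun s => ∫ τ in (0:ℝ)..s, g τ) (volume.restrict (Ioc (0:ℝ) T)) := by
  set A : Set ℝ := {s | 0 ≤ s ∧ IntegrableOn g (Ioc 0 s)} with hA
  have hAord : A.OrdConnected := by
    constructor
    intro a ha b hb z hz
    exact ⟨le_trans ha.1 hz.1, hb.2.mono_set (Ioc_subset_Ioc le_rfl hz.2)⟩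
  have hAmeas : MeasurableSet A := hAord.measurableSet
  set P : ℝ → ℝ := fun s => ∫ τ in Ioc (0:ℝ) s, g τ with hP
  have hIcc : ∀ b ∈ A, IntegrableOn g (Icc (0:ℝ) b) := by
    intro b hb
    exact hb.2.congr_set_ae Ioc_ae_eq_Icc.symm
  have hcontP : ContinuousOn P A := by
    intro s₀ hs₀
    by_cases hcase : ∃ b ∈ A, s₀ < b
    · obtain ⟨b, hbA, hs₀b⟩ := hcase
      have hcont := intervalIntegral.continuousOn_primitive (μ := volume) (f := g)
        (a := 0) (b := b) (hIcc b hbA)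
      have hws : ContinuousWithinAt P (A ∩ Iio b) s₀ :=
        (hcont s₀ ⟨hs₀.1, hs₀b.le⟩).mono (fun z hz => ⟨hz.1.1, hz.2.le⟩)
      have hmem : Iio b ∈ 𝓝 s₀ := Iio_mem_nhds hs₀b
      unfold ContinuousWithinAt
      rw [nhdsWithin_restrict' A hmem]
      exact hws
    · push_neg at hcase
      have hsub : A ⊆ Icc 0 s₀ := fun z hz => ⟨hz.1, hcase z hz⟩
      exact ((intervalIntegral.continuousOn_primitive (hIcc s₀ hs₀)).mono hsub) s₀ hs₀
  have hind : AEMeasurable (A.indicator P) volume :=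
    (aemeasurable_indicator_iff hAmeas).2 (hcontP.aemeasurable hAmeas)
  refine (hind.restrict (s := Ioc (0:ℝ) T)).congr ?_
  refine (ae_restrict_mem measurableSet_Ioc).mono (fun s hs => ?_)
  show A.indicator P s = ∫ τ in (0:ℝ)..s, g τ
  rw [intervalIntegral.integral_of_le hs.1.le]
  by_cases hsA : s ∈ A
  · rw [indicator_of_mem hsA]
  · rw [indicator_of_notMem hsA]
    have hni : ¬ IntegrableOn g (Ioc (0:ℝ) s) := fun h => hsA ⟨hs.1.le, h⟩
    exact (MeasureTheory.integral_undef hni).symm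


lemma Phi_slice_meas (hB : Bhyp B) (hf : LocBddOn f) {y : ℝ} (hy : 0 < y) (T : ℝ) :
    AEMeasurable (fun σ => Phi B f σ y) (volume.restrict (Ioc (0:ℝ) T)) := by
  have hc := hB.1
  have hpos := hB.2.1
  obtain ⟨M, hM0, hM⟩ := Bbdd hB y
  obtain ⟨C, hC0, hC⟩ := fbdd hf hy
  refine aemeasurable_of_tendsto_metrizable_ae atTop
    (f := fun k σ => ∑ n ∈ Finset.range k, (2:ℝ)^n * f (y / 2^n) * G B n σ y)
    (fun k => ?_) ?_
  · have : Continuous fun σ => ∑ n ∈ Finset.range k, (2:ℝ)^n * f (y / 2^n) * G B n σ y :=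
      continuous_finset_sum _ (fun n _ => continuous_const.mul (G_cont hc n hy))
    exact this.aemeasurable.restrict
  · refine (ae_restrict_mem measurableSet_Ioc).mono (fun σ hσ => ?_)
    exact (summable_term hc hpos hM hM0 hC hy le_rfl hσ.1.le).hasSum.tendsto_sum_nat

/-- The mild-solution equation in flow coordinates. -/
lemma mild_master (hc : ContinuousOn B (Ioi 0)) {ψ : ℝ → ℝ → ℝ} (hψ : IsMildSol B f ψ)
    {t y : ℝ} (ht : 0 ≤ t) (hy : 0 < y) :
    ψ t (y * Real.exp (-t)) = f y * Real.exp (-(J B y (-t))) +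
      2 * (Real.exp (-(J B y (-t))) * ∫ σ in (0:ℝ)..t,
        B (y * Real.exp (-σ)) * Real.exp (J B y (-σ)) * ψ σ (y/2 * Real.exp (-σ))) := by
  have hx : 0 < y * Real.exp (-t) := mul_pos hy (Real.exp_pos _)
  have hxy : y * Real.exp (-t) * Real.exp t = y := by
    rw [mul_assoc, ← Real.exp_add, neg_add_cancel, Real.exp_zero, mul_one]
  have heq := hψ t ht _ hx
  rw [heq, transform hc ψ hx, exp_term hc hx, hxy]

/-- Measurability of the time-slices of a mild solution along a characteristic. -/
lemma psi_slice_meas (hc : ContinuousOn B (Ioi 0)) {ψ : ℝ → ℝ → ℝ} (hψ : IsMildSol B f ψ)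
    {y : ℝ} (hy : 0 < y) (T : ℝ) :
    AEMeasurable (fun σ => ψ σ (y * Real.exp (-σ))) (volume.restrict (Ioc (0:ℝ) T)) := by
  set g : ℝ → ℝ := fun τ => B (y * Real.exp (-τ)) * Real.exp (J B y (-τ)) *
    ψ τ (y/2 * Real.exp (-τ)) with hg
  have hJc : Continuous fun σ : ℝ => Real.exp (-(J B y (-σ))) :=
    Real.continuous_exp.comp ((J_cont hc hy).comp continuous_neg).neg
  have h1 : AEMeasurable (fun σ => f y * Real.exp (-(J B y (-σ))) +
      2 * (Real.exp (-(J B y (-σ))) * ∫ τ in (0:ℝ)..σ, g τ)) (volume.restrict (Ioc (0:ℝ) T)) := by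
    refine AEMeasurable.add ?_ ?_
    · exact (continuous_const.mul hJc).aemeasurable.restrict
    · exact (aemeasurable_const.mul (hJc.aemeasurable.restrict.mul
        (primitive_aemeasurable g T)))
  refine h1.congr ?_
  refine (ae_restrict_mem measurableSet_Ioc).mono (fun σ hσ => ?_)
  exact (mild_master hc hψ hσ.1.le hy).symm


lemma uniq_key (hB : Bhyp B) (hf : LocBddOn f) {ψ : ℝ → ℝ → ℝ} (hψb : LocBdd2 ψ)
    (hψ : IsMildSol B f ψ) {t₀ x₀ : ℝ} (ht₀ : 0 ≤ t₀) (hx₀ : 0 < x₀) :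
    ψ t₀ x₀ = Phi B f t₀ (x₀ * Real.exp t₀) := by
  have hc := hB.1
  have hpos := hB.2.1
  set y0 := x₀ * Real.exp t₀ with hy0'
  have hy0 : 0 < y0 := mul_pos hx₀ (Real.exp_pos _)
  obtain ⟨M, hM0, hM⟩ := Bbdd hB y0
  obtain ⟨C, hC0, hC⟩ := fbdd hf hy0
  set r := max t₀ y0 + 1 with hr'
  have hmax0 : (0:ℝ) ≤ max t₀ y0 := le_trans ht₀ (le_max_left _ _)
  have hr : 0 < r := by rw [hr']; linarith
  obtain ⟨W, hW⟩ := hψb r hr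
  have hW0 : 0 ≤ W := le_trans (abs_nonneg _) (hW 0 r le_rfl (by linarith) hr le_rfl)
  set S := (W + C * Real.exp (2*M*t₀)) + 1 with hS'
  have hS0 : 0 ≤ S := by
    have : 0 ≤ C * Real.exp (2*M*t₀) := by positivity
    rw [hS']; linarith
  have hyj : ∀ j : ℕ, 0 < y0 / 2^j := fun j => by positivity
  have hyjR : ∀ j : ℕ, y0 / 2^j ≤ y0 := fun j => div_le_self hy0.le (one_le_pow₀ (by norm_num))
  have key : ∀ n : ℕ, ∀ j : ℕ, ∀ σ : ℝ, 0 ≤ σ → σ ≤ t₀ →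
      |ψ σ (y0/2^j * Real.exp (-σ)) - Phi B f σ (y0/2^j)|
        ≤ S * ((2*M)^n * σ^n / n.factorial) := by
    intro n
    induction n with
    | zero =>
      intro j σ hσ0 hσt
      have harg0 : 0 < y0/2^j * Real.exp (-σ) := mul_pos (hyj j) (Real.exp_pos _)
      have hargr : y0/2^j * Real.exp (-σ) ≤ r := by
        have h1 : y0/2^j * Real.exp (-σ) ≤ y0/2^j * 1 :=
          mul_le_mul_of_nonneg_left (Real.exp_le_one_iff.2 (neg_nonpos.2 hσ0)) (hyj j).le
        have h2 : y0 ≤ r := by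
          rw [hr']; have := le_max_right t₀ y0; linarith
        rw [mul_one] at h1
        exact le_trans h1 (le_trans (hyjR j) h2)
      have hσr : σ ≤ r := by
        rw [hr']; have := le_max_left t₀ y0; linarith
      have hψle : |ψ σ (y0/2^j * Real.exp (-σ))| ≤ W := hW σ _ hσ0 hσr harg0 hargr
      have hφle : |Phi B f σ (y0/2^j)| ≤ C * Real.exp (2*M*t₀) := by
        refine le_trans (Phi_bound hc hpos hM hM0 hC (hyj j) (hyjR j) hσ0) ?_
        have : Real.exp (2*M*σ) ≤ Real.exp (2*M*t₀) :=
          Real.exp_le_exp.2 (by nlinarith)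
        exact mul_le_mul_of_nonneg_left this hC0
      have habs : |ψ σ (y0/2^j * Real.exp (-σ)) - Phi B f σ (y0/2^j)|
          ≤ |ψ σ (y0/2^j * Real.exp (-σ))| + |Phi B f σ (y0/2^j)| := abs_sub _ _
      simp only [pow_zero, Nat.factorial_zero, Nat.cast_one, one_mul, mul_one, div_one]
      rw [hS']
      linarith
    | succ n ih =>
      intro j σ hσ0 hσt
      set y := y0 / 2^j with hy'
      have hy : 0 < y := hyj j
      have hyR : y ≤ y0 := hyjR j
      have hy2 : 0 < y / 2 := half_pos hy
      have hy2eq : y / 2 = y0 / 2^(j+1) := by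
        rw [hy', div_div, pow_succ]
      have hψm := mild_master hc hψ hσ0 hy
      have hφm := Phi_master hB hf hy hσ0
      set κψ : ℝ → ℝ := fun τ => B (y * Real.exp (-τ)) * Real.exp (J B y (-τ)) *
        ψ τ (y/2 * Real.exp (-τ)) with hκψ
      set κφ : ℝ → ℝ := fun τ => B (y * Real.exp (-τ)) * Real.exp (J B y (-τ)) *
        Phi B f τ (y/2) with hκφ
      have hBexp : ∀ τ : ℝ, 0 ≤ τ → B (y * Real.exp (-τ)) ≤ M := by
        intro τ hτ
        refine hM _ (mul_pos hy (Real.exp_pos _)) ?_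
        have h1 : y * Real.exp (-τ) ≤ y * 1 :=
          mul_le_mul_of_nonneg_left (Real.exp_le_one_iff.2 (neg_nonpos.2 hτ)) hy.le
        rw [mul_one] at h1
        exact le_trans h1 hyR
      have hexple : ∀ τ : ℝ, 0 ≤ τ → τ ≤ σ →
          Real.exp (J B y (-τ)) ≤ Real.exp (J B y (-σ)) := fun τ h1 h2 =>
        Real.exp_le_exp.2 (J_mono hc hpos hy (neg_le_neg h2) (neg_nonpos.2 h1))
      have hASMφ : AEStronglyMeasurable κφ (volume.restrict (Ioc (0:ℝ) σ)) := by
        refine AEMeasurable.aestronglyMeasurable (AEMeasurable.mul ?_ ?_)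
        · exact ((((contB hc hy).comp continuous_neg).mul
            (Real.continuous_exp.comp ((J_cont hc hy).comp continuous_neg)))).aemeasurable.restrict
        · exact Phi_slice_meas hB hf hy2 σ
      have hASMψ : AEStronglyMeasurable κψ (volume.restrict (Ioc (0:ℝ) σ)) := by
        refine AEMeasurable.aestronglyMeasurable (AEMeasurable.mul ?_ ?_)
        · exact ((((contB hc hy).comp continuous_neg).mul
            (Real.continuous_exp.comp ((J_cont hc hy).comp continuous_neg)))).aemeasurable.restrict
        · exact psi_slice_meas hc hψ hy2 σ
      have hψWae : ∀ τ : ℝ, τ ∈ Ioc (0:ℝ) σ → |ψ τ (y/2 * Real.exp (-τ))| ≤ W := by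
        intro τ hτ
        have harg0 : 0 < y/2 * Real.exp (-τ) := mul_pos hy2 (Real.exp_pos _)
        have hargr : y/2 * Real.exp (-τ) ≤ r := by
          have h1 : y/2 * Real.exp (-τ) ≤ y/2 * 1 :=
            mul_le_mul_of_nonneg_left (Real.exp_le_one_iff.2 (neg_nonpos.2 hτ.1.le)) hy2.le
          rw [mul_one] at h1
          have h2 : y0 ≤ r := by
            rw [hr']; have := le_max_right t₀ y0; linarith
          have h3 : y / 2 ≤ y0 := le_trans (half_le_self hy.le) hyR
          linarith
        have hτr : τ ≤ r := by
          rw [hr']; have := le_max_left t₀ y0; linarith [hτ.2, hσt]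
        exact hW τ _ hτ.1.le hτr harg0 hargr
      have hφCae : ∀ τ : ℝ, τ ∈ Ioc (0:ℝ) σ → |Phi B f τ (y/2)| ≤ C * Real.exp (2*M*t₀) := by
        intro τ hτ
        refine le_trans (Phi_bound hc hpos hM hM0 hC hy2 (le_trans (half_le_self hy.le) hyR)
          hτ.1.le) ?_
        have : Real.exp (2*M*τ) ≤ Real.exp (2*M*t₀) :=
          Real.exp_le_exp.2 (by nlinarith [hτ.2, hσt])
        exact mul_le_mul_of_nonneg_left this hC0
      have hκψint : IntervalIntegrable κψ volume 0 σ := by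
        rw [intervalIntegrable_iff_integrableOn_Ioc_of_le hσ0]
        refine ⟨hASMψ, HasFiniteIntegral.restrict_of_bounded
          (C := M * Real.exp (J B y (-σ)) * W) measure_Ioc_lt_top ?_⟩
        refine (ae_restrict_mem measurableSet_Ioc).mono (fun τ hτ => ?_)
        rw [hκψ]
        simp only [Real.norm_eq_abs]
        rw [abs_mul, abs_mul, abs_of_nonneg (hpos _ (mul_pos hy (Real.exp_pos _))),
          abs_of_nonneg (Real.exp_pos _).le]
        apply mul_le_mul
        · exact mul_le_mul (hBexp τ hτ.1.le) (hexple τ hτ.1.le hτ.2) (Real.exp_pos _).le hM0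
        · exact hψWae τ hτ
        · exact abs_nonneg _
        · positivity
      have hκφint : IntervalIntegrable κφ volume 0 σ := by
        rw [intervalIntegrable_iff_integrableOn_Ioc_of_le hσ0]
        refine ⟨hASMφ, HasFiniteIntegral.restrict_of_bounded
          (C := M * Real.exp (J B y (-σ)) * (C * Real.exp (2*M*t₀))) measure_Ioc_lt_top ?_⟩
        refine (ae_restrict_mem measurableSet_Ioc).mono (fun τ hτ => ?_)
        rw [hκφ]
        simp only [Real.norm_eq_abs]
        rw [abs_mul, abs_mul, abs_of_nonneg (hpos _ (mul_pos hy (Real.exp_pos _))),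
          abs_of_nonneg (Real.exp_pos _).le]
        apply mul_le_mul
        · exact mul_le_mul (hBexp τ hτ.1.le) (hexple τ hτ.1.le hτ.2) (Real.exp_pos _).le hM0
        · exact hφCae τ hτ
        · exact abs_nonneg _
        · positivity
      have hsub : ψ σ (y * Real.exp (-σ)) - Phi B f σ y
          = 2 * (Real.exp (-(J B y (-σ))) * ∫ τ in (0:ℝ)..σ, (κψ τ - κφ τ)) := by
        rw [hψm, hφm, intervalIntegral.integral_sub hκψint hκφint]
        ring
      set c : ℝ := M * Real.exp (J B y (-σ)) * (S * ((2*M)^n / n.factorial)) with hcdef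
      have hc0 : 0 ≤ c := by
        rw [hcdef]; positivity
      have hgb : IntervalIntegrable (fun τ => c * τ^n) volume 0 σ :=
        (continuous_const.mul (continuous_pow n)).intervalIntegrable 0 σ
      have hptw : ∀ᵐ τ ∂(volume.restrict (Set.uIoc (0:ℝ) σ)), ‖κψ τ - κφ τ‖ ≤ c * τ^n := by
        rw [uIoc_of_le hσ0]
        refine (ae_restrict_mem measurableSet_Ioc).mono (fun τ hτ => ?_)
        have hdiff : κψ τ - κφ τ = B (y * Real.exp (-τ)) * Real.exp (J B y (-τ)) *
            (ψ τ (y/2 * Real.exp (-τ)) - Phi B f τ (y/2)) := by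
          rw [hκψ, hκφ]; ring
        have hih : |ψ τ (y/2 * Real.exp (-τ)) - Phi B f τ (y/2)|
            ≤ S * ((2*M)^n * τ^n / n.factorial) := by
          rw [hy2eq]
          exact ih (j+1) τ hτ.1.le (le_trans hτ.2 hσt)
        rw [hdiff]
        simp only [Real.norm_eq_abs]
        rw [abs_mul, abs_mul, abs_of_nonneg (hpos _ (mul_pos hy (Real.exp_pos _))),
          abs_of_nonneg (Real.exp_pos _).le]
        calc B (y * Real.exp (-τ)) * Real.exp (J B y (-τ)) *
              |ψ τ (y/2 * Real.exp (-τ)) - Phi B f τ (y/2)|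
            ≤ M * Real.exp (J B y (-σ)) * (S * ((2*M)^n * τ^n / n.factorial)) := by
              apply mul_le_mul
              · exact mul_le_mul (hBexp τ hτ.1.le) (hexple τ hτ.1.le hτ.2)
                  (Real.exp_pos _).le hM0
              · exact hih
              · exact abs_nonneg _
              · positivity
          _ = c * τ^n := by rw [hcdef]; ring
      have hIbd := intervalIntegral.norm_integral_le_of_norm_le hσ0
        ((ae_restrict_iff' measurableSet_Ioc).1 (by rwa [uIoc_of_le hσ0] at hptw)) hgb
      have hval : (∫ τ in (0:ℝ)..σ, c * τ^n) = c * (σ^(n+1) / (n+1)) := by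
        rw [intervalIntegral.integral_const_mul, integral_pow]
        norm_num
      have hvalnn : 0 ≤ c * (σ^(n+1) / (n+1)) := by positivity
      rw [hval] at hIbd
      -- assemble
      have harg : y0/2^j * Real.exp (-σ) = y * Real.exp (-σ) := by rw [hy']
      rw [harg]
      have hfinal : |ψ σ (y * Real.exp (-σ)) - Phi B f σ y|
          ≤ 2 * (Real.exp (-(J B y (-σ))) * (c * (σ^(n+1) / (n+1)))) := by
        rw [hsub, abs_mul, abs_mul, abs_of_nonneg (by norm_num : (0:ℝ) ≤ 2),
          abs_of_nonneg (Real.exp_pos _).le]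
        have := mul_le_mul_of_nonneg_left hIbd (Real.exp_pos (-(J B y (-σ)))).le
        simp only [Real.norm_eq_abs] at this
        nlinarith [this]
      refine le_trans hfinal (le_of_eq ?_)
      rw [hcdef, Real.exp_neg]
      have hne : Real.exp (J B y (-σ)) ≠ 0 := (Real.exp_pos _).ne'
      have hfac : ((n+1).factorial : ℝ) = (n+1) * n.factorial := by
        push_cast [Nat.factorial_succ]; ring
      rw [hfac]
      field_simp
      ring
  have htend : Tendsto (fun n : ℕ => S * ((2*M*t₀)^n / n.factorial)) atTop (𝓝 0) := by
    have := (Real.summable_pow_div_factorial (2*M*t₀)).tendsto_atTop_zero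
    have h2 := this.const_mul S
    simpa using h2
  have habs : ∀ n : ℕ, |ψ t₀ x₀ - Phi B f t₀ y0| ≤ S * ((2*M*t₀)^n / n.factorial) := by
    intro n
    have hk := key n 0 t₀ ht₀ le_rfl
    have h1 : y0 / 2^0 = y0 := by norm_num
    have h2 : y0 * Real.exp (-t₀) = x₀ := by
      rw [hy0', mul_assoc, ← Real.exp_add, add_neg_cancel, Real.exp_zero, mul_one]
    rw [h1, h2] at hk
    refine le_trans hk (le_of_eq ?_)
    rw [mul_pow]
    ring
  have h0 : |ψ t₀ x₀ - Phi B f t₀ y0| ≤ 0 :=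
    ge_of_tendsto htend (Filter.Eventually.of_forall habs)
  have := abs_nonneg (ψ t₀ x₀ - Phi B f t₀ y0)
  have heq0 : |ψ t₀ x₀ - Phi B f t₀ y0| = 0 := le_antisymm h0 this
  rw [abs_eq_zero, sub_eq_zero] at heq0
  exact heq0



end Mitosis

/-- Well-posedness of the dual mitosis equation: for every locally bounded initial datum `f`
there exists a unique locally bounded mild solution. -/
theorem stmt0 (B : ℝ → ℝ) (hB : Bhyp B) (f : ℝ → ℝ) (hf : LocBddOn f) :
    ∃ φ : ℝ → ℝ → ℝ, (LocBdd2 φ ∧ IsMildSol B f φ) ∧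
      ∀ ψ : ℝ → ℝ → ℝ, LocBdd2 ψ → IsMildSol B f ψ →
        ∀ t ≥ 0, ∀ x > 0, ψ t x = φ t x := by
  have hc := hB.1
  have hpos := hB.2.1
  refine ⟨fun t x => Mitosis.Phi B f t (x * Real.exp t), ⟨?_, ?_⟩, ?_⟩
  · intro r hr
    have hR : 0 < r * Real.exp r := mul_pos hr (Real.exp_pos _)
    obtain ⟨M, hM0, hM⟩ := Mitosis.Bbdd hB (r * Real.exp r)
    obtain ⟨C, hC0, hC⟩ := Mitosis.fbdd hf hR
    refine ⟨C * Real.exp (2*M*r), fun t x ht htr hx hxr => ?_⟩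
    have hy : 0 < x * Real.exp t := mul_pos hx (Real.exp_pos _)
    have hyR : x * Real.exp t ≤ r * Real.exp r :=
      mul_le_mul hxr (Real.exp_le_exp.2 htr) (Real.exp_pos _).le hr.le
    refine le_trans (Mitosis.Phi_bound hc hpos hM hM0 hC hy hyR ht) ?_
    exact mul_le_mul_of_nonneg_left (Real.exp_le_exp.2 (by nlinarith)) hC0
  · intro t ht x hx
    have hy : 0 < x * Real.exp t := mul_pos hx (Real.exp_pos _)
    show Mitosis.Phi B f t (x * Real.exp t) = _
    rw [Mitosis.transform hc (fun t x => Mitosis.Phi B f t (x * Real.exp t)) hx,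
      Mitosis.exp_term hc hx]
    have hintcongr : (∫ σ in (0:ℝ)..t, B ((x * Real.exp t) * Real.exp (-σ)) *
          Real.exp (Mitosis.J B (x * Real.exp t) (-σ)) *
          (fun t x => Mitosis.Phi B f t (x * Real.exp t)) σ (x * Real.exp t / 2 * Real.exp (-σ)))
        = ∫ σ in (0:ℝ)..t, B ((x * Real.exp t) * Real.exp (-σ)) *
          Real.exp (Mitosis.J B (x * Real.exp t) (-σ)) *
          Mitosis.Phi B f σ (x * Real.exp t / 2) := by
      refine intervalIntegral.integral_congr (fun σ _ => ?_)
      have : x * Real.exp t / 2 * Real.exp (-σ) * Real.exp σ = x * Real.exp t / 2 := by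
        rw [mul_assoc, ← Real.exp_add, neg_add_cancel, Real.exp_zero, mul_one]
      simp only [this]
    rw [hintcongr]
    exact Mitosis.Phi_master hB hf hy ht
  · intro ψ hψb hψ t ht x hx
    exact Mitosis.uniq_key hB hf hψb hψ ht hx
end
end

section
/- Assume B : (0,∞) → [0,∞) is continuous and bounded on some neighborhood of 0, let f : (0,∞) → ℝ be locally bounded, and let φ be the unique locally bounded mild solution of the dual mitosis equation with initial datum f. If f is nonnegative then φ is nonnegative, and if f is continuous then φ is continuous on [0,∞) × (0,∞). -/
open MeasureTheory Real Set Filter Topology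

noncomputable section

namespace MitosisAux

variable (B : ℝ → ℝ)

/-- division rate in logarithmic coordinates -/
def bb (γ : ℝ) : ℝ := B (Real.exp γ)

/-- cumulative rate -/
def Rq (γ t : ℝ) : ℝ := ∫ w in (0:ℝ)..t, bb B (γ - w)

variable {B}

lemma bb_cont (hB : Bhyp B) : Continuous (bb B) :=
  hB.1.comp_continuous continuous_exp fun x => Real.exp_pos x

lemma bb_nonneg (hB : Bhyp B) (γ : ℝ) : 0 ≤ bb B γ := hB.2.1 _ (Real.exp_pos γ)

lemma bb_bound (hB : Bhyp B) (A : ℝ) : ∃ C, 0 ≤ C ∧ ∀ γ ≤ A, bb B γ ≤ C := by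
  obtain ⟨hBc, hB0, ε, hε, C₁, hC₁⟩ := hB
  obtain ⟨C₂, hC₂⟩ := (isCompact_Icc (a := ε) (b := Real.exp A)).exists_bound_of_continuousOn
      (hBc.mono (fun x hx => lt_of_lt_of_le hε hx.1))
  refine ⟨max (max C₁ C₂) 0, le_max_right _ _, fun γ hγ => ?_⟩
  rcases lt_or_ge (Real.exp γ) ε with h | h
  · exact le_trans (hC₁ _ (Real.exp_pos γ) h) (le_trans (le_max_left _ _) (le_max_left _ _))
  · have hmem : Real.exp γ ∈ Icc ε (Real.exp A) := ⟨h, Real.exp_le_exp.2 hγ⟩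
    exact le_trans (le_trans (le_abs_self _) (hC₂ _ hmem))
      (le_trans (le_max_right _ _) (le_max_left _ _))

lemma bbw_cont (hB : Bhyp B) (γ : ℝ) : Continuous (fun w => bb B (γ - w)) :=
  (bb_cont hB).comp (continuous_const.sub continuous_id)

lemma bbw_ii (hB : Bhyp B) (γ a c : ℝ) :
    IntervalIntegrable (fun w => bb B (γ - w)) volume a c :=
  ((bbw_cont hB γ)).intervalIntegrable _ _

set_option maxHeartbeats 1000000 in
lemma Rq_cont (hB : Bhyp B) : Continuous fun p : ℝ × ℝ => Rq B p.1 p.2 := by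
  have h : Continuous (Function.uncurry fun (γ w : ℝ) => bb B (γ - w)) :=
    (bb_cont hB).comp (continuous_fst.sub continuous_snd)
  have h2 : Continuous fun p : ℝ × ℝ => ∫ w in (0:ℝ)..p.2, bb B (p.1 - w) :=
    intervalIntegral.continuous_parametric_primitive_of_continuous h
  exact h2

lemma Rq_cont_t (hB : Bhyp B) (γ : ℝ) : Continuous (Rq B γ) :=
  intervalIntegral.continuous_primitive (fun a c => bbw_ii hB γ a c) 0

lemma Rq_zero (γ : ℝ) : Rq B γ 0 = 0 := intervalIntegral.integral_same

lemma Rq_mono (hB : Bhyp B) (γ : ℝ) {u t : ℝ} (hu : 0 ≤ u) (hut : u ≤ t) :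
    Rq B γ u ≤ Rq B γ t := by
  have h := intervalIntegral.integral_add_adjacent_intervals
    (bbw_ii hB γ 0 u) (bbw_ii hB γ u t)
  have h2 : 0 ≤ ∫ w in u..t, bb B (γ - w) :=
    intervalIntegral.integral_nonneg hut (fun w _ => bb_nonneg hB _)
  have : Rq B γ u + ∫ w in u..t, bb B (γ - w) = Rq B γ t := h
  linarith

lemma star (hB : Bhyp B) {f : ℝ → ℝ} {φ : ℝ → ℝ → ℝ} (hsol : IsMildSol B f φ)
    {t : ℝ} (ht : 0 ≤ t) (γ : ℝ) :
    φ t (Real.exp (γ - t)) = Real.exp (-(Rq B γ t)) * (f (Real.exp γ)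
      + 2 * ∫ u in (0:ℝ)..t, bb B (γ - u) * Real.exp (Rq B γ u)
          * φ u (Real.exp (γ - Real.log 2 - u))) := by
  have h := hsol t ht _ (Real.exp_pos (γ - t))
  have hxe : ∀ s : ℝ, Real.exp (γ - t) * Real.exp s = Real.exp (γ - (t - s)) := by
    intro s; rw [← Real.exp_add]; ring_nf
  have hBs : ∀ s : ℝ, B (Real.exp (γ - t) * Real.exp s) = bb B (γ - (t - s)) := by
    intro s; rw [hxe]; rfl
  have key : ∀ τ : ℝ, (∫ s in (0:ℝ)..τ, B (Real.exp (γ - t) * Real.exp s))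
      = Rq B γ t - Rq B γ (t - τ) := by
    intro τ
    have hfun : (fun s => B (Real.exp (γ - t) * Real.exp s))
        = fun s => (fun w => bb B (γ - w)) (t - s) := funext fun s => hBs s
    rw [hfun, intervalIntegral.integral_comp_sub_left (fun w => bb B (γ - w)) t, sub_zero]
    have h12 := intervalIntegral.integral_add_adjacent_intervals
      (bbw_ii hB γ 0 (t - τ)) (bbw_ii hB γ (t - τ) t)
    have : Rq B γ (t - τ) + (∫ w in (t - τ)..t, bb B (γ - w)) = Rq B γ t := h12
    linarith
  have e1 : Real.exp (γ - t) * Real.exp t = Real.exp γ := by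
    rw [← Real.exp_add]; ring_nf
  have e2 : (∫ s in (0:ℝ)..t, B (Real.exp (γ - t) * Real.exp s)) = Rq B γ t := by
    rw [key t, sub_self, Rq_zero, sub_zero]
  have e3 : (fun τ => B (Real.exp (γ - t) * Real.exp τ)
        * Real.exp (-∫ s in (0:ℝ)..τ, B (Real.exp (γ - t) * Real.exp s))
        * φ (t - τ) (Real.exp (γ - t) * Real.exp τ / 2))
      = fun τ => Real.exp (-(Rq B γ t)) * (bb B (γ - (t - τ)) * Real.exp (Rq B γ (t - τ))
          * φ (t - τ) (Real.exp (γ - Real.log 2 - (t - τ)))) := by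
    funext τ
    have e4 : Real.exp (γ - t) * Real.exp τ / 2 = Real.exp (γ - Real.log 2 - (t - τ)) := by
      have h2 : Real.exp (Real.log 2) = 2 := Real.exp_log two_pos
      have h3 : Real.exp (γ - Real.log 2 - (t - τ)) * 2 = Real.exp (γ - t) * Real.exp τ :=
        calc Real.exp (γ - Real.log 2 - (t - τ)) * 2
            = Real.exp (γ - Real.log 2 - (t - τ)) * Real.exp (Real.log 2) := by rw [h2]
          _ = Real.exp (γ - Real.log 2 - (t - τ) + Real.log 2) := (Real.exp_add _ _).symm
          _ = Real.exp (γ - t + τ) := by congr 1; ring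
          _ = Real.exp (γ - t) * Real.exp τ := by rw [← Real.exp_add]
      linarith
    rw [hBs τ, key τ, e4]
    rw [show -(Rq B γ t - Rq B γ (t - τ)) = Rq B γ (t - τ) + -(Rq B γ t) by ring,
      Real.exp_add]
    ring
  have e5 : (∫ τ in (0:ℝ)..t, bb B (γ - (t - τ)) * Real.exp (Rq B γ (t - τ))
        * φ (t - τ) (Real.exp (γ - Real.log 2 - (t - τ))))
      = ∫ u in (0:ℝ)..t, bb B (γ - u) * Real.exp (Rq B γ u)
          * φ u (Real.exp (γ - Real.log 2 - u)) := by
    have h6 := intervalIntegral.integral_comp_sub_left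
      (fun u => bb B (γ - u) * Real.exp (Rq B γ u)
        * φ u (Real.exp (γ - Real.log 2 - u))) t (a := 0) (b := t)
    rw [sub_self, sub_zero] at h6
    exact h6
  rw [h, e1, e2, e3, intervalIntegral.integral_const_mul, e5]
  ring


attribute [irreducible] Rq

/-- the integrand in the reformulated equation -/
def rho (B : ℝ → ℝ) (φ : ℝ → ℝ → ℝ) (γ : ℝ) (u : ℝ) : ℝ :=
  bb B (γ - u) * Real.exp (Rq B γ u) * φ u (Real.exp (γ - Real.log 2 - u))

lemma star' (hB : Bhyp B) {f : ℝ → ℝ} {φ : ℝ → ℝ → ℝ} (hsol : IsMildSol B f φ)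
    {t : ℝ} (ht : 0 ≤ t) (γ : ℝ) :
    φ t (Real.exp (γ - t)) = Real.exp (-(Rq B γ t)) * (f (Real.exp γ)
      + 2 * ∫ u in (0:ℝ)..t, rho B φ γ u) :=
  star hB hsol ht γ

lemma psi_cont_off (hB : Bhyp B) {f : ℝ → ℝ} {φ : ℝ → ℝ → ℝ} (hsol : IsMildSol B f φ)
    (γ : ℝ) {T : ℝ} (hT : 0 ≤ T) :
    ∃ t', ContinuousOn (fun u => φ u (Real.exp (γ - u))) (Icc 0 T \ {t'}) := by
  classical
  set I : Set ℝ := {s : ℝ | s ∈ Icc 0 T ∧ IntervalIntegrable (rho B φ γ) volume 0 s} with hI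
  have h0 : (0:ℝ) ∈ I := ⟨⟨le_refl 0, hT⟩, IntervalIntegrable.refl⟩
  have hBdd : BddAbove I := ⟨T, fun s hs => hs.1.2⟩
  refine ⟨sSup I, fun s hs => ?_⟩
  have hs0 : 0 ≤ s := hs.1.1
  have hsT : s ≤ T := hs.1.2
  have hsne : s ≠ sSup I := hs.2
  rcases lt_or_gt_of_ne hsne with hlt | hgt
  · -- s < sSup I : genuine integral, continuous
    obtain ⟨t₁, ht₁I, hst₁⟩ := exists_lt_of_lt_csSup ⟨0, h0⟩ hlt
    have hint : IntervalIntegrable (rho B φ γ) volume 0 t₁ := ht₁I.2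
    have ht₁0 : 0 ≤ t₁ := ht₁I.1.1
    have hIoc : IntegrableOn (rho B φ γ) (Ioc 0 t₁) volume :=
      (intervalIntegrable_iff_integrableOn_Ioc_of_le ht₁0).mp hint
    set rr : ℝ → ℝ := (Ioc (0:ℝ) t₁).indicator (rho B φ γ) with hrr
    have hrrInt : Integrable rr volume := (integrable_indicator_iff measurableSet_Ioc).mpr hIoc
    have hGc : Continuous fun u => Real.exp (-(Rq B γ u))
        * (f (Real.exp γ) + 2 * ∫ v in (0:ℝ)..u, rr v) :=
      (Real.continuous_exp.comp (Rq_cont_t hB γ).neg).mul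
        (continuous_const.add (continuous_const.mul (hrrInt.continuous_primitive 0)))
    have heq : ∀ u ∈ Icc (0:ℝ) t₁, φ u (Real.exp (γ - u))
        = Real.exp (-(Rq B γ u)) * (f (Real.exp γ) + 2 * ∫ v in (0:ℝ)..u, rr v) := by
      intro u hu
      rw [star' hB hsol hu.1 γ]
      have : (∫ v in (0:ℝ)..u, rho B φ γ v) = ∫ v in (0:ℝ)..u, rr v := by
        rw [intervalIntegral.integral_of_le hu.1, intervalIntegral.integral_of_le hu.1]
        refine (setIntegral_congr_fun measurableSet_Ioc ?_).symm
        intro v hv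
        exact indicator_of_mem (Ioc_subset_Ioc_right hu.2 hv) _
      rw [this]
    have hmem : Icc (0:ℝ) t₁ ∈ 𝓝[Icc 0 T \ {sSup I}] s := by
      refine mem_nhdsWithin.mpr ⟨Iio t₁, isOpen_Iio, hst₁, ?_⟩
      rintro u ⟨hu1, hu2⟩
      exact ⟨hu2.1.1, le_of_lt hu1⟩
    have hcw : ContinuousWithinAt (fun u => φ u (Real.exp (γ - u))) (Icc 0 t₁) s :=
      hGc.continuousWithinAt.congr heq (heq s ⟨hs0, le_of_lt hst₁⟩)
    exact hcw.mono_of_mem_nhdsWithin hmem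
  · -- s > sSup I : junk value, also continuous
    have heq2 : ∀ u ∈ (Icc 0 T \ {sSup I}) ∩ Ioi (sSup I), φ u (Real.exp (γ - u))
        = Real.exp (-(Rq B γ u)) * (f (Real.exp γ) + 2 * 0) := by
      rintro u ⟨hu, hu'⟩
      have hno : ¬ IntervalIntegrable (rho B φ γ) volume 0 u := by
        intro hcon
        exact absurd (le_csSup hBdd ⟨hu.1, hcon⟩) (not_le.mpr hu')
      rw [star' hB hsol hu.1.1 γ, intervalIntegral.integral_undef hno]
    have hG2 : Continuous fun u => Real.exp (-(Rq B γ u)) * (f (Real.exp γ) + 2 * 0) :=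
      (Real.continuous_exp.comp (Rq_cont_t hB γ).neg).mul continuous_const
    have hcw : ContinuousWithinAt (fun u => φ u (Real.exp (γ - u)))
        ((Icc 0 T \ {sSup I}) ∩ Ioi (sSup I)) s :=
      hG2.continuousWithinAt.congr heq2 (heq2 s ⟨hs, hgt⟩)
    refine hcw.mono_of_mem_nhdsWithin (mem_nhdsWithin.mpr ⟨Ioi (sSup I), isOpen_Ioi, hgt, ?_⟩)
    rintro u ⟨hu1, hu2⟩
    exact ⟨hu2, hu1⟩

lemma psi_aesm (hB : Bhyp B) {f : ℝ → ℝ} {φ : ℝ → ℝ → ℝ} (hsol : IsMildSol B f φ)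
    (γ : ℝ) {T : ℝ} (hT : 0 ≤ T) :
    AEStronglyMeasurable (fun u => φ u (Real.exp (γ - u))) (volume.restrict (Ioc 0 T)) := by
  obtain ⟨t', hcont⟩ := psi_cont_off hB hsol γ hT
  have hmeas : MeasurableSet (Icc (0:ℝ) T \ {t'}) :=
    measurableSet_Icc.diff (measurableSet_singleton _)
  have h1 : AEMeasurable (fun u => φ u (Real.exp (γ - u)))
      (volume.restrict (Icc 0 T \ {t'})) := hcont.aemeasurable hmeas
  have h2 : volume.restrict (Icc (0:ℝ) T \ {t'}) = volume.restrict (Icc 0 T) := by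
    apply Measure.restrict_congr_set
    exact diff_ae_eq_self.mpr (measure_mono_null inter_subset_right (measure_singleton t'))
  rw [h2] at h1
  exact h1.aestronglyMeasurable.mono_measure
    (Measure.restrict_mono Ioc_subset_Icc_self le_rfl)

lemma rho_intble (hB : Bhyp B) {f : ℝ → ℝ} {φ : ℝ → ℝ → ℝ} (hφloc : LocBdd2 φ)
    (hsol : IsMildSol B f φ) (γ : ℝ) {t : ℝ} (ht : 0 ≤ t) :
    IntervalIntegrable (rho B φ γ) volume 0 t := by
  rw [intervalIntegrable_iff_integrableOn_Ioc_of_le ht]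
  have hψ : AEStronglyMeasurable (fun u => φ u (Real.exp (γ - Real.log 2 - u)))
      (volume.restrict (Ioc 0 t)) := psi_aesm hB hsol (γ - Real.log 2) ht
  have hk : Continuous fun u => bb B (γ - u) * Real.exp (Rq B γ u) :=
    (bbw_cont hB γ).mul (Real.continuous_exp.comp (Rq_cont_t hB γ))
  have hsm : AEStronglyMeasurable (rho B φ γ) (volume.restrict (Ioc 0 t)) :=
    hk.aestronglyMeasurable.mul hψ
  obtain ⟨Cb, hCb0, hCb⟩ := bb_bound hB γ
  set r : ℝ := max t (max 1 (Real.exp (γ - Real.log 2))) with hr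
  have hr1 : (1:ℝ) ≤ r := le_trans (le_max_left _ _) (le_max_right _ _)
  obtain ⟨M, hM⟩ := hφloc r (lt_of_lt_of_le one_pos hr1)
  refine Integrable.mono' (integrable_const (Cb * Real.exp (Rq B γ t) * M)) hsm ?_
  filter_upwards [ae_restrict_mem measurableSet_Ioc] with u hu
  have hu0 : 0 ≤ u := le_of_lt hu.1
  have h1 : bb B (γ - u) ≤ Cb := hCb _ (by linarith)
  have h2 : Real.exp (Rq B γ u) ≤ Real.exp (Rq B γ t) :=
    Real.exp_le_exp.mpr (Rq_mono hB γ hu0 hu.2)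
  have h3 : |φ u (Real.exp (γ - Real.log 2 - u))| ≤ M := by
    refine hM u _ hu0 (le_trans hu.2 (le_max_left _ _)) (Real.exp_pos _) ?_
    refine le_trans (Real.exp_le_exp.mpr (by linarith : γ - Real.log 2 - u ≤ γ - Real.log 2)) ?_
    exact le_trans (le_max_right _ _) (le_max_right _ _)
  have hM0 : 0 ≤ M := le_trans (abs_nonneg _) h3
  have hbb0 : 0 ≤ bb B (γ - u) := bb_nonneg hB _
  rw [Real.norm_eq_abs, rho, abs_mul, abs_mul, abs_of_nonneg hbb0,
    abs_of_nonneg (le_of_lt (Real.exp_pos _))]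
  have := mul_le_mul (mul_le_mul h1 h2 (le_of_lt (Real.exp_pos _)) hCb0) h3 (abs_nonneg _)
    (by positivity)
  exact this


variable (B) in
/-- Picard iterates -/
def Theta (f : ℝ → ℝ) : ℕ → ℝ → ℝ → ℝ
  | 0 => fun _ _ => 0
  | (k+1) => fun t γ => Real.exp (-(Rq B γ t)) * (f (Real.exp γ)
      + 2 * ∫ u in (0:ℝ)..t, bb B (γ - u) * Real.exp (Rq B γ u)
          * Theta f k u (γ - Real.log 2))

lemma Theta_succ (f : ℝ → ℝ) (k : ℕ) (t γ : ℝ) :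
    Theta B f (k+1) t γ = Real.exp (-(Rq B γ t)) * (f (Real.exp γ)
      + 2 * ∫ u in (0:ℝ)..t, bb B (γ - u) * Real.exp (Rq B γ u)
          * Theta B f k u (γ - Real.log 2)) := rfl

lemma Theta_cont_t (hB : Bhyp B) (f : ℝ → ℝ) :
    ∀ k γ, Continuous (fun t => Theta B f k t γ) := by
  intro k
  induction k with
  | zero => exact fun γ => continuous_const
  | succ k ih =>
    intro γ
    have hg : Continuous (fun u => bb B (γ - u) * Real.exp (Rq B γ u)
        * Theta B f k u (γ - Real.log 2)) :=
      ((bbw_cont hB γ).mul (Real.continuous_exp.comp (Rq_cont_t hB γ))).mul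
        (ih (γ - Real.log 2))
    exact (Real.continuous_exp.comp (Rq_cont_t hB γ).neg).mul
      (continuous_const.add (continuous_const.mul
        (intervalIntegral.continuous_primitive (fun a c => hg.intervalIntegrable a c) 0)))

lemma Theta_nonneg (hB : Bhyp B) {f : ℝ → ℝ} (hf0 : ∀ x > 0, 0 ≤ f x) :
    ∀ k (t : ℝ), 0 ≤ t → ∀ γ, 0 ≤ Theta B f k t γ := by
  intro k
  induction k with
  | zero => exact fun t ht γ => le_refl 0
  | succ k ih =>
    intro t ht γ
    rw [Theta_succ]
    refine mul_nonneg (le_of_lt (Real.exp_pos _)) (add_nonneg (hf0 _ (Real.exp_pos _)) ?_)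
    refine mul_nonneg (by norm_num) (intervalIntegral.integral_nonneg ht fun u hu => ?_)
    exact mul_nonneg (mul_nonneg (bb_nonneg hB _) (le_of_lt (Real.exp_pos _)))
      (ih u hu.1 _)

lemma Theta_cont (hB : Bhyp B) {f : ℝ → ℝ} (hfc : ContinuousOn f (Ioi 0)) :
    ∀ k, Continuous (fun p : ℝ × ℝ => Theta B f k p.1 p.2) := by
  intro k
  induction k with
  | zero => exact continuous_const
  | succ k ih =>
    have hA : Continuous fun p : ℝ × ℝ => Real.exp (-(Rq B p.2 p.1)) :=
      Real.continuous_exp.comp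
        (((Rq_cont hB).comp (continuous_snd.prodMk continuous_fst)).neg)
    have hBc : Continuous fun p : ℝ × ℝ => f (Real.exp p.2) :=
      hfc.comp_continuous (Real.continuous_exp.comp continuous_snd)
        (fun p => Real.exp_pos _)
    have hFu : Continuous (Function.uncurry fun (p : ℝ × ℝ) (u : ℝ) =>
        bb B (p.2 - u) * Real.exp (Rq B p.2 u) * Theta B f k u (p.2 - Real.log 2)) := by
      have c1 : Continuous fun q : (ℝ × ℝ) × ℝ => bb B (q.1.2 - q.2) :=
        (bb_cont hB).comp ((continuous_snd.comp continuous_fst).sub continuous_snd)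
      have c2 : Continuous fun q : (ℝ × ℝ) × ℝ => Real.exp (Rq B q.1.2 q.2) :=
        Real.continuous_exp.comp ((Rq_cont hB).comp
          ((continuous_snd.comp continuous_fst).prodMk continuous_snd))
      have c3 : Continuous fun q : (ℝ × ℝ) × ℝ => Theta B f k q.2 (q.1.2 - Real.log 2) :=
        ih.comp (continuous_snd.prodMk
          ((continuous_snd.comp continuous_fst).sub continuous_const))
      exact (c1.mul c2).mul c3
    have hC : Continuous fun p : ℝ × ℝ => ∫ u in (0:ℝ)..p.1,
        bb B (p.2 - u) * Real.exp (Rq B p.2 u) * Theta B f k u (p.2 - Real.log 2) :=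
      intervalIntegral.continuous_parametric_intervalIntegral_of_continuous hFu continuous_fst
    exact hA.mul (hBc.add (continuous_const.mul hC))

lemma main_est (hB : Bhyp B) {f : ℝ → ℝ} {φ : ℝ → ℝ → ℝ} (hφloc : LocBdd2 φ)
    (hsol : IsMildSol B f φ) (A T : ℝ) (hT : 0 ≤ T) :
    ∃ M C : ℝ, 0 ≤ M ∧ 0 ≤ C ∧ ∀ k : ℕ, ∀ γ ≤ A, ∀ t, 0 ≤ t → t ≤ T →
      |φ t (Real.exp (γ - t)) - Theta B f k t γ|
        ≤ M * (2*C*t)^k / (Nat.factorial k : ℝ) := by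
  obtain ⟨C, hC0, hC⟩ := bb_bound hB A
  set r : ℝ := max T (max 1 (Real.exp A)) with hr
  have hr1 : (1:ℝ) ≤ r := le_trans (le_max_left _ _) (le_max_right _ _)
  obtain ⟨M₀, hM₀⟩ := hφloc r (lt_of_lt_of_le one_pos hr1)
  set M : ℝ := max M₀ 0 with hM
  refine ⟨M, C, le_max_right _ _, hC0, ?_⟩
  intro k
  induction k with
  | zero =>
    intro γ hγ t ht htT
    have hb : |φ t (Real.exp (γ - t))| ≤ M₀ := by
      refine hM₀ t _ ht (le_trans htT (le_max_left _ _)) (Real.exp_pos _) ?_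
      refine le_trans (Real.exp_le_exp.mpr (by linarith : γ - t ≤ A)) ?_
      exact le_trans (le_max_right _ _) (le_max_right _ _)
    have h0 : Theta B f 0 t γ = 0 := rfl
    rw [h0, sub_zero, pow_zero, Nat.factorial_zero, Nat.cast_one, mul_one, div_one]
    exact le_trans hb (le_max_left _ _)
  | succ k ih =>
    intro γ hγ t ht htT
    set θ : ℝ → ℝ := fun u => bb B (γ - u) * Real.exp (Rq B γ u)
      * Theta B f k u (γ - Real.log 2) with hθ
    have hIA : IntervalIntegrable (rho B φ γ) volume 0 t := rho_intble hB hφloc hsol γ ht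
    have hθc : Continuous θ :=
      ((bbw_cont hB γ).mul (Real.continuous_exp.comp (Rq_cont_t hB γ))).mul
        (Theta_cont_t hB f k (γ - Real.log 2))
    have hIB : IntervalIntegrable θ volume 0 t := hθc.intervalIntegrable 0 t
    have h1 : φ t (Real.exp (γ - t)) - Theta B f (k+1) t γ
        = Real.exp (-(Rq B γ t)) * 2 * ∫ u in (0:ℝ)..t, (rho B φ γ u - θ u) := by
      rw [star' hB hsol ht γ, Theta_succ, intervalIntegral.integral_sub hIA hIB]
      ring
    set E := Real.exp (Rq B γ t) with hE
    set K : ℝ := (Nat.factorial k : ℝ) with hK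
    have hK0 : 0 < K := by
      rw [hK]; exact_mod_cast Nat.factorial_pos k
    have hpt : ∀ u ∈ Icc (0:ℝ) t, |rho B φ γ u - θ u|
        ≤ C * E * (M * (2*C*u)^k / K) := by
      intro u hu
      have hsplit : rho B φ γ u - θ u = bb B (γ - u) * Real.exp (Rq B γ u)
          * (φ u (Real.exp (γ - Real.log 2 - u)) - Theta B f k u (γ - Real.log 2)) := by
        rw [rho, hθ]; ring
      rw [hsplit, abs_mul, abs_mul, abs_of_nonneg (bb_nonneg hB _),
        abs_of_nonneg (le_of_lt (Real.exp_pos _))]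
      have hbbu : bb B (γ - u) ≤ C := hC _ (by linarith [hu.1])
      have hexpu : Real.exp (Rq B γ u) ≤ E :=
        Real.exp_le_exp.mpr (Rq_mono hB γ hu.1 hu.2)
      have hihu : |φ u (Real.exp (γ - Real.log 2 - u)) - Theta B f k u (γ - Real.log 2)|
          ≤ M * (2*C*u)^k / K := by
        have hlog2 : (0:ℝ) ≤ Real.log 2 := Real.log_nonneg one_le_two
        exact ih (γ - Real.log 2) (by linarith) u hu.1 (le_trans hu.2 htT)
      exact mul_le_mul (mul_le_mul hbbu hexpu (le_of_lt (Real.exp_pos _)) hC0) hihu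
        (abs_nonneg _) (by positivity)
    have habs : |∫ u in (0:ℝ)..t, (rho B φ γ u - θ u)|
        ≤ ∫ u in (0:ℝ)..t, |rho B φ γ u - θ u| :=
      intervalIntegral.abs_integral_le_integral_abs ht
    have hmono : (∫ u in (0:ℝ)..t, |rho B φ γ u - θ u|)
        ≤ ∫ u in (0:ℝ)..t, C * E * (M * (2*C*u)^k / K) :=
      intervalIntegral.integral_mono_on ht (hIA.sub hIB).abs
        ((continuous_const.mul ((continuous_const.mul
          ((continuous_const.mul continuous_id).pow k)).div_const K)).intervalIntegrable 0 t) hpt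
    have hval : (∫ u in (0:ℝ)..t, C * E * (M * (2*C*u)^k / K))
        = C * E * M * (2*C)^k / K * (t^(k+1) / ((k:ℝ)+1)) := by
      have hfe : (fun u => C * E * (M * (2*C*u)^k / K))
          = fun u => (C * E * M * (2*C)^k / K) * u^k := by
        funext u; rw [mul_pow]; ring
      rw [hfe, intervalIntegral.integral_const_mul, integral_pow]
      have : ((0:ℝ))^(k+1) = 0 := zero_pow (Nat.succ_ne_zero k)
      rw [this]
      ring
    have hEinv : Real.exp (-(Rq B γ t)) * E = 1 := by
      rw [hE, ← Real.exp_add]; simp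
    have hchain : |φ t (Real.exp (γ - t)) - Theta B f (k+1) t γ|
        ≤ Real.exp (-(Rq B γ t)) * 2 * (C * E * M * (2*C)^k / K * (t^(k+1) / ((k:ℝ)+1))) := by
      rw [h1, abs_mul, abs_of_nonneg (by positivity : (0:ℝ) ≤ Real.exp (-(Rq B γ t)) * 2)]
      refine mul_le_mul_of_nonneg_left ?_ (by positivity)
      exact le_trans habs (le_trans hmono (le_of_eq hval))
    refine le_trans hchain (le_of_eq ?_)
    have hfac : (Nat.factorial (k+1) : ℝ) = ((k:ℝ)+1) * K := by
      rw [hK]; push_cast [Nat.factorial_succ]; ring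
    rw [hfac]
    have hEpos : (0:ℝ) < E := Real.exp_pos _
    have hEne : E ≠ 0 := ne_of_gt hEpos
    have hEneg : Real.exp (-(Rq B γ t)) = E⁻¹ := by rw [hE, Real.exp_neg]
    have hKne : K ≠ 0 := ne_of_gt hK0
    have hkne : ((k:ℝ)+1) ≠ 0 := by positivity
    rw [hEneg]
    field_simp
    ring

end MitosisAux

open MitosisAux

/-- If the initial datum `f` is nonnegative then the unique locally bounded mild solution is
nonnegative, and if `f` is continuous then the solution is continuous on `[0,∞) × (0,∞)`. -/
theorem stmt1 (B : ℝ → ℝ) (hB : Bhyp B) (f : ℝ → ℝ) (hf : LocBddOn f)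
    (φ : ℝ → ℝ → ℝ) (hφ : LocBdd2 φ) (hsol : IsMildSol B f φ) :
    ((∀ x > 0, 0 ≤ f x) → ∀ t ≥ 0, ∀ x > 0, 0 ≤ φ t x) ∧
    (ContinuousOn f (Ioi 0) →
      ContinuousOn (Function.uncurry φ) (Ici 0 ×ˢ Ioi 0)) := by
  constructor
  · -- nonnegativity
    intro hf0 t ht x hx
    set γ := Real.log x + t with hγdef
    have hxe : Real.exp (γ - t) = x := by
      rw [hγdef, add_sub_cancel_right, Real.exp_log hx]
    obtain ⟨M, C, hM0, hC0, hest⟩ := main_est hB hφ hsol γ t ht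
    have hkey : ∀ k : ℕ, -(M * (2*C*t)^k / (Nat.factorial k : ℝ)) ≤ φ t x := by
      intro k
      have h1 := hest k γ (le_refl γ) t ht (le_refl t)
      rw [hxe] at h1
      have h2 : 0 ≤ Theta B f k t γ := Theta_nonneg hB hf0 k t ht γ
      have h3 := (abs_le.mp h1).1
      linarith
    have hlim : Tendsto (fun k : ℕ => -(M * (2*C*t)^k / (Nat.factorial k : ℝ)))
        atTop (𝓝 0) := by
      have h := FloorSemiring.tendsto_pow_div_factorial_atTop (K := ℝ) (2*C*t)
      have h2 := (h.const_mul M).neg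
      simp only [mul_zero, neg_zero] at h2
      refine h2.congr (fun k => ?_)
      rw [mul_div_assoc]
    exact le_of_tendsto' hlim hkey
  · -- continuity
    intro hfc
    rintro ⟨t₀, x₀⟩ ⟨ht₀, hx₀⟩
    simp only [mem_Ici] at ht₀
    simp only [mem_Ioi] at hx₀
    set T := t₀ + 1 with hTdef
    set A := Real.log x₀ + t₀ + 2 with hAdef
    have hT0 : (0:ℝ) ≤ T := by linarith
    obtain ⟨M, C, hM0, hC0, hest⟩ := main_est hB hφ hsol A T hT0
    set D : Set (ℝ × ℝ) := Icc 0 T ×ˢ Iic A with hDdef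
    have hunif : TendstoUniformlyOn (fun k (q : ℝ × ℝ) => Theta B f k q.1 q.2)
        (fun q : ℝ × ℝ => φ q.1 (Real.exp (q.2 - q.1))) atTop D := by
      rw [Metric.tendstoUniformlyOn_iff]
      intro ε hε
      have hlim : Tendsto (fun k : ℕ => M * (2*C*T)^k / (Nat.factorial k : ℝ))
          atTop (𝓝 0) := by
        have h := FloorSemiring.tendsto_pow_div_factorial_atTop (K := ℝ) (2*C*T)
        have h2 := h.const_mul M
        simp only [mul_zero] at h2
        refine h2.congr (fun k => ?_)
        rw [mul_div_assoc]
      filter_upwards [hlim.eventually (gt_mem_nhds hε)] with k hk q hq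
      rw [Real.dist_eq]
      have h1 := hest k q.2 hq.2 q.1 hq.1.1 hq.1.2
      have hbase : (2*C*q.1)^k ≤ (2*C*T)^k :=
        pow_le_pow_left₀ (mul_nonneg (by positivity) hq.1.1)
          (mul_le_mul_of_nonneg_left hq.1.2 (by positivity)) k
      have h2 : M * (2*C*q.1)^k / (Nat.factorial k : ℝ)
          ≤ M * (2*C*T)^k / (Nat.factorial k : ℝ) := by
        have hKpos : (0:ℝ) < (Nat.factorial k : ℝ) := by exact_mod_cast Nat.factorial_pos k
        have hmm := mul_le_mul_of_nonneg_left hbase hM0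
        exact div_le_div_of_nonneg_right hmm hKpos.le
      exact lt_of_le_of_lt (le_trans h1 h2) hk
    have hΨ : ContinuousOn (fun q : ℝ × ℝ => φ q.1 (Real.exp (q.2 - q.1))) D :=
      hunif.continuousOn (Frequently.of_forall fun k => (Theta_cont hB hfc k).continuousOn)
    set g : ℝ × ℝ → ℝ × ℝ := fun q => (q.1, Real.log q.2 + q.1) with hgdef
    have hgc : ContinuousAt g (t₀, x₀) := by
      refine ContinuousAt.prodMk continuousAt_fst ?_
      exact ((Real.continuousAt_log (ne_of_gt hx₀)).comp_of_eq continuousAt_snd rfl).add continuousAt_fst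
    set S : Set (ℝ × ℝ) := Ici 0 ×ˢ Ioi 0 with hSdef
    set V : Set (ℝ × ℝ) := Iio T ×ˢ Iio (x₀ * Real.exp 1) with hVdef
    have hexp1 : (1:ℝ) < Real.exp 1 := by
      linarith [Real.add_one_le_exp (1:ℝ)]
    have hV : V ∈ 𝓝 ((t₀, x₀) : ℝ × ℝ) := by
      refine prod_mem_nhds (Iio_mem_nhds (by linarith)) (Iio_mem_nhds ?_)
      exact (lt_mul_iff_one_lt_right hx₀).mpr hexp1
    have hmaps : MapsTo g (S ∩ V) D := by
      rintro q ⟨⟨hq1, hq2⟩, ⟨hq3, hq4⟩⟩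
      simp only [mem_Ici] at hq1
      simp only [mem_Ioi] at hq2
      simp only [mem_Iio] at hq3 hq4
      constructor
      · exact ⟨hq1, le_of_lt hq3⟩
      · simp only [mem_Iic]
        have hlog : Real.log q.2 < Real.log x₀ + 1 := by
          have := Real.log_lt_log hq2 hq4
          rwa [Real.log_mul (ne_of_gt hx₀) (ne_of_gt (Real.exp_pos 1)),
            Real.log_exp] at this
        rw [hAdef, hTdef] at *
        linarith
    have hgp : g (t₀, x₀) ∈ D := by
      refine ⟨⟨ht₀, ?_⟩, ?_⟩
      · rw [hTdef]; linarith
      · show Real.log x₀ + t₀ ∈ Iic A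
        rw [hAdef, mem_Iic]
        linarith
    have hcomp : ContinuousWithinAt ((fun q : ℝ × ℝ => φ q.1 (Real.exp (q.2 - q.1))) ∘ g)
        (S ∩ V) (t₀, x₀) :=
      (hΨ _ hgp).comp (hgc.continuousWithinAt) hmaps
    have hcomp2 : ContinuousWithinAt ((fun q : ℝ × ℝ => φ q.1 (Real.exp (q.2 - q.1))) ∘ g)
        S (t₀, x₀) :=
      hcomp.mono_of_mem_nhdsWithin (inter_mem_nhdsWithin S hV)
    refine hcomp2.congr (fun q hq => ?_) ?_
    · have hq2 : 0 < q.2 := hq.2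
      show φ q.1 q.2 = φ q.1 (Real.exp (Real.log q.2 + q.1 - q.1))
      rw [add_sub_cancel_right, Real.exp_log hq2]
    · show φ t₀ x₀ = φ t₀ (Real.exp (Real.log x₀ + t₀ - t₀))
      rw [add_sub_cancel_right, Real.exp_log hx₀]
end
end

section
/- Assume B : (0,∞) → [0,∞) is continuous and bounded on some neighborhood of 0. Then the family (M_t)_{t≥0} is a semigroup on locally bounded functions: for every locally bounded f : (0,∞) → ℝ and all s, t ≥ 0, M_{t+s} f = M_t (M_s f), i.e. the unique locally bounded mild solution with initial datum f evaluated at time t+s equals the unique locally bounded mild solution with initial datum M_s f evaluated at time t. -/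
open MeasureTheory Real Set Filter Topology

noncomputable section

namespace SG3

def L (β : ℕ → ℝ → ℝ) (k : ℕ) (a : ℝ) : ℝ := ∫ b in (0:ℝ)..a, β k b

def SatRec (β : ℕ → ℝ → ℝ) (D : ℕ → ℝ) (F : ℕ → ℝ → ℝ) : Prop :=
  ∀ k : ℕ, ∀ a : ℝ, 0 ≤ a →
    F k a = D k * Real.exp (-(L β k a)) +
      2 * ∫ b in (0:ℝ)..a, β k b * Real.exp (L β k b - L β k a) * F (k+1) b

variable {β : ℕ → ℝ → ℝ} {D : ℕ → ℝ} {F G : ℕ → ℝ → ℝ} {C : ℝ}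

lemma L_cont (hβ : ∀ k, Continuous (β k)) (k : ℕ) : Continuous (L β k) :=
  intervalIntegral.continuous_primitive (fun _ _ => (hβ k).intervalIntegrable _ _) 0

lemma rec' (hR : SatRec β D F) (k : ℕ) {a : ℝ} (ha : 0 ≤ a) :
    F k a = D k * Real.exp (-(L β k a)) +
      2 * (Real.exp (-(L β k a)) *
        ∫ b in (0:ℝ)..a, β k b * Real.exp (L β k b) * F (k+1) b) := by
  have h := hR k a ha
  have e : ∀ b : ℝ, β k b * Real.exp (L β k b - L β k a) * F (k+1) b
      = Real.exp (-(L β k a)) * (β k b * Real.exp (L β k b) * F (k+1) b) := by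
    intro b; rw [Real.exp_sub, Real.exp_neg]; ring
  rw [h]
  simp only [e]
  rw [intervalIntegral.integral_const_mul]

lemma aemeas (hβ : ∀ k, Continuous (β k)) (hR : SatRec β D F) (k : ℕ) (T : ℝ) :
    AEStronglyMeasurable (F k) (volume.restrict (Ioc (0:ℝ) T)) := by
  classical
  set q : ℝ → ℝ := fun b => β k b * Real.exp (L β k b) * F (k+1) b with hq
  set H : ℝ → ℝ := fun a => ∫ b in (0:ℝ)..a, q b with hH
  set E : Set ℝ := {a | 0 < a ∧ IntervalIntegrable q volume 0 a} with hE
  -- E is downward closed within (0,∞)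
  have hdc : ∀ ⦃a a' : ℝ⦄, a ∈ E → 0 < a' → a' ≤ a → a' ∈ E := by
    intro a a' ha ha' hle
    refine ⟨ha', ha.2.mono_set ?_⟩
    rw [uIcc_of_le ha'.le, uIcc_of_le (ha'.trans_le hle).le]
    exact Icc_subset_Icc le_rfl hle
  have hEo : E.OrdConnected := ⟨fun x hx y hy z hz => hdc hy (lt_of_lt_of_le hx.1 hz.1) hz.2⟩
  have hEm : MeasurableSet E := hEo.measurableSet
  -- H is continuous on E
  have hHc : ContinuousOn H E := by
    intro a ha
    by_cases hex : ∃ a' ∈ E, a < a'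
    · obtain ⟨a', ha', haa'⟩ := hex
      have ha'0 : (0:ℝ) ≤ a' := ha'.1.le
      have hcont : ContinuousOn H (uIcc (0:ℝ) a') :=
        intervalIntegral.continuousOn_primitive_interval' ha'.2 left_mem_uIcc
      have haI : a ∈ uIcc (0:ℝ) a' := by
        rw [uIcc_of_le ha'0]; exact ⟨ha.1.le, haa'.le⟩
      have h1 : ContinuousWithinAt H (uIcc (0:ℝ) a') a := hcont a haI
      refine h1.mono_of_mem_nhdsWithin ?_
      have hIio : Iio a' ∈ 𝓝[E] a := nhdsWithin_le_nhds (Iio_mem_nhds haa')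
      refine Filter.mem_of_superset (Filter.inter_mem hIio self_mem_nhdsWithin) ?_
      rintro z ⟨hz1, hz2⟩
      rw [uIcc_of_le ha'0]
      exact ⟨hz2.1.le, le_of_lt hz1⟩
    · push_neg at hex
      have hEsub : E ⊆ uIcc (0:ℝ) a := by
        intro z hz
        rw [uIcc_of_le ha.1.le]
        exact ⟨hz.1.le, hex z hz⟩
      have hcont : ContinuousOn H (uIcc (0:ℝ) a) :=
        intervalIntegral.continuousOn_primitive_interval' ha.2 left_mem_uIcc
      exact (hcont.mono hEsub) a ha
  -- representation of F k on (0, T]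
  have hrepr : ∀ a ∈ Ioc (0:ℝ) T, F k a =
      D k * Real.exp (-(L β k a)) + 2 * (Real.exp (-(L β k a)) * E.indicator H a) := by
    intro a ha
    have hind : E.indicator H a = ∫ b in (0:ℝ)..a, β k b * Real.exp (L β k b) * F (k+1) b := by
      by_cases hP : IntervalIntegrable q volume 0 a
      · have hmem : a ∈ E := ⟨ha.1, hP⟩
        rw [Set.indicator_of_mem hmem]
      · have hmem : a ∉ E := fun h => hP h.2
        rw [Set.indicator_of_notMem hmem, intervalIntegral.integral_undef hP]
    rw [rec' hR k ha.1.le, hind]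
  -- measurability of the representation
  have hLc := L_cont hβ k
  have m1 : AEStronglyMeasurable (E.indicator H) (volume.restrict (Ioc (0:ℝ) T)) := by
    rw [aestronglyMeasurable_indicator_iff hEm]
    have h0 : AEStronglyMeasurable H (volume.restrict E) := hHc.aestronglyMeasurable hEm
    rw [Measure.restrict_restrict hEm]
    exact h0.mono_measure (Measure.restrict_mono inter_subset_left le_rfl)
  have m2 : AEStronglyMeasurable
      (fun a => D k * Real.exp (-(L β k a)) + 2 * (Real.exp (-(L β k a)) * E.indicator H a))
      (volume.restrict (Ioc (0:ℝ) T)) := by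
    refine AEStronglyMeasurable.add ?_ ?_
    · exact (continuous_const.mul ((hLc.neg).rexp)).aestronglyMeasurable
    · exact aestronglyMeasurable_const.mul (((hLc.neg).rexp).aestronglyMeasurable.mul m1)
  refine m2.congr ?_
  filter_upwards [ae_restrict_mem measurableSet_Ioc] with a ha
  exact (hrepr a ha).symm

lemma L_sub (hβ : ∀ k, Continuous (β k)) (k : ℕ) (y b : ℝ) :
    L β k b - L β k y = ∫ x in y..b, β k x :=
  intervalIntegral.integral_interval_sub_left ((hβ k).intervalIntegrable 0 b)
    ((hβ k).intervalIntegrable 0 y)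

lemma L_mono (hβ : ∀ k, Continuous (β k)) (hβ0 : ∀ k b, 0 ≤ β k b) (k : ℕ) {y b : ℝ}
    (h : y ≤ b) : L β k y ≤ L β k b := by
  have h2 := L_sub hβ k y b
  have h3 : 0 ≤ ∫ x in y..b, β k x :=
    intervalIntegral.integral_nonneg h (fun x _ => hβ0 k x)
  linarith

def UnifBdd (F : ℕ → ℝ → ℝ) : Prop :=
  ∀ r : ℝ, ∃ M : ℝ, 0 ≤ M ∧ ∀ k : ℕ, ∀ b : ℝ, 0 ≤ b → b ≤ r → |F k b| ≤ M

/-- Products of continuous functions with the solution are interval integrable. -/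
lemma integ (hβ : ∀ k, Continuous (β k)) (hFb : UnifBdd F) (hR : SatRec β D F)
    (k : ℕ) {ρ : ℝ → ℝ} (hρ : Continuous ρ) {a : ℝ} (ha : 0 ≤ a) :
    IntervalIntegrable (fun b => ρ b * F k b) volume 0 a := by
  rw [intervalIntegrable_iff_integrableOn_Ioc_of_le ha]
  obtain ⟨M, hM0, hM⟩ := hFb a
  obtain ⟨R, hRR⟩ := (isCompact_Icc (a := (0:ℝ)) (b := a)).exists_bound_of_continuousOn
    hρ.continuousOn
  have hR0 : 0 ≤ R := le_trans (norm_nonneg _) (hRR 0 ⟨le_rfl, ha⟩)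
  refine Integrable.mono' (g := fun _ => R * M)
    (integrableOn_const measure_Ioc_lt_top.ne)
    (hρ.aestronglyMeasurable.mul (aemeas hβ hR k a)) ?_
  filter_upwards [ae_restrict_mem measurableSet_Ioc] with b hb
  have h1 : |ρ b| ≤ R := hRR b ⟨hb.1.le, hb.2⟩
  have h2 : |F k b| ≤ M := hM k b hb.1.le hb.2
  calc ‖ρ b * F k b‖ = |ρ b| * |F k b| := abs_mul _ _
    _ ≤ R * M := mul_le_mul h1 h2 (abs_nonneg _) hR0

/-- The time-shifted solution solves the recursion with shifted rate and datum. -/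
lemma shift (hβ : ∀ k, Continuous (β k)) (hFb : UnifBdd F) (hR : SatRec β D F)
    {s : ℝ} (hs : 0 ≤ s) :
    SatRec (fun k b => β k (b + s)) (fun k => F k s) (fun k a => F k (a + s)) := by
  intro k a ha
  have hLs : ∀ c : ℝ, L (fun k b => β k (b + s)) k c = L β k (c + s) - L β k s := by
    intro c
    have h1 : (∫ b in (0:ℝ)..c, β k (b + s)) = ∫ b in (0+s)..(c+s), β k b :=
      intervalIntegral.integral_comp_add_right (f := β k) s
    rw [L, h1, zero_add, L_sub hβ k s (c + s)]
  have key := rec' hR k (by linarith : (0:ℝ) ≤ a + s)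
  have keys := rec' hR k hs
  have hq1 : IntervalIntegrable (fun b => (fun b => β k b * Real.exp (L β k b)) b * F (k+1) b)
      volume 0 (a + s) :=
    integ hβ hFb hR (k+1) ((hβ k).mul ((L_cont hβ k).rexp)) (by linarith)
  have hq2 : IntervalIntegrable (fun b => (fun b => β k b * Real.exp (L β k b)) b * F (k+1) b)
      volume 0 s := hq1.mono_set (by
    rw [uIcc_of_le hs, uIcc_of_le (by linarith : (0:ℝ) ≤ a + s)]
    exact Icc_subset_Icc le_rfl (by linarith))
  simp only at hq1 hq2
  set q : ℝ → ℝ := fun b => β k b * Real.exp (L β k b) * F (k+1) b with hqdef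
  have hsplit : (∫ b in (0:ℝ)..(a+s), q b) - (∫ b in (0:ℝ)..s, q b) = ∫ b in s..(a+s), q b :=
    intervalIntegral.integral_interval_sub_left hq1 hq2
  have htrans : (∫ b in s..(a+s), q b) = ∫ b in (0:ℝ)..a, q (b + s) := by
    rw [intervalIntegral.integral_comp_add_right (f := q) s, zero_add]
  show F k (a+s) = F k s * Real.exp (-(L (fun k b => β k (b + s)) k a)) +
      2 * ∫ b in (0:ℝ)..a, β k (b+s) *
        Real.exp (L (fun k b => β k (b + s)) k b - L (fun k b => β k (b + s)) k a) *
        F (k+1) (b+s)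
  simp only [hLs]
  have e2 : ∀ b : ℝ, β k (b+s) *
      Real.exp ((L β k (b + s) - L β k s) - (L β k (a + s) - L β k s)) * F (k+1) (b+s)
      = Real.exp (-(L β k (a+s))) * q (b + s) := by
    intro b
    rw [show (L β k (b + s) - L β k s) - (L β k (a + s) - L β k s)
        = L β k (b+s) - L β k (a+s) by ring, Real.exp_sub, Real.exp_neg, hqdef]
    ring
  simp only [e2]
  rw [intervalIntegral.integral_const_mul, ← htrans, ← hsplit, key, keys]
  have h2 : Real.exp (-(L β k s)) * Real.exp (L β k s) = 1 := by
    rw [← Real.exp_add]; simp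
  have h1 : Real.exp (-(L β k (a+s) - L β k s))
      = Real.exp (L β k s) * Real.exp (-(L β k (a+s))) := by
    rw [← Real.exp_add]; ring_nf
  rw [h1]
  linear_combination (-(D k * Real.exp (-(L β k (a+s))))
    - 2 * Real.exp (-(L β k (a+s))) * ∫ b in (0:ℝ)..s, q b) * h2

/-- Gronwall-type uniqueness for the recursion. -/
lemma uniq (hβ : ∀ k, Continuous (β k)) (hβ0 : ∀ k b, 0 ≤ β k b)
    (hβC : ∀ k b, 0 ≤ b → β k b ≤ C)
    (hFb : UnifBdd F) (hGb : UnifBdd G) (hRF : SatRec β D F) (hRG : SatRec β D G)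
    (k : ℕ) {a : ℝ} (ha : 0 ≤ a) : F k a = G k a := by
  have hC0 : 0 ≤ C := le_trans (hβ0 0 0) (hβC 0 0 le_rfl)
  obtain ⟨M, hM0, hM⟩ := hFb a
  obtain ⟨N, hN0, hN⟩ := hGb a
  have main : ∀ n : ℕ, ∀ k : ℕ, ∀ b : ℝ, 0 ≤ b → b ≤ a →
      |F k b - G k b| ≤ (M + N) * (2*C)^n * b^n / n.factorial := by
    intro n
    induction n with
    | zero =>
      intro k b hb hba
      simpa using (abs_sub (F k b) (G k b)).trans (add_le_add (hM k b hb hba) (hN k b hb hba))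
    | succ n ih =>
      intro k b hb hba
      have hiF : IntervalIntegrable
          (fun y => (fun y => β k y * Real.exp (L β k y - L β k b)) y * F (k+1) y) volume 0 b :=
        integ hβ hFb hRF (k+1) ((hβ k).mul (((L_cont hβ k).sub continuous_const).rexp)) hb
      have hiG : IntervalIntegrable
          (fun y => (fun y => β k y * Real.exp (L β k y - L β k b)) y * G (k+1) y) volume 0 b :=
        integ hβ hGb hRG (k+1) ((hβ k).mul (((L_cont hβ k).sub continuous_const).rexp)) hb
      simp only at hiF hiG
      have hdiff : F k b - G k b = 2 * ∫ y in (0:ℝ)..b,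
          (β k y * Real.exp (L β k y - L β k b) * F (k+1) y
            - β k y * Real.exp (L β k y - L β k b) * G (k+1) y) := by
        rw [hRF k b hb, hRG k b hb, intervalIntegral.integral_sub hiF hiG]; ring
      rw [hdiff, abs_mul, abs_two]
      have hbnd : |∫ y in (0:ℝ)..b,
          (β k y * Real.exp (L β k y - L β k b) * F (k+1) y
            - β k y * Real.exp (L β k y - L β k b) * G (k+1) y)|
          ≤ |∫ y in (0:ℝ)..b, C * ((M + N) * (2*C)^n * y^n / n.factorial)| := by
        rw [← Real.norm_eq_abs]
        apply intervalIntegral.norm_integral_le_abs_of_norm_le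
        · filter_upwards [ae_restrict_mem measurableSet_uIoc] with y hy
          rw [uIoc_of_le hb] at hy
          have hy0 : 0 ≤ y := hy.1.le
          have hyb : y ≤ b := hy.2
          have hexp : Real.exp (L β k y - L β k b) ≤ 1 := by
            rw [Real.exp_le_one_iff]
            have := L_mono hβ hβ0 k hyb
            linarith
          have hih := ih (k+1) y hy0 (hyb.trans hba)
          calc ‖β k y * Real.exp (L β k y - L β k b) * F (k+1) y
              - β k y * Real.exp (L β k y - L β k b) * G (k+1) y‖
              = β k y * Real.exp (L β k y - L β k b) * |F (k+1) y - G (k+1) y| := by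
                rw [← mul_sub, Real.norm_eq_abs, abs_mul, abs_mul,
                  abs_of_nonneg (hβ0 k y), abs_of_nonneg (Real.exp_pos _).le]
            _ ≤ C * 1 * ((M + N) * (2*C)^n * y^n / n.factorial) := by
                apply mul_le_mul
                · exact mul_le_mul (hβC k y hy0) hexp (Real.exp_pos _).le hC0
                · exact hih
                · exact abs_nonneg _
                · positivity
            _ = C * ((M + N) * (2*C)^n * y^n / n.factorial) := by ring
        · apply Continuous.intervalIntegrable
          continuity
      have hval : (∫ y in (0:ℝ)..b, C * ((M + N) * (2*C)^n * y^n / n.factorial))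
          = C * (M + N) * (2*C)^n / n.factorial * (b^(n+1) / (n+1)) := by
        have e3 : ∀ y : ℝ, C * ((M + N) * (2*C)^n * y^n / n.factorial)
            = (C * (M + N) * (2*C)^n / n.factorial) * y^n := by intro y; ring
        simp only [e3]
        rw [intervalIntegral.integral_const_mul, integral_pow]
        ring
      have hnn : 0 ≤ C * (M + N) * (2*C)^n / n.factorial * (b^(n+1) / (n+1)) := by positivity
      rw [hval, abs_of_nonneg hnn] at hbnd
      calc 2 * |∫ y in (0:ℝ)..b,
          (β k y * Real.exp (L β k y - L β k b) * F (k+1) y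
            - β k y * Real.exp (L β k y - L β k b) * G (k+1) y)|
          ≤ 2 * (C * (M + N) * (2*C)^n / n.factorial * (b^(n+1) / (n+1))) := by linarith
        _ = (M + N) * (2*C)^(n+1) * b^(n+1) / (n+1).factorial := by
            rw [Nat.factorial_succ, pow_succ]
            push_cast
            have : ((n:ℝ) + 1) ≠ 0 := by positivity
            field_simp
            ring
  have hle : ∀ n : ℕ, |F k a - G k a| ≤ (M + N) * (2*C*a)^n / n.factorial := by
    intro n
    have := main n k a ha le_rfl
    calc |F k a - G k a| ≤ (M + N) * (2*C)^n * a^n / n.factorial := this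
      _ = (M + N) * (2*C*a)^n / n.factorial := by rw [mul_pow]; ring
  have hlim : Tendsto (fun n : ℕ => (M + N) * (2*C*a)^n / n.factorial) atTop (𝓝 0) := by
    have h0 := (FloorSemiring.tendsto_pow_div_factorial_atTop (2*C*a)).const_mul (M + N)
    simpa [mul_div_assoc] using h0
  have habs : |F k a - G k a| ≤ 0 := ge_of_tendsto hlim (Filter.Eventually.of_forall hle)
  have := abs_nonneg (F k a - G k a)
  have : |F k a - G k a| = 0 := le_antisymm habs this
  have := abs_eq_zero.mp this
  linarith [this]

lemma char {B g : ℝ → ℝ} (hBc : ContinuousOn B (Ioi 0)) {χ : ℝ → ℝ → ℝ}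
    (hsol : IsMildSol B g χ) {c : ℝ} (hc : 0 < c) {a : ℝ} (ha : 0 ≤ a) :
    χ a (c * Real.exp (-a)) =
      g c * Real.exp (-(∫ t in (0:ℝ)..a, B (c * Real.exp (-t)))) +
      2 * ∫ b in (0:ℝ)..a, B (c * Real.exp (-b)) *
          Real.exp ((∫ t in (0:ℝ)..b, B (c * Real.exp (-t)))
            - ∫ t in (0:ℝ)..a, B (c * Real.exp (-t))) *
          χ b (c / 2 * Real.exp (-b)) := by
  have hBcont : Continuous fun t : ℝ => B (c * Real.exp (-t)) := by
    apply hBc.comp_continuous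
    · exact continuous_const.mul (Real.continuous_exp.comp continuous_neg)
    · intro t; exact mul_pos hc (Real.exp_pos _)
  have hJint : ∀ r : ℝ, IntervalIntegrable (fun t => B (c * Real.exp (-t))) volume 0 r :=
    fun r => hBcont.intervalIntegrable 0 r
  set J : ℝ → ℝ := fun r => ∫ t in (0:ℝ)..r, B (c * Real.exp (-t)) with hJ
  have h := hsol a ha (c * Real.exp (-a)) (mul_pos hc (Real.exp_pos _))
  have key : ∀ σ : ℝ, c * Real.exp (-a) * Real.exp σ = c * Real.exp (-(a - σ)) := by
    intro σ; rw [mul_assoc, ← Real.exp_add]; ring_nf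
  simp only [key] at h
  have einn : ∀ τ : ℝ, (∫ σ in (0:ℝ)..τ, B (c * Real.exp (-(a - σ)))) = J a - J (a - τ) := by
    intro τ
    have h1 := intervalIntegral.integral_comp_sub_left (a := (0:ℝ)) (b := τ)
      (fun t => B (c * Real.exp (-t))) a
    have h2 := intervalIntegral.integral_interval_sub_left (hJint a) (hJint (a - τ))
    rw [h1, sub_zero, ← h2]
  simp only [einn] at h
  have eq2 : (∫ τ in (0:ℝ)..a, B (c * Real.exp (-(a - τ))) * Real.exp (-(J a - J (a - τ)))
        * χ (a - τ) (c * Real.exp (-(a - τ)) / 2))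
      = ∫ b in (0:ℝ)..a, B (c * Real.exp (-b)) * Real.exp (J b - J a)
        * χ b (c / 2 * Real.exp (-b)) := by
    have h3 := intervalIntegral.integral_comp_sub_left (a := (0:ℝ)) (b := a)
      (fun b => B (c * Real.exp (-b)) * Real.exp (J b - J a) * χ b (c / 2 * Real.exp (-b))) a
    rw [sub_zero, sub_self] at h3
    rw [← h3]
    apply intervalIntegral.integral_congr
    intro τ _
    simp only [neg_sub]
    congr 1
    ring_nf
  rw [eq2] at h
  have hJ0 : J 0 = 0 := intervalIntegral.integral_same
  simp only [sub_self, hJ0, neg_zero, Real.exp_zero, mul_one, sub_zero] at h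
  exact h


def cs (x T : ℝ) (k : ℕ) : ℝ := x * Real.exp T / 2^k

lemma cs_pos {x : ℝ} (hx : 0 < x) (T : ℝ) (k : ℕ) : 0 < cs x T k := by
  unfold cs; positivity

lemma cs_succ (x T : ℝ) (k : ℕ) : cs x T k / 2 = cs x T (k+1) := by
  unfold cs; rw [pow_succ]; ring

lemma cs_le {x : ℝ} (hx : 0 < x) (T : ℝ) (k : ℕ) : cs x T k ≤ x * Real.exp T := by
  unfold cs
  apply div_le_self (by positivity)
  exact one_le_pow₀ (by norm_num)

lemma satrec_char {B g : ℝ → ℝ} (hBc : ContinuousOn B (Ioi 0)) {χ : ℝ → ℝ → ℝ}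
    (hsol : IsMildSol B g χ) {x : ℝ} (T : ℝ) (hx : 0 < x) :
    SatRec (fun k b => B (cs x T k * Real.exp (-b))) (fun k => g (cs x T k))
      (fun k a => χ a (cs x T k * Real.exp (-a))) := by
  intro k a ha
  have h := char hBc hsol (cs_pos hx T k) ha
  have hc2 : ∀ b : ℝ, cs x T k / 2 * Real.exp (-b) = cs x T (k+1) * Real.exp (-b) := by
    intro b; rw [cs_succ]
  simp only [hc2] at h
  exact h

lemma unifBdd_char {χ : ℝ → ℝ → ℝ} (hχ : LocBdd2 χ) {x : ℝ} (T : ℝ) (hx : 0 < x)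
    (s0 : ℝ) (hs0 : 0 ≤ s0) :
    UnifBdd (fun k a => χ (a + s0) (cs x T k * Real.exp (-a))) := by
  intro r
  have hxT : 0 < x * Real.exp T := by positivity
  set r' : ℝ := max (r + s0) (x * Real.exp T) + 1 with hr'def
  have hr' : 0 < r' := by
    have := le_max_right (r + s0) (x * Real.exp T); linarith
  obtain ⟨M, hM⟩ := hχ r' hr'
  refine ⟨max M 0, le_max_right _ _, fun k b hb hbr => ?_⟩
  have h1 : 0 ≤ b + s0 := by linarith
  have h2 : b + s0 ≤ r' := by
    have := le_max_left (r + s0) (x * Real.exp T); linarith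
  have h3 : 0 < cs x T k * Real.exp (-b) := by
    have := cs_pos hx T k; positivity
  have h4 : cs x T k * Real.exp (-b) ≤ r' := by
    have e1 : cs x T k * Real.exp (-b) ≤ cs x T k := by
      apply mul_le_of_le_one_right (cs_pos hx T k).le
      rw [Real.exp_le_one_iff]; linarith
    have e2 := cs_le hx T k
    have := le_max_right (r + s0) (x * Real.exp T); linarith
  exact le_trans (hM (b + s0) _ h1 h2 h3 h4) (le_max_left _ _)

end SG3

/-- Semigroup property: the unique locally bounded mild solution with datum `f` evaluated at time
`t + s` equals the unique locally bounded mild solution with datum `M_s f` evaluated at time `t`. -/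
theorem stmt3 (B : ℝ → ℝ) (hB : Bhyp B) (f : ℝ → ℝ) (hf : LocBddOn f)
    (s t : ℝ) (hs : 0 ≤ s) (ht : 0 ≤ t)
    (φ ψ : ℝ → ℝ → ℝ) (hφ : LocBdd2 φ) (hφsol : IsMildSol B f φ)
    (hψ : LocBdd2 ψ) (hψsol : IsMildSol B (fun x => φ s x) ψ) :
    ∀ x > 0, φ (t + s) x = ψ t x := by
  classical
  obtain ⟨hBc, hB0, ε, hε, C0, hC0⟩ := hB
  intro x hx
  open SG3 in
  -- a uniform bound for B on (0, x * exp (t+s)]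
  have hc0 : (0:ℝ) < x * Real.exp (t + s) := by positivity
  obtain ⟨C1, hC1⟩ := (isCompact_Icc (a := ε/2) (b := x * Real.exp (t+s))).exists_bound_of_continuousOn
    (hBc.mono (fun y hy => lt_of_lt_of_le (by linarith : (0:ℝ) < ε/2) hy.1))
  have hBbd : ∀ y : ℝ, 0 < y → y ≤ x * Real.exp (t + s) → B y ≤ max C0 C1 := by
    intro y hy hyc
    by_cases hcase : y < ε
    · exact le_trans (hC0 y hy hcase) (le_max_left _ _)
    · push_neg at hcase
      have hmem : y ∈ Icc (ε/2) (x * Real.exp (t+s)) := ⟨by linarith, hyc⟩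
      have h5 := hC1 y hmem
      rw [Real.norm_eq_abs] at h5
      exact le_trans (le_trans (le_abs_self _) h5) (le_max_right _ _)
  -- continuity of the rates
  have hbcont : ∀ (c : ℝ), 0 < c → Continuous fun b : ℝ => B (c * Real.exp (-b)) := by
    intro c hc
    apply hBc.comp_continuous
    · exact continuous_const.mul (Real.continuous_exp.comp continuous_neg)
    · intro b; exact mul_pos hc (Real.exp_pos _)
  have hβu_cont : ∀ k, Continuous fun b : ℝ => B (cs x (t+s) k * Real.exp (-b)) :=
    fun k => hbcont _ (SG3.cs_pos hx (t+s) k)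
  have hβv_cont : ∀ k, Continuous fun b : ℝ => B (cs x t k * Real.exp (-b)) :=
    fun k => hbcont _ (SG3.cs_pos hx t k)
  -- the three characteristic systems
  have hu : SatRec (fun k b => B (cs x (t+s) k * Real.exp (-b))) (fun k => f (cs x (t+s) k))
      (fun k a => φ a (cs x (t+s) k * Real.exp (-a))) :=
    SG3.satrec_char hBc hφsol (t+s) hx
  have hv : SatRec (fun k b => B (cs x t k * Real.exp (-b)))
      (fun k => φ s (cs x t k))
      (fun k a => ψ a (cs x t k * Real.exp (-a))) :=
    SG3.satrec_char hBc hψsol t hx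
  have hUBu : UnifBdd (fun k a => φ a (cs x (t+s) k * Real.exp (-a))) := by
    have h0 := SG3.unifBdd_char hφ (t+s) hx 0 le_rfl
    simpa only [add_zero] using h0
  have hw := SG3.shift hβu_cont hUBu hu hs
  -- transport the shifted system to the `t`-characteristics
  have harg : ∀ (k : ℕ) (b : ℝ),
      cs x (t+s) k * Real.exp (-(b + s)) = cs x t k * Real.exp (-b) := by
    intro k b
    unfold cs
    have e : Real.exp (t+s) * Real.exp (-(b+s)) = Real.exp t * Real.exp (-b) := by
      rw [← Real.exp_add, ← Real.exp_add]; ring_nf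
    have e2 : x * Real.exp (t+s) * Real.exp (-(b+s)) = x * Real.exp t * Real.exp (-b) := by
      rw [mul_assoc, mul_assoc, e]
    rw [div_mul_eq_mul_div, div_mul_eq_mul_div, e2]
  have hdat : ∀ k : ℕ, cs x (t+s) k * Real.exp (-s) = cs x t k := by
    intro k
    have := harg k 0
    simpa using this
  have hw' : SatRec (fun k b => B (cs x t k * Real.exp (-b)))
      (fun k => φ s (cs x t k))
      (fun k a => φ (a + s) (cs x t k * Real.exp (-a))) := by
    intro k a ha
    have h := hw k a ha
    simp only [SG3.L] at h ⊢
    simp only [harg, hdat] at h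
    exact h
  -- uniform bounds
  have hUBw : UnifBdd (fun k a => φ (a + s) (cs x t k * Real.exp (-a))) :=
    SG3.unifBdd_char hφ t hx s hs
  have hUBv : UnifBdd (fun k a => ψ a (cs x t k * Real.exp (-a))) := by
    have h0 := SG3.unifBdd_char hψ t hx 0 le_rfl
    simpa only [add_zero] using h0
  -- hypotheses on the rate
  have hβ0 : ∀ (k : ℕ) (b : ℝ), 0 ≤ B (cs x t k * Real.exp (-b)) := by
    intro k b
    exact hB0 _ (mul_pos (SG3.cs_pos hx t k) (Real.exp_pos _))
  have hβC : ∀ (k : ℕ) (b : ℝ), 0 ≤ b → B (cs x t k * Real.exp (-b)) ≤ max C0 C1 := by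
    intro k b hb
    apply hBbd _ (mul_pos (SG3.cs_pos hx t k) (Real.exp_pos _))
    have e1 : cs x t k * Real.exp (-b) ≤ cs x t k :=
      mul_le_of_le_one_right (SG3.cs_pos hx t k).le (by rw [Real.exp_le_one_iff]; linarith)
    have e2 := SG3.cs_le hx t k
    have e3 : x * Real.exp t ≤ x * Real.exp (t+s) := by
      apply mul_le_mul_of_nonneg_left _ hx.le
      exact Real.exp_le_exp.mpr (by linarith)
    linarith
  have hfin := SG3.uniq hβv_cont hβ0 hβC hUBw hUBv hw' hv 0 ht
  have hx0 : cs x t 0 * Real.exp (-t) = x := by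
    unfold cs
    rw [pow_zero, div_one, mul_assoc, ← Real.exp_add]
    simp
  rw [hx0] at hfin
  exact hfin
end
end

section
/- Assume B : (0,∞) → [0,∞) is continuous and bounded on some neighborhood of 0. Then the function (t,x) ↦ x e^t is the unique locally bounded mild solution of the dual mitosis equation with initial datum f(x) = x; consequently, for every f : (0,∞) → ℝ with ‖f‖_Ḃ < ∞ and every t ≥ 0, one has ‖M_t f‖_Ḃ ≤ e^t ‖f‖_Ḃ, i.e. |M_t f(x)| ≤ e^t x ‖f‖_Ḃ for all x > 0. -/
open MeasureTheory Real Set Filter Topology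

noncomputable section

namespace Stmt4Aux

variable {B : ℝ → ℝ}

lemma contB (hB : Bhyp B) {g : ℝ → ℝ} (hg : Continuous g) (hpos : ∀ u, 0 < g u) :
    Continuous fun u => B (g u) :=
  hB.1.comp_continuous hg fun u => hpos u

lemma Bnonneg (hB : Bhyp B) {y : ℝ} (hy : 0 < y) : 0 ≤ B y := hB.2.1 y hy

lemma Bbound (hB : Bhyp B) (K : ℝ) : ∃ M, 0 ≤ M ∧ ∀ y, 0 < y → y ≤ K → B y ≤ M := by
  obtain ⟨hc, hpos, ε, hε, C₀, hC₀⟩ := hB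
  by_cases hK : K < ε
  · exact ⟨max C₀ 0, le_max_right _ _, fun y hy hyK =>
      le_max_of_le_left (hC₀ y hy (lt_of_le_of_lt hyK hK))⟩
  · push_neg at hK
    obtain ⟨C₁, hC₁⟩ := isCompact_Icc.exists_bound_of_continuousOn
      (hc.mono (fun y (hy : y ∈ Icc ε K) => lt_of_lt_of_le hε hy.1))
    refine ⟨max (max C₀ C₁) 0, le_max_right _ _, fun y hy hyK => ?_⟩
    by_cases h : y < ε
    · exact le_max_of_le_left (le_max_of_le_left (hC₀ y hy h))
    · have h2 := hC₁ y ⟨not_lt.1 h, hyK⟩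
      rw [Real.norm_eq_abs] at h2
      exact le_max_of_le_left (le_max_of_le_right ((le_abs_self _).trans h2))

/-- `H a s = ∫₀ˢ B(a e^{-u}) du`. -/
def H (B : ℝ → ℝ) (a s : ℝ) : ℝ := ∫ u in (0:ℝ)..s, B (a * exp (-u))

lemma contQ (hB : Bhyp B) {a : ℝ} (ha : 0 < a) : Continuous fun u : ℝ => B (a * exp (-u)) :=
  contB hB (continuous_const.mul (Real.continuous_exp.comp continuous_neg)) fun u => by positivity

lemma H_hasDeriv (hB : Bhyp B) {a : ℝ} (ha : 0 < a) (s : ℝ) :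
    HasDerivAt (H B a) (B (a * exp (-s))) s :=
  ((contQ hB ha).integral_hasStrictDerivAt 0 s).hasDerivAt

lemma H_cont (hB : Bhyp B) {a : ℝ} (ha : 0 < a) : Continuous (H B a) :=
  continuous_iff_continuousAt.2 fun s => (H_hasDeriv hB ha s).continuousAt

lemma H_zero {a : ℝ} : H B a 0 = 0 := intervalIntegral.integral_same

lemma H_mono (hB : Bhyp B) {a : ℝ} (ha : 0 < a) {u s : ℝ} (hus : u ≤ s) :
    H B a u ≤ H B a s := by
  have h1 : H B a u + ∫ v in u..s, B (a * exp (-v)) = H B a s :=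
    intervalIntegral.integral_add_adjacent_intervals
      ((contQ hB ha).intervalIntegrable _ _) ((contQ hB ha).intervalIntegrable _ _)
  have h2 : 0 ≤ ∫ v in u..s, B (a * exp (-v)) :=
    intervalIntegral.integral_nonneg hus fun v _ => Bnonneg hB (by positivity)
  linarith

lemma FTC_exp (hB : Bhyp B) {a : ℝ} (ha : 0 < a) (s : ℝ) :
    ∫ u in (0:ℝ)..s, B (a * exp (-u)) * exp (H B a u) = exp (H B a s) - 1 := by
  have h1 : ∀ u ∈ uIcc (0:ℝ) s, HasDerivAt (fun v => exp (H B a v))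
      (B (a * exp (-u)) * exp (H B a u)) u := by
    intro u _
    have := (H_hasDeriv hB ha u).exp
    simpa [mul_comm] using this
  have h2 : IntervalIntegrable (fun u => B (a * exp (-u)) * exp (H B a u)) volume 0 s :=
    ((contQ hB ha).mul (Real.continuous_exp.comp (H_cont hB ha))).intervalIntegrable _ _
  have h3 := intervalIntegral.integral_eq_sub_of_hasDerivAt h1 h2
  rw [h3, H_zero, Real.exp_zero]

lemma FTC_G (hB : Bhyp B) {x : ℝ} (hx : 0 < x) (t : ℝ) :
    ∫ τ in (0:ℝ)..t, B (x * exp τ) * Real.exp (-∫ s in (0:ℝ)..τ, B (x * exp s))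
      = 1 - Real.exp (-∫ s in (0:ℝ)..t, B (x * exp s)) := by
  have hcont : Continuous fun s => B (x * exp s) :=
    contB hB (continuous_const.mul Real.continuous_exp) (fun u => by positivity)
  have hGd : ∀ τ : ℝ, HasDerivAt (fun τ => ∫ s in (0:ℝ)..τ, B (x * exp s)) (B (x * exp τ)) τ :=
    fun τ => (hcont.integral_hasStrictDerivAt 0 τ).hasDerivAt
  have hGc : Continuous fun τ => ∫ s in (0:ℝ)..τ, B (x * exp s) :=
    continuous_iff_continuousAt.2 fun τ => (hGd τ).continuousAt
  have h1 : ∀ τ ∈ uIcc (0:ℝ) t, HasDerivAt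
      (fun τ => -Real.exp (-∫ s in (0:ℝ)..τ, B (x * exp s)))
      (B (x * exp τ) * Real.exp (-∫ s in (0:ℝ)..τ, B (x * exp s))) τ := by
    intro τ _
    have := (((hGd τ).neg).exp).neg
    refine this.congr_deriv ?_
    simp only [Pi.neg_apply]
    ring
  have h2 : IntervalIntegrable
      (fun τ => B (x * exp τ) * Real.exp (-∫ s in (0:ℝ)..τ, B (x * exp s))) volume 0 t :=
    (hcont.mul (Real.continuous_exp.comp hGc.neg)).intervalIntegrable _ _
  have h3 := intervalIntegral.integral_eq_sub_of_hasDerivAt h1 h2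
  rw [h3]
  simp only [intervalIntegral.integral_same, neg_zero, Real.exp_zero]
  ring


/-- The line integrand. -/
def RR (B : ℝ → ℝ) (φ : ℝ → ℝ → ℝ) (a u : ℝ) : ℝ :=
  B (a * exp (-u)) * exp (H B a u) * φ u (a / 2 * exp (-u))

lemma star (hB : Bhyp B) {f : ℝ → ℝ} {φ : ℝ → ℝ → ℝ} (hφ : IsMildSol B f φ)
    {a : ℝ} (ha : 0 < a) {s : ℝ} (hs : 0 ≤ s) :
    φ s (a * exp (-s)) = exp (-H B a s) * (f a + 2 * ∫ u in (0:ℝ)..s, RR B φ a u) := by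
  have hq := contQ hB ha
  have h := hφ s hs (a * exp (-s)) (by positivity)
  have harg : a * exp (-s) * exp s = a := by
    rw [mul_assoc, ← Real.exp_add]; simp
  have hptw : ∀ σ : ℝ, a * exp (-s) * exp σ = a * exp (-(s - σ)) := by
    intro σ; rw [mul_assoc, ← Real.exp_add]; ring_nf
  have hHrw : ∀ τ : ℝ, (∫ σ in (0:ℝ)..τ, B (a * exp (-s) * exp σ)) = H B a s - H B a (s - τ) := by
    intro τ
    have e1 : (∫ σ in (0:ℝ)..τ, B (a * exp (-s) * exp σ))
        = ∫ u in (s - τ)..(s - 0), B (a * exp (-u)) := by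
      simp only [hptw]
      exact intervalIntegral.integral_comp_sub_left (fun u => B (a * exp (-u))) s
    have i1 : IntervalIntegrable (fun u => B (a * exp (-u))) volume 0 (s - τ) :=
      hq.intervalIntegrable _ _
    have i2 : IntervalIntegrable (fun u => B (a * exp (-u))) volume (s - τ) s :=
      hq.intervalIntegrable _ _
    have e2 := intervalIntegral.integral_add_adjacent_intervals i1 i2
    rw [e1, sub_zero]
    simp only [H] at e2 ⊢
    linarith
  have houtexp : (∫ σ in (0:ℝ)..s, B (a * exp (-s) * exp σ)) = H B a s := by
    rw [hHrw s, sub_self, H_zero, sub_zero]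
  have houtint : (∫ τ in (0:ℝ)..s, B (a * exp (-s) * exp τ)
        * Real.exp (-∫ σ in (0:ℝ)..τ, B (a * exp (-s) * exp σ))
        * φ (s - τ) (a * exp (-s) * exp τ / 2))
      = exp (-H B a s) * ∫ u in (0:ℝ)..s, RR B φ a u := by
    have e0 : ∀ τ : ℝ, B (a * exp (-s) * exp τ)
        * Real.exp (-∫ σ in (0:ℝ)..τ, B (a * exp (-s) * exp σ))
        * φ (s - τ) (a * exp (-s) * exp τ / 2)
        = (fun u => exp (-H B a s) * RR B φ a u) (s - τ) := by
      intro τ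
      simp only [RR]
      rw [hHrw τ, hptw τ]
      rw [show a * exp (-(s - τ)) / 2 = a / 2 * exp (-(s - τ)) from by ring]
      rw [show -(H B a s - H B a (s - τ)) = H B a (s - τ) + -H B a s from by ring, Real.exp_add]
      ring
    calc (∫ τ in (0:ℝ)..s, B (a * exp (-s) * exp τ)
          * Real.exp (-∫ σ in (0:ℝ)..τ, B (a * exp (-s) * exp σ))
          * φ (s - τ) (a * exp (-s) * exp τ / 2))
        = ∫ τ in (0:ℝ)..s, (fun u => exp (-H B a s) * RR B φ a u) (s - τ) :=
          intervalIntegral.integral_congr (fun τ _ => e0 τ)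
      _ = ∫ u in (s - s)..(s - 0), exp (-H B a s) * RR B φ a u :=
          intervalIntegral.integral_comp_sub_left (fun u => exp (-H B a s) * RR B φ a u) s
      _ = exp (-H B a s) * ∫ u in (0:ℝ)..s, RR B φ a u := by
          rw [sub_self, sub_zero, intervalIntegral.integral_const_mul]
  rw [harg, houtexp, houtint] at h
  rw [h]; ring


lemma prim_aesm (q : ℝ → ℝ) {s : ℝ} (hs : 0 ≤ s) :
    AEStronglyMeasurable (fun u => ∫ v in (0:ℝ)..u, q v) (volume.restrict (Ioc 0 s)) := by
  set F : ℝ → ℝ := fun u => ∫ v in (0:ℝ)..u, q v with hF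
  set S : Set ℝ := {u | 0 ≤ u ∧ u ≤ s ∧ IntervalIntegrable q volume 0 u} with hS
  have h0S : (0:ℝ) ∈ S := ⟨le_refl 0, hs, by
    rw [intervalIntegrable_iff_integrableOn_Ioc_of_le le_rfl]; simp⟩
  have hne : S.Nonempty := ⟨0, h0S⟩
  have hbdd : BddAbove S := ⟨s, fun u hu => hu.2.1⟩
  set b := sSup S with hb
  have hb0 : 0 ≤ b := le_csSup hbdd h0S
  have hbs : b ≤ s := csSup_le hne fun u hu => hu.2.1
  have hcont : ContinuousOn F (Ioo 0 b) := by
    intro u hu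
    obtain ⟨u', hu'S, huu'⟩ := exists_lt_of_lt_csSup hne hu.2
    have hii : IntervalIntegrable q volume 0 u' := hu'S.2.2
    have hco : ContinuousOn F (uIcc 0 u') :=
      intervalIntegral.continuousOn_primitive_interval' hii left_mem_uIcc
    rw [uIcc_of_le hu'S.1] at hco
    exact (hco.continuousAt (Icc_mem_nhds hu.1 huu')).continuousWithinAt
  have hzero : ∀ u, b < u → u ≤ s → F u = 0 := by
    intro u hbu hus
    apply intervalIntegral.integral_undef
    intro hii
    exact absurd (le_csSup hbdd ⟨le_of_lt (lt_of_le_of_lt hb0 hbu), hus, hii⟩) (not_le.2 hbu)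
  have h1 : AEStronglyMeasurable F (volume.restrict (Ioo 0 b)) :=
    hcont.aestronglyMeasurable measurableSet_Ioo
  have h2 : AEStronglyMeasurable F (volume.restrict (Icc b s)) := by
    have hbnull : volume.restrict (Icc b s) {b} = 0 := by
      rw [Measure.restrict_apply (measurableSet_singleton b)]
      exact measure_mono_null inter_subset_left (measure_singleton b)
    have hb_ae : ∀ᵐ u ∂volume.restrict (Icc b s), u ≠ b := by
      have hset : {u : ℝ | ¬ u ≠ b} = {b} := by ext u; simp
      rw [ae_iff, hset]; exact hbnull
    have hae : F =ᵐ[volume.restrict (Icc b s)] fun _ => 0 := by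
      filter_upwards [hb_ae, ae_restrict_mem measurableSet_Icc] with u hneb hu
      exact hzero u (lt_of_le_of_ne hu.1 (Ne.symm hneb)) hu.2
    exact aestronglyMeasurable_const.congr hae.symm
  have hsub : Ioc 0 s ⊆ Ioo 0 b ∪ Icc b s := by
    intro u hu
    by_cases h : u < b
    · exact Or.inl ⟨hu.1, h⟩
    · exact Or.inr ⟨not_lt.1 h, hu.2⟩
  have h3 : AEStronglyMeasurable F (volume.restrict (Ioo 0 b ∪ Icc b s)) :=
    aestronglyMeasurable_union_iff.2 ⟨h1, h2⟩
  exact h3.mono_measure (Measure.restrict_mono hsub le_rfl)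

lemma line_aesm (hB : Bhyp B) {f : ℝ → ℝ} {φ : ℝ → ℝ → ℝ} (hφ : IsMildSol B f φ)
    {a : ℝ} (ha : 0 < a) {s : ℝ} (hs : 0 ≤ s) :
    AEStronglyMeasurable (fun u => φ u (a * exp (-u))) (volume.restrict (Ioc 0 s)) := by
  have hgood : AEStronglyMeasurable
      (fun u => exp (-H B a u) * (f a + 2 * ∫ v in (0:ℝ)..u, RR B φ a v))
      (volume.restrict (Ioc 0 s)) := by
    refine (Continuous.aestronglyMeasurable ?_).mul
      (aestronglyMeasurable_const.add ((prim_aesm (RR B φ a) hs).const_mul 2))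
    exact Real.continuous_exp.comp (H_cont hB ha).neg
  refine hgood.congr ?_
  filter_upwards [ae_restrict_mem measurableSet_Ioc] with u hu
  exact (star hB hφ ha (le_of_lt hu.1)).symm


lemma exp_neg_le_one {u : ℝ} (hu : 0 ≤ u) : exp (-u) ≤ 1 := by
  rw [← Real.exp_zero]
  exact Real.exp_le_exp.2 (by linarith)

lemma RR_II (hB : Bhyp B) {f : ℝ → ℝ} {φ : ℝ → ℝ → ℝ} (hφ : IsMildSol B f φ)
    (hloc : LocBdd2 φ) {a : ℝ} (ha : 0 < a) {s : ℝ} (hs : 0 ≤ s) :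
    IntervalIntegrable (RR B φ a) volume 0 s := by
  rw [intervalIntegrable_iff_integrableOn_Ioc_of_le hs]
  have hline := line_aesm hB hφ (half_pos ha) hs
  have hc : Continuous fun u => B (a * exp (-u)) * exp (H B a u) :=
    (contQ hB ha).mul (Real.continuous_exp.comp (H_cont hB ha))
  have hmeas : AEStronglyMeasurable (RR B φ a) (volume.restrict (Ioc 0 s)) := by
    have h := hc.aestronglyMeasurable.mul hline
    refine h.congr (Filter.Eventually.of_forall fun u => ?_)
    simp only [Pi.mul_apply, RR]
  refine ⟨hmeas, ?_⟩
  obtain ⟨M, hM0, hM⟩ := Bbound hB a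
  obtain ⟨U, hU⟩ := hloc (max s a) (lt_of_lt_of_le ha (le_max_right s a))
  haveI : IsFiniteMeasure (volume.restrict (Ioc (0:ℝ) s)) :=
    ⟨by rw [Measure.restrict_apply_univ]; exact measure_Ioc_lt_top⟩
  apply HasFiniteIntegral.of_bounded (C := M * exp (H B a s) * |U|)
  filter_upwards [ae_restrict_mem measurableSet_Ioc] with u hu
  have hu0 : (0:ℝ) ≤ u := hu.1.le
  have hB0 : 0 ≤ B (a * exp (-u)) := Bnonneg hB (by positivity)
  have hBle : B (a * exp (-u)) ≤ M := by
    refine hM _ (by positivity) ?_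
    calc a * exp (-u) ≤ a * 1 :=
          mul_le_mul_of_nonneg_left (exp_neg_le_one hu0) ha.le
      _ = a := mul_one a
  have hHle : exp (H B a u) ≤ exp (H B a s) := Real.exp_le_exp.2 (H_mono hB ha hu.2)
  have hφle : |φ u (a / 2 * exp (-u))| ≤ |U| := by
    refine le_trans (hU u _ hu0 (le_trans hu.2 (le_max_left s a)) (by positivity) ?_) (le_abs_self U)
    calc a / 2 * exp (-u) ≤ a / 2 * 1 := mul_le_mul_of_nonneg_left (exp_neg_le_one hu0) (by positivity)
      _ ≤ a := by linarith
      _ ≤ max s a := le_max_right s a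
  have : ‖RR B φ a u‖ = B (a * exp (-u)) * exp (H B a u) * |φ u (a / 2 * exp (-u))| := by
    rw [Real.norm_eq_abs, RR, abs_mul, abs_mul, abs_of_nonneg hB0, abs_of_nonneg (Real.exp_pos _).le]
  rw [this]
  have h1 : B (a * exp (-u)) * exp (H B a u) ≤ M * exp (H B a s) :=
    mul_le_mul hBle hHle (Real.exp_pos _).le hM0
  exact mul_le_mul h1 hφle (abs_nonneg _) (by positivity)

lemma key (hB : Bhyp B) (W : ℝ → ℝ → ℝ) (f₀ : ℝ → ℝ) (C : ℝ) (hC0 : 0 ≤ C)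
    (hC : ∀ a, 0 < a → |f₀ a| ≤ C * a)
    (hloc : ∀ K, 0 < K → ∀ T, 0 ≤ T → ∃ U, 0 ≤ U ∧
      ∀ a s, 0 < a → a ≤ K → 0 ≤ s → s ≤ T → |W a s| ≤ U)
    (hii : ∀ a, 0 < a → ∀ s, 0 ≤ s →
      IntervalIntegrable (fun u => B (a * exp (-u)) * exp (H B a u) * W (a / 2) u) volume 0 s)
    (heq : ∀ a, 0 < a → ∀ s, 0 ≤ s →
      W a s = exp (-H B a s) * (f₀ a
        + 2 * ∫ u in (0:ℝ)..s, B (a * exp (-u)) * exp (H B a u) * W (a / 2) u)) :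
    ∀ a, 0 < a → ∀ s, 0 ≤ s → |W a s| ≤ C * a := by
  intro a₀ ha₀ s₀ hs₀
  obtain ⟨U, hU0, hU⟩ := hloc a₀ ha₀ s₀ hs₀
  obtain ⟨M, hM0, hM⟩ := Bbound hB a₀
  have main : ∀ n : ℕ, ∀ a s, 0 < a → a ≤ a₀ → 0 ≤ s → s ≤ s₀ →
      |W a s| ≤ C * a + U * (2 * M) ^ n * s ^ n / (n.factorial : ℝ) := by
    intro n
    induction n with
    | zero =>
      intro a s ha haK hs hsT
      have := hU a s ha haK hs hsT
      simp only [pow_zero, Nat.factorial_zero, Nat.cast_one, mul_one, div_one]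
      nlinarith
    | succ n ih =>
      intro a s ha haK hs hsT
      have hq := contQ hB ha
      have hqe : Continuous fun u => B (a * exp (-u)) * exp (H B a u) :=
        hq.mul (Real.continuous_exp.comp (H_cont hB ha))
      set g : ℝ → ℝ := fun u => B (a * exp (-u)) * exp (H B a u) * W (a / 2) u with hg
      set K2 : ℝ := M * exp (H B a s) * (U * (2 * M) ^ n / (n.factorial : ℝ)) with hK2
      set D : ℝ → ℝ := fun u => (C * (a / 2)) * (B (a * exp (-u)) * exp (H B a u))
        + K2 * u ^ n with hD
      have hgii : IntervalIntegrable g volume 0 s := hii a ha s hs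
      have hD1ii : IntervalIntegrable
          (fun u => (C * (a / 2)) * (B (a * exp (-u)) * exp (H B a u))) volume 0 s :=
        (continuous_const.mul hqe).intervalIntegrable _ _
      have hD2ii : IntervalIntegrable (fun u => K2 * u ^ n) volume 0 s :=
        (continuous_const.mul (continuous_pow n)).intervalIntegrable _ _
      have hDii : IntervalIntegrable D volume 0 s := hD1ii.add hD2ii
      have hK20 : 0 ≤ K2 := by
        have := (Real.exp_pos (H B a s)).le
        have : (0:ℝ) ≤ (n.factorial : ℝ) := Nat.cast_nonneg _
        positivity
      have hptw : ∀ u ∈ Icc (0:ℝ) s, |g u| ≤ D u := by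
        intro u hu
        have hu0 : (0:ℝ) ≤ u := hu.1
        have hB0 : 0 ≤ B (a * exp (-u)) := Bnonneg hB (by positivity)
        have hBle : B (a * exp (-u)) ≤ M := by
          refine hM _ (by positivity) ?_
          calc a * exp (-u) ≤ a * 1 := mul_le_mul_of_nonneg_left (exp_neg_le_one hu0) ha.le
            _ = a := mul_one a
            _ ≤ a₀ := haK
        have hHle : exp (H B a u) ≤ exp (H B a s) := Real.exp_le_exp.2 (H_mono hB ha hu.2)
        have hih := ih (a / 2) u (half_pos ha) (le_trans (by linarith) haK) hu0
          (le_trans hu.2 hsT)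
        have hE0 : 0 ≤ U * (2 * M) ^ n * u ^ n / (n.factorial : ℝ) := by positivity
        have habs : |g u| = B (a * exp (-u)) * exp (H B a u) * |W (a / 2) u| := by
          rw [hg, abs_mul, abs_mul, abs_of_nonneg hB0, abs_of_nonneg (Real.exp_pos _).le]
        rw [habs, hD]
        have t1 : B (a * exp (-u)) * exp (H B a u) * |W (a / 2) u|
            ≤ B (a * exp (-u)) * exp (H B a u)
              * (C * (a / 2) + U * (2 * M) ^ n * u ^ n / (n.factorial : ℝ)) :=
          mul_le_mul_of_nonneg_left hih (by positivity)
        have t2 : B (a * exp (-u)) * exp (H B a u)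
              * (U * (2 * M) ^ n * u ^ n / (n.factorial : ℝ))
            ≤ M * exp (H B a s) * (U * (2 * M) ^ n * u ^ n / (n.factorial : ℝ)) :=
          mul_le_mul_of_nonneg_right (mul_le_mul hBle hHle (Real.exp_pos _).le hM0) hE0
        have hK2u : K2 * u ^ n = M * exp (H B a s) * (U * (2 * M) ^ n * u ^ n / (n.factorial : ℝ)) := by
          rw [hK2]; ring
        nlinarith [t1, t2]
      have h1 : |∫ u in (0:ℝ)..s, g u| ≤ ∫ u in (0:ℝ)..s, D u := by
        calc |∫ u in (0:ℝ)..s, g u| ≤ ∫ u in (0:ℝ)..s, |g u| :=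
              intervalIntegral.abs_integral_le_integral_abs hs
          _ ≤ ∫ u in (0:ℝ)..s, D u :=
              intervalIntegral.integral_mono_on hs hgii.abs hDii hptw
      have hDval : (∫ u in (0:ℝ)..s, D u)
          = (C * (a / 2)) * (exp (H B a s) - 1) + K2 * (s ^ (n + 1) / (n + 1)) := by
        rw [hD, intervalIntegral.integral_add hD1ii hD2ii,
          intervalIntegral.integral_const_mul, intervalIntegral.integral_const_mul,
          FTC_exp hB ha s, integral_pow]
        norm_num
      have heqW := heq a ha s hs
      have hWabs : |W a s| ≤ exp (-H B a s) * (C * a + 2 * ∫ u in (0:ℝ)..s, D u) := by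
        rw [heqW, abs_mul, abs_of_nonneg (Real.exp_pos _).le]
        refine mul_le_mul_of_nonneg_left ?_ (Real.exp_pos _).le
        calc |f₀ a + 2 * ∫ u in (0:ℝ)..s, g u|
            ≤ |f₀ a| + 2 * |∫ u in (0:ℝ)..s, g u| := by
              refine le_trans (abs_add_le _ _) ?_
              rw [abs_mul, abs_two]
          _ ≤ C * a + 2 * ∫ u in (0:ℝ)..s, D u := by
              have := hC a ha
              linarith
      have hfin : exp (-H B a s) * (C * a + 2 * ∫ u in (0:ℝ)..s, D u)
          = C * a + U * (2 * M) ^ (n + 1) * s ^ (n + 1) / ((n + 1).factorial : ℝ) := by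
        rw [hDval, hK2, Real.exp_neg, Nat.factorial_succ]
        have hX : Real.exp (H B a s) ≠ 0 := Real.exp_ne_zero _
        have hfact : ((n.factorial : ℝ)) ≠ 0 := Nat.cast_ne_zero.2 n.factorial_ne_zero
        have hn1 : ((n:ℝ) + 1) ≠ 0 := by positivity
        push_cast
        field_simp
        ring
      rw [hfin] at hWabs
      exact hWabs
  have hbase := fun n => main n a₀ s₀ ha₀ le_rfl hs₀ le_rfl
  have hlim : Tendsto (fun n : ℕ => C * a₀ + U * (2 * M) ^ n * s₀ ^ n / (n.factorial : ℝ))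
      atTop (𝓝 (C * a₀)) := by
    have h := FloorSemiring.tendsto_pow_div_factorial_atTop (K := ℝ) (2 * M * s₀)
    have h2 := h.const_mul U
    rw [mul_zero] at h2
    have h3 : Tendsto (fun n : ℕ => U * (2 * M) ^ n * s₀ ^ n / (n.factorial : ℝ)) atTop (𝓝 0) := by
      refine h2.congr fun n => ?_
      rw [mul_pow]; ring
    have h4 := Tendsto.const_add (C * a₀) h3
    rwa [add_zero] at h4
  exact ge_of_tendsto hlim (Filter.Eventually.of_forall hbase)


lemma const_star (hB : Bhyp B) {a : ℝ} (ha : 0 < a) {s : ℝ} (hs : 0 ≤ s) :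
    (a : ℝ) = exp (-H B a s)
      * (a + 2 * ∫ u in (0:ℝ)..s, B (a * exp (-u)) * exp (H B a u) * (a / 2)) := by
  have h0 : ∀ u : ℝ, B (a * exp (-u)) * exp (H B a u) * (a / 2)
      = (a / 2) * (B (a * exp (-u)) * exp (H B a u)) := fun u => by ring
  have h1 : (∫ u in (0:ℝ)..s, B (a * exp (-u)) * exp (H B a u) * (a / 2))
      = (a / 2) * (exp (H B a s) - 1) := by
    simp only [h0]
    rw [intervalIntegral.integral_const_mul, FTC_exp hB ha s]
  rw [h1, Real.exp_neg]
  have hX : Real.exp (H B a s) ≠ 0 := Real.exp_ne_zero _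
  field_simp
  ring

lemma line_eq (hB : Bhyp B) (ψ : ℝ → ℝ → ℝ) (hψl : LocBdd2 ψ)
    (hψ : IsMildSol B (fun x => x) ψ) :
    ∀ a, 0 < a → ∀ s, 0 ≤ s → ψ s (a * exp (-s)) = a := by
  have hkey := key hB (fun a s => ψ s (a * exp (-s)) - a) (fun _ => 0) 0 le_rfl
    (fun a ha => by simp)
    (by
      intro K hK T hT
      obtain ⟨Cψ, hCψ⟩ := hψl (max T K) (lt_of_lt_of_le hK (le_max_right T K))
      refine ⟨max Cψ 0 + K, by positivity, fun a s ha haK hs hsT => ?_⟩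
      have hx : 0 < a * exp (-s) := by positivity
      have hxle : a * exp (-s) ≤ max T K := by
        calc a * exp (-s) ≤ a * 1 := mul_le_mul_of_nonneg_left (exp_neg_le_one hs) ha.le
          _ = a := mul_one a
          _ ≤ K := haK
          _ ≤ max T K := le_max_right T K
      have hb := hCψ s (a * exp (-s)) hs (le_trans hsT (le_max_left T K)) hx hxle
      calc |ψ s (a * exp (-s)) - a| ≤ |ψ s (a * exp (-s))| + |a| := abs_sub _ _
        _ ≤ max Cψ 0 + K := add_le_add (le_trans hb (le_max_left _ _))
            (by rw [abs_of_pos ha]; exact haK))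
    (by
      intro a ha s hs
      have h1 := RR_II hB hψ hψl ha hs
      have h2 : IntervalIntegrable
          (fun u => B (a * exp (-u)) * exp (H B a u) * (a / 2)) volume 0 s :=
        (((contQ hB ha).mul (Real.continuous_exp.comp (H_cont hB ha))).mul
          continuous_const).intervalIntegrable _ _
      have h3 := h1.sub h2
      refine IntervalIntegrable.congr_ae h3 (Filter.EventuallyEq.of_eq (funext fun u => ?_))
      simp only [RR]
      ring)
    (by
      intro a ha s hs
      have h1 := star hB hψ ha hs
      have h2 := const_star hB ha hs
      have hii1 := RR_II hB hψ hψl ha hs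
      have hii2 : IntervalIntegrable
          (fun u => B (a * exp (-u)) * exp (H B a u) * (a / 2)) volume 0 s :=
        (((contQ hB ha).mul (Real.continuous_exp.comp (H_cont hB ha))).mul
          continuous_const).intervalIntegrable _ _
      have h3 : (∫ u in (0:ℝ)..s, B (a * exp (-u)) * exp (H B a u)
            * (ψ u (a / 2 * exp (-u)) - a / 2))
          = (∫ u in (0:ℝ)..s, RR B ψ a u)
            - ∫ u in (0:ℝ)..s, B (a * exp (-u)) * exp (H B a u) * (a / 2) := by
        rw [← intervalIntegral.integral_sub hii1 hii2]
        apply intervalIntegral.integral_congr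
        intro u _
        simp only [RR]
        ring
      simp only [h3]
      calc ψ s (a * exp (-s)) - a
          = exp (-H B a s) * (a + 2 * ∫ u in (0:ℝ)..s, RR B ψ a u)
            - exp (-H B a s) * (a + 2 * ∫ u in (0:ℝ)..s,
                B (a * exp (-u)) * exp (H B a u) * (a / 2)) := by rw [← h1, ← h2]
        _ = exp (-H B a s) * (0 + 2 * ((∫ u in (0:ℝ)..s, RR B ψ a u)
              - ∫ u in (0:ℝ)..s, B (a * exp (-u)) * exp (H B a u) * (a / 2))) := by ring)
  intro a ha s hs
  have h := hkey a ha s hs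
  simp only [zero_mul] at h
  have := abs_nonpos_iff.1 h
  linarith [sub_eq_zero.1 this]


lemma line_le (hB : Bhyp B) (f : ℝ → ℝ) (C : ℝ) (hf : ∀ x > 0, |f x| ≤ C * x)
    (φ : ℝ → ℝ → ℝ) (hφl : LocBdd2 φ) (hφ : IsMildSol B f φ) :
    ∀ a, 0 < a → ∀ s, 0 ≤ s → |φ s (a * exp (-s))| ≤ C * a := by
  have hC0 : 0 ≤ C := by
    have h1 := hf 1 one_pos
    have h2 := abs_nonneg (f 1)
    linarith
  exact key hB (fun a s => φ s (a * exp (-s))) f C hC0 (fun a ha => hf a ha)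
    (by
      intro K hK T hT
      obtain ⟨Cφ, hCφ⟩ := hφl (max T K) (lt_of_lt_of_le hK (le_max_right T K))
      refine ⟨max Cφ 0, le_max_right _ _, fun a s ha haK hs hsT => ?_⟩
      have hx : 0 < a * exp (-s) := by positivity
      have hxle : a * exp (-s) ≤ max T K := by
        calc a * exp (-s) ≤ a * 1 := mul_le_mul_of_nonneg_left (exp_neg_le_one hs) ha.le
          _ = a := mul_one a
          _ ≤ K := haK
          _ ≤ max T K := le_max_right T K
      exact le_trans (hCφ s (a * exp (-s)) hs (le_trans hsT (le_max_left T K)) hx hxle)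
        (le_max_left _ _))
    (fun a ha s hs => RR_II hB hφ hφl ha hs)
    (fun a ha s hs => star hB hφ ha hs)

end Stmt4Aux


open Stmt4Aux

/-- The function `(t,x) ↦ x eᵗ` is the unique locally bounded mild solution with initial datum
`f(x) = x`; consequently `‖M_t f‖_Ḃ ≤ eᵗ ‖f‖_Ḃ`, i.e. `|M_t f(x)| ≤ eᵗ x ‖f‖_Ḃ` for `x > 0`. -/
theorem stmt4 (B : ℝ → ℝ) (hB : Bhyp B) :
    (LocBdd2 (fun t x => x * exp t) ∧ IsMildSol B (fun x => x) (fun t x => x * exp t)) ∧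
    (∀ ψ : ℝ → ℝ → ℝ, LocBdd2 ψ → IsMildSol B (fun x => x) ψ →
      ∀ t ≥ 0, ∀ x > 0, ψ t x = x * exp t) ∧
    (∀ f : ℝ → ℝ, ∀ C : ℝ, (∀ x > 0, |f x| ≤ C * x) →
      ∀ φ : ℝ → ℝ → ℝ, LocBdd2 φ → IsMildSol B f φ →
        ∀ t ≥ 0, ∀ x > 0, |φ t x| ≤ exp t * C * x) := by
  have hxarg : ∀ x t : ℝ, x * exp t * exp (-t) = x := by
    intro x t; rw [mul_assoc, ← Real.exp_add]; simp
  refine ⟨⟨?_, ?_⟩, ?_, ?_⟩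
  · -- LocBdd2
    intro r hr
    refine ⟨r * exp r, fun t x ht htr hx hxr => ?_⟩
    rw [abs_of_pos (by positivity)]
    exact mul_le_mul hxr (Real.exp_le_exp.2 htr) (Real.exp_pos _).le hr.le
  · -- IsMildSol for (t,x) ↦ x e^t
    intro t ht x hx
    simp only
    have hFTC := FTC_G hB hx t
    have hcongr : (∫ τ in (0:ℝ)..t, B (x * exp τ)
          * Real.exp (-∫ s in (0:ℝ)..τ, B (x * exp s)) * (x * exp τ / 2 * exp (t - τ)))
        = (x * exp t / 2) * ∫ τ in (0:ℝ)..t, B (x * exp τ)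
            * Real.exp (-∫ s in (0:ℝ)..τ, B (x * exp s)) := by
      rw [← intervalIntegral.integral_const_mul]
      apply intervalIntegral.integral_congr
      intro τ _
      beta_reduce
      have hτ : exp τ * exp (t - τ) = exp t := by rw [← Real.exp_add]; ring_nf
      rw [show x * exp τ / 2 * exp (t - τ) = x * (exp τ * exp (t - τ)) / 2 from by ring, hτ]
      ring
    rw [hcongr, hFTC]
    ring
  · -- uniqueness
    intro ψ hψl hψ t ht x hx
    have h := line_eq hB ψ hψl hψ (x * exp t) (by positivity) t ht
    rwa [hxarg x t] at h
  · -- comparison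
    intro f C hf φ hφl hφ t ht x hx
    have h := line_le hB f C hf φ hφl hφ (x * exp t) (by positivity) t ht
    rw [hxarg x t] at h
    calc |φ t x| ≤ C * (x * exp t) := h
      _ = exp t * C * x := by ring
end
end

section
/- Assume B : (0,∞) → [0,∞) is continuous and bounded on some neighborhood of 0. Let f : (0,∞) → ℝ be locally bounded and let (f_n)_{n∈ℕ} be an increasing sequence of locally bounded functions converging pointwise to f on (0,∞). Then for all t ≥ 0 and all x > 0, M_t f(x) = lim_{n→∞} M_t f_n(x). -/
open MeasureTheory Real Set Filter Topology

noncomputable section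

namespace Mito

def lev (c0 : ℝ) (k : ℕ) : ℝ := c0 / 2 ^ k

lemma lev_pos {c0 : ℝ} (hc0 : 0 < c0) (k : ℕ) : 0 < lev c0 k :=
  div_pos hc0 (by positivity)

lemma lev_le {c0 : ℝ} (hc0 : 0 < c0) (k : ℕ) : lev c0 k ≤ c0 := by
  rw [lev, div_le_iff₀ (by positivity : (0:ℝ) < 2 ^ k)]
  nlinarith [one_le_pow₀ (a := (2:ℝ)) (n := k) one_le_two, hc0]

lemma lev_succ (c0 : ℝ) (k : ℕ) : lev c0 (k + 1) = lev c0 k / 2 := by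
  rw [lev, lev, pow_succ, div_div]

/-- existence of a bound for `B` on `(0, c0]`. -/
lemma exists_K {B : ℝ → ℝ} (hB : Bhyp B) {c0 : ℝ} (hc0 : 0 < c0) :
    ∃ K, 0 ≤ K ∧ ∀ y, 0 < y → y ≤ c0 → B y ≤ K := by
  obtain ⟨hBc, hBnn, ε, hε, C1, hC1⟩ := hB
  set ε' := min ε c0 with hε'
  have hε'0 : 0 < ε' := lt_min hε hc0
  have hsub : Icc ε' c0 ⊆ Ioi 0 := fun y hy => lt_of_lt_of_le hε'0 hy.1
  obtain ⟨C2, hC2⟩ : ∃ C2, ∀ y ∈ Icc ε' c0, B y ≤ C2 := by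
    obtain ⟨C2, hC2⟩ := (isCompact_Icc (a := ε') (b := c0)).exists_bound_of_continuousOn
      (hBc.mono hsub)
    exact ⟨C2, fun y hy => (le_abs_self _).trans (by simpa using hC2 y hy)⟩
  refine ⟨max 0 (max C1 C2), le_max_left _ _, fun y hy hyc => ?_⟩
  rcases lt_or_ge y ε with h | h
  · exact le_trans (hC1 y hy h) (le_trans (le_max_left _ _) (le_max_right _ _))
  · exact le_trans (hC2 y ⟨le_trans (min_le_left _ _) h, hyc⟩)
      (le_trans (le_max_right _ _) (le_max_right _ _))

variable {B : ℝ → ℝ} {c0 : ℝ}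

def bfun (B : ℝ → ℝ) (c0 : ℝ) (k : ℕ) (u : ℝ) : ℝ := B (lev c0 k * Real.exp (-u))

def Afun (B : ℝ → ℝ) (c0 : ℝ) (k : ℕ) (s : ℝ) : ℝ := ∫ u in (0:ℝ)..s, bfun B c0 k u

def rho (B : ℝ → ℝ) (c0 : ℝ) (k : ℕ) (u : ℝ) : ℝ :=
  bfun B c0 k u * Real.exp (Afun B c0 k u - Afun B c0 (k + 1) u)

def Wfun (B : ℝ → ℝ) (c0 : ℝ) (φ : ℝ → ℝ → ℝ) (k : ℕ) (s : ℝ) : ℝ :=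
  Real.exp (Afun B c0 k s) * φ s (lev c0 k * Real.exp (-s))

lemma bfun_cont (hB : Bhyp B) (hc0 : 0 < c0) (k : ℕ) : Continuous (bfun B c0 k) := by
  refine hB.1.comp_continuous (by continuity) (fun u => ?_)
  exact mem_Ioi.mpr (by have := lev_pos hc0 k; positivity)

lemma bfun_nonneg (hB : Bhyp B) (hc0 : 0 < c0) (k : ℕ) (u : ℝ) : 0 ≤ bfun B c0 k u :=
  hB.2.1 _ (by have := lev_pos hc0 k; positivity)

lemma bfun_le (hc0 : 0 < c0) {K : ℝ} (hK : ∀ y, 0 < y → y ≤ c0 → B y ≤ K) (k : ℕ)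
    {u : ℝ} (hu : 0 ≤ u) : bfun B c0 k u ≤ K := by
  refine hK _ (by have := lev_pos hc0 k; positivity) ?_
  calc lev c0 k * Real.exp (-u) ≤ lev c0 k * 1 := by
        refine mul_le_mul_of_nonneg_left ?_ (lev_pos hc0 k).le
        simpa using Real.exp_le_one_iff.mpr (neg_nonpos.mpr hu)
    _ = lev c0 k := mul_one _
    _ ≤ c0 := lev_le hc0 k

lemma bfun_intInt (hB : Bhyp B) (hc0 : 0 < c0) (k : ℕ) (a b : ℝ) :
    IntervalIntegrable (bfun B c0 k) volume a b :=
  (bfun_cont hB hc0 k).intervalIntegrable a b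

lemma Afun_cont (hB : Bhyp B) (hc0 : 0 < c0) (k : ℕ) : Continuous (Afun B c0 k) :=
  intervalIntegral.continuous_primitive (fun a b => bfun_intInt hB hc0 k a b) 0

lemma Afun_nonneg (hB : Bhyp B) (hc0 : 0 < c0) (k : ℕ) {s : ℝ} (hs : 0 ≤ s) :
    0 ≤ Afun B c0 k s :=
  intervalIntegral.integral_nonneg hs (fun u _ => bfun_nonneg hB hc0 k u)

lemma Afun_le (hB : Bhyp B) (hc0 : 0 < c0) {K : ℝ} (hK : ∀ y, 0 < y → y ≤ c0 → B y ≤ K)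
    (k : ℕ) {s : ℝ} (hs : 0 ≤ s) : Afun B c0 k s ≤ K * s := by
  have : Afun B c0 k s ≤ ∫ _ in (0:ℝ)..s, K := by
    refine intervalIntegral.integral_mono_on hs (bfun_intInt hB hc0 k 0 s)
      (intervalIntegrable_const) (fun u hu => bfun_le hc0 hK k hu.1)
  simpa [mul_comm] using this

lemma rho_cont (hB : Bhyp B) (hc0 : 0 < c0) (k : ℕ) : Continuous (rho B c0 k) :=
  (bfun_cont hB hc0 k).mul (((Afun_cont hB hc0 k).sub (Afun_cont hB hc0 (k+1))).rexp)

lemma rho_nonneg (hB : Bhyp B) (hc0 : 0 < c0) (k : ℕ) (u : ℝ) : 0 ≤ rho B c0 k u :=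
  mul_nonneg (bfun_nonneg hB hc0 k u) (Real.exp_nonneg _)

lemma rho_le (hB : Bhyp B) (hc0 : 0 < c0) {K : ℝ} (hK : ∀ y, 0 < y → y ≤ c0 → B y ≤ K)
    (hK0 : 0 ≤ K) (k : ℕ) {T u : ℝ} (hu : 0 ≤ u) (huT : u ≤ T) :
    rho B c0 k u ≤ K * Real.exp (K * T) := by
  refine mul_le_mul (bfun_le hc0 hK k hu) ?_ (Real.exp_nonneg _) hK0
  refine Real.exp_le_exp.mpr ?_
  have h1 := Afun_le hB hc0 hK k hu
  have h2 := Afun_nonneg hB hc0 (k+1) hu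
  nlinarith

lemma star (hB : Bhyp B) (hc0 : 0 < c0) {h : ℝ → ℝ} {φ : ℝ → ℝ → ℝ}
    (hsol : IsMildSol B h φ) (k : ℕ) {s : ℝ} (hs : 0 ≤ s) :
    Wfun B c0 φ k s = h (lev c0 k) +
      2 * ∫ u in (0:ℝ)..s, rho B c0 k u * Wfun B c0 φ (k + 1) u := by
  have hlev := lev_pos hc0 k
  have hxpos : 0 < lev c0 k * Real.exp (-s) := by positivity
  have E := hsol s hs _ hxpos
  have hid1 : lev c0 k * Real.exp (-s) * Real.exp s = lev c0 k := by
    rw [mul_assoc, ← Real.exp_add]; simp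
  have hBarg : ∀ σ : ℝ, lev c0 k * Real.exp (-s) * Real.exp σ
      = lev c0 k * Real.exp (-(s - σ)) := by
    intro σ; rw [mul_assoc, ← Real.exp_add]; ring_nf
  have hinner : ∀ τ : ℝ, (∫ σ in (0:ℝ)..τ, B (lev c0 k * Real.exp (-s) * Real.exp σ))
      = Afun B c0 k s - Afun B c0 k (s - τ) := by
    intro τ
    have h1 : (fun σ => B (lev c0 k * Real.exp (-s) * Real.exp σ))
        = fun σ => bfun B c0 k (s - σ) := by
      funext σ; rw [bfun, hBarg σ]
    rw [h1, intervalIntegral.integral_comp_sub_left (bfun B c0 k) s, sub_zero,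
      ← intervalIntegral.integral_interval_sub_left (bfun_intInt hB hc0 k 0 s)
        (bfun_intInt hB hc0 k 0 (s - τ))]
    rfl
  have htop : (∫ σ in (0:ℝ)..s, B (lev c0 k * Real.exp (-s) * Real.exp σ))
      = Afun B c0 k s := by
    rw [hinner s, sub_self]
    simp [Afun]
  have hphiarg : ∀ τ : ℝ, lev c0 k * Real.exp (-s) * Real.exp τ / 2
      = lev c0 (k + 1) * Real.exp (-(s - τ)) := by
    intro τ; rw [lev_succ, hBarg τ]; ring
  set g : ℝ → ℝ := fun u => rho B c0 k u * Wfun B c0 φ (k + 1) u with hg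
  have hgint : ∀ τ : ℝ, B (lev c0 k * Real.exp (-s) * Real.exp τ) *
      Real.exp (-∫ σ in (0:ℝ)..τ, B (lev c0 k * Real.exp (-s) * Real.exp σ)) *
      φ (s - τ) (lev c0 k * Real.exp (-s) * Real.exp τ / 2)
      = Real.exp (-(Afun B c0 k s)) * g (s - τ) := by
    intro τ
    rw [hinner τ, hphiarg τ, hBarg τ]
    simp only [hg, rho, Wfun, bfun, Real.exp_sub, Real.exp_neg]
    field_simp
  rw [hid1, htop] at E
  simp only [hgint] at E
  rw [intervalIntegral.integral_const_mul, intervalIntegral.integral_comp_sub_left g s,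
    sub_self, sub_zero] at E
  rw [Wfun, E, Real.exp_neg]
  field_simp

/-- Integrability of the kernel integrand, extracted from the fixed-point equation itself. -/
lemma lemA (ρ W : ℕ → ℝ → ℝ) (dat : ℕ → ℝ) (T M Cw : ℝ)
    (hρc : ∀ k, Continuous (ρ k))
    (hρb : ∀ k u, 0 ≤ u → u ≤ T → |ρ k u| ≤ M)
    (hWb : ∀ k s, 0 ≤ s → s ≤ T → |W k s| ≤ Cw)
    (heq : ∀ k s, 0 ≤ s → W k s = dat k + 2 * ∫ u in (0:ℝ)..s, ρ k u * W (k + 1) u) :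
    ∀ k s, 0 ≤ s → s ≤ T → IntervalIntegrable (fun u => ρ k u * W (k + 1) u) volume 0 s := by
  intro k s hs hsT
  set F : ℝ → ℝ := fun u => ρ (k + 1) u * W (k + 2) u with hF
  set G : ℝ → ℝ := fun v => ∫ u in (0:ℝ)..v, F u with hG
  set S : Set ℝ := {v | v ∈ Icc 0 T ∧ IntervalIntegrable F volume 0 v} with hS
  have hmemS : ∀ v ∈ S, ∀ z, 0 ≤ z → z ≤ v → z ∈ S := by
    intro v hv z hz hzv
    refine ⟨⟨hz, hzv.trans hv.1.2⟩, hv.2.mono_set ?_⟩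
    rw [uIcc_of_le hz, uIcc_of_le (hz.trans hzv)]
    exact Icc_subset_Icc_right hzv
  have hSconn : OrdConnected S := by
    refine ⟨fun v hv w hw z hz => hmemS w hw z (hv.1.1.trans hz.1) hz.2⟩
  have hSmeas : MeasurableSet S := hSconn.measurableSet
  -- `G` is Lipschitz on `S`
  have hFes : ∀ u, 0 ≤ u → u ≤ T → |F u| ≤ M * Cw := by
    intro u hu huT
    rw [hF, abs_mul]
    exact mul_le_mul (hρb (k+1) u hu huT) (hWb (k+2) u hu huT) (abs_nonneg _)
      ((abs_nonneg _).trans (hρb (k+1) u hu huT))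
  have hGcont : ContinuousOn G S := by
    have : LipschitzOnWith (Real.toNNReal (M * Cw)) G S := by
      refine LipschitzOnWith.of_dist_le_mul (fun u hu v hv => ?_)
      rw [Real.dist_eq, Real.dist_eq, hG]
      have hdiff : (∫ x in (0:ℝ)..u, F x) - ∫ x in (0:ℝ)..v, F x = ∫ x in v..u, F x :=
        intervalIntegral.integral_interval_sub_left hu.2 hv.2
      rw [hdiff]
      have : ‖∫ x in v..u, F x‖ ≤ M * Cw * |u - v| := by
        refine intervalIntegral.norm_integral_le_of_norm_le_const (fun z hz => ?_)
        rw [Set.mem_uIoc] at hz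
        rcases hz with hz | hz
        · exact hFes z (hv.1.1.trans hz.1.le) (hz.2.trans hu.1.2)
        · exact hFes z (hu.1.1.trans hz.1.le) (hz.2.trans hv.1.2)
      refine this.trans (mul_le_mul_of_nonneg_right ?_ (abs_nonneg _))
      exact Real.le_coe_toNNReal _
    exact this.continuousOn
  have hGzero : ∀ v, v ∉ S → v ∈ Icc 0 T → G v = 0 := by
    intro v hv hvT
    exact intervalIntegral.integral_undef (fun hint => hv ⟨hvT, hint⟩)
  have hGind : ∀ v ∈ Icc 0 T, G v = S.indicator G v := by
    intro v hv
    by_cases hvS : v ∈ S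
    · rw [indicator_of_mem hvS]
    · rw [indicator_of_notMem hvS, hGzero v hvS hv]
  have hGmeas : AEMeasurable (S.indicator G) volume :=
    (aemeasurable_indicator_iff hSmeas).mpr (hGcont.aemeasurable hSmeas)
  -- `W (k+1)` is a.e. strongly measurable on `Ioc 0 s`
  have hsub : Ioc (0:ℝ) s ⊆ Icc 0 T := fun z hz => ⟨hz.1.le, hz.2.trans hsT⟩
  have hWmeas : AEStronglyMeasurable (W (k + 1)) (volume.restrict (Ioc 0 s)) := by
    have h1 : AEMeasurable (fun v => dat (k + 1) + 2 * S.indicator G v) volume :=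
      aemeasurable_const.add (hGmeas.const_mul 2)
    refine (h1.restrict.congr ?_).aestronglyMeasurable
    filter_upwards [ae_restrict_mem measurableSet_Ioc] with v hv
    rw [← hGind v (hsub hv), heq (k + 1) v (hsub hv).1]
  have hmeas : AEStronglyMeasurable (fun u => ρ k u * W (k + 1) u)
      (volume.restrict (Ioc 0 s)) :=
    ((hρc k).aestronglyMeasurable.restrict).mul hWmeas
  have hfin : HasFiniteIntegral (fun u => ρ k u * W (k + 1) u)
      (volume.restrict (Ioc 0 s)) := by
    refine HasFiniteIntegral.restrict_of_bounded (C := M * Cw)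
      (by simp [measure_Ioc_lt_top]) ?_
    filter_upwards [ae_restrict_mem measurableSet_Ioc] with u hu
    have hu0 := (hsub hu).1
    have huT := (hsub hu).2
    rw [Real.norm_eq_abs, abs_mul]
    exact mul_le_mul (hρb k u hu0 huT) (hWb (k+1) u hu0 huT) (abs_nonneg _)
      ((abs_nonneg _).trans (hρb k u hu0 huT))
  rw [intervalIntegrable_iff_integrableOn_Ioc_of_le hs]
  exact ⟨hmeas, hfin⟩

lemma int_pow_aux (a : ℝ) (j : ℕ) (s : ℝ) :
    ∫ u in (0:ℝ)..s, a * u ^ j = a * (s ^ (j + 1) / (j + 1)) := by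
  rw [intervalIntegral.integral_const_mul, integral_pow]
  simp

/-- The Gronwall-type iteration. -/
lemma gron (ρ d : ℕ → ℝ → ℝ) (D : ℕ → ℝ) (M C T : ℝ) (hM : 0 ≤ M) (hC : 0 ≤ C)
    (hD : ∀ k, 0 ≤ D k)
    (hρ : ∀ k u, 0 ≤ u → u ≤ T → 0 ≤ ρ k u ∧ ρ k u ≤ M)
    (hbd : ∀ k s, 0 ≤ s → s ≤ T → |d k s| ≤ C)
    (hint : ∀ k s, 0 ≤ s → s ≤ T →
      IntervalIntegrable (fun u => ρ k u * d (k + 1) u) volume 0 s)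
    (hrec : ∀ k s, 0 ≤ s → s ≤ T →
      |d k s| ≤ D k + 2 * |∫ u in (0:ℝ)..s, ρ k u * d (k + 1) u|) :
    ∀ m k s, 0 ≤ s → s ≤ T →
      |d k s| ≤ (∑ j ∈ Finset.range m, D (k + j) * ((2 * M * s) ^ j / (Nat.factorial j)))
        + C * ((2 * M * s) ^ m / (Nat.factorial m)) := by
  intro m
  induction m with
  | zero => intro k s hs hsT; simpa using hbd k s hs hsT
  | succ m IH =>
    intro k s hs hsT
    set g : ℝ → ℝ := fun u =>
      (∑ j ∈ Finset.range m, D (k + 1 + j) * ((2 * M * u) ^ j / (Nat.factorial j)))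
        + C * ((2 * M * u) ^ m / (Nat.factorial m)) with hg
    have h2Mu : Continuous fun u : ℝ => 2 * M * u := continuous_const.mul continuous_id
    have hgcont : Continuous g := by
      refine Continuous.add (continuous_finset_sum _ (fun j _ => ?_)) ?_
      · exact continuous_const.mul ((h2Mu.pow j).div_const _)
      · exact continuous_const.mul ((h2Mu.pow m).div_const _)
    have hgbd : ∀ u, 0 ≤ u → u ≤ s → |d (k + 1) u| ≤ g u := by
      intro u hu hus
      exact IH (k + 1) u hu (hus.trans hsT)
    have key : |∫ u in (0:ℝ)..s, ρ k u * d (k + 1) u|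
        ≤ |∫ u in (0:ℝ)..s, M * g u| := by
      have hnorm := intervalIntegral.norm_integral_le_of_norm_le (μ := volume) (a := 0) (b := s)
        (f := fun u => ρ k u * d (k + 1) u) (g := fun u => M * g u) hs ?_ ?_
      · rw [Real.norm_eq_abs] at hnorm
        exact hnorm.trans (le_abs_self _)
      · refine Eventually.of_forall (fun u hu => ?_)
        have hρu := hρ k u hu.1.le (hu.2.trans hsT)
        rw [Real.norm_eq_abs, abs_mul, abs_of_nonneg hρu.1]
        exact mul_le_mul hρu.2 (hgbd u hu.1.le hu.2) (abs_nonneg _) hM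
      · exact (continuous_const.mul hgcont).intervalIntegrable 0 s
    have hsplit : (fun u => M * g u) = fun u =>
        (∑ j ∈ Finset.range m, (M * D (k + 1 + j) * (2 * M) ^ j / (Nat.factorial j)) * u ^ j)
          + (M * C * (2 * M) ^ m / (Nat.factorial m)) * u ^ m := by
      funext u
      simp only [hg, mul_pow]
      rw [mul_add, Finset.mul_sum]
      congr 1
      · refine Finset.sum_congr rfl (fun j _ => by ring)
      · ring
    have hterm_int : ∀ (c : ℝ) (j : ℕ), IntervalIntegrable (fun u : ℝ => c * u ^ j) volume 0 s :=
      fun c j => (continuous_const.mul (continuous_pow j)).intervalIntegrable 0 s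
    have hval : (∫ u in (0:ℝ)..s, M * g u)
        = (∑ j ∈ Finset.range m,
            (M * D (k + 1 + j) * (2 * M) ^ j / (Nat.factorial j)) * (s ^ (j + 1) / (j + 1)))
          + (M * C * (2 * M) ^ m / (Nat.factorial m)) * (s ^ (m + 1) / (m + 1)) := by
      have hA : IntervalIntegrable
          (fun u : ℝ => ∑ j ∈ Finset.range m,
            (M * D (k + 1 + j) * (2 * M) ^ j / (Nat.factorial j)) * u ^ j) volume 0 s :=
        (continuous_finset_sum _ (fun j _ =>
          continuous_const.mul (continuous_pow j))).intervalIntegrable 0 s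
      rw [hsplit, intervalIntegral.integral_add hA (hterm_int _ m),
        intervalIntegral.integral_finset_sum (fun j _ => hterm_int _ j)]
      congr 1
      · exact Finset.sum_congr rfl (fun j _ => int_pow_aux _ j s)
      · exact int_pow_aux _ m s
    have hVnn : 0 ≤ (∑ j ∈ Finset.range m,
            (M * D (k + 1 + j) * (2 * M) ^ j / (Nat.factorial j)) * (s ^ (j + 1) / (j + 1)))
          + (M * C * (2 * M) ^ m / (Nat.factorial m)) * (s ^ (m + 1) / (m + 1)) := by
      have h1 : ∀ (c : ℝ) (j : ℕ), 0 ≤ c → 0 ≤ (M * c * (2 * M) ^ j / (Nat.factorial j)) *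
          (s ^ (j + 1) / (j + 1)) := by
        intro c j hc
        have : (0:ℝ) < Nat.factorial j := by positivity
        positivity
      exact add_nonneg (Finset.sum_nonneg (fun j _ => h1 _ j (hD _))) (h1 _ m hC)
    have hterm : ∀ j, 2 * ((M * D (k + 1 + j) * (2 * M) ^ j / (Nat.factorial j))
          * (s ^ (j + 1) / (j + 1)))
        = D (k + (j + 1)) * ((2 * M * s) ^ (j + 1) / (Nat.factorial (j + 1))) := by
      intro j
      have hkj : k + 1 + j = k + (j + 1) := by omega
      rw [hkj, Nat.factorial_succ, mul_pow, mul_pow]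
      have h1 : (Nat.factorial j : ℝ) ≠ 0 := Nat.cast_ne_zero.mpr (Nat.factorial_ne_zero j)
      have h2 : ((j : ℝ) + 1) ≠ 0 := by positivity
      push_cast
      field_simp
      ring
    have hlast : 2 * ((M * C * (2 * M) ^ m / (Nat.factorial m)) * (s ^ (m + 1) / (m + 1)))
        = C * ((2 * M * s) ^ (m + 1) / (Nat.factorial (m + 1))) := by
      rw [Nat.factorial_succ, mul_pow, mul_pow]
      have h1 : (Nat.factorial m : ℝ) ≠ 0 := Nat.cast_ne_zero.mpr (Nat.factorial_ne_zero m)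
      have h2 : ((m : ℝ) + 1) ≠ 0 := by positivity
      push_cast
      field_simp
      ring
    calc |d k s| ≤ D k + 2 * |∫ u in (0:ℝ)..s, ρ k u * d (k + 1) u| := hrec k s hs hsT
      _ ≤ D k + 2 * |∫ u in (0:ℝ)..s, M * g u| := by linarith [key]
      _ = D k + 2 * ((∑ j ∈ Finset.range m,
            (M * D (k + 1 + j) * (2 * M) ^ j / (Nat.factorial j)) * (s ^ (j + 1) / (j + 1)))
          + (M * C * (2 * M) ^ m / (Nat.factorial m)) * (s ^ (m + 1) / (m + 1))) := by
          rw [hval, abs_of_nonneg hVnn]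
      _ = (∑ j ∈ Finset.range (m + 1),
            D (k + j) * ((2 * M * s) ^ j / (Nat.factorial j)))
          + C * ((2 * M * s) ^ (m + 1) / (Nat.factorial (m + 1))) := by
          rw [Finset.sum_range_succ']
          rw [mul_add, Finset.mul_sum]
          rw [Finset.sum_congr rfl (fun j _ => hterm j), hlast]
          simp
          ring
    
end Mito

/-- Monotone convergence for the dual semigroup: if an increasing sequence of locally bounded
functions `fₙ` converges pointwise on `(0,∞)` to a locally bounded `f`, then `M_t fₙ(x) → M_t f(x)`
for all `t ≥ 0` and `x > 0`. -/
theorem stmt5 (B : ℝ → ℝ) (hB : Bhyp B)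
    (f : ℝ → ℝ) (hf : LocBddOn f)
    (fn : ℕ → ℝ → ℝ) (hfn : ∀ n, LocBddOn (fn n))
    (hmono : ∀ n, ∀ x > 0, fn n x ≤ fn (n + 1) x)
    (hlim : ∀ x > 0, Tendsto (fun n => fn n x) atTop (nhds (f x)))
    (φ : ℝ → ℝ → ℝ) (hφ : LocBdd2 φ) (hφsol : IsMildSol B f φ)
    (φn : ℕ → ℝ → ℝ → ℝ) (hφn : ∀ n, LocBdd2 (φn n) ∧ IsMildSol B (fn n) (φn n)) :
    ∀ t ≥ 0, ∀ x > 0, Tendsto (fun n => φn n t x) atTop (nhds (φ t x)) := by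
  intro t ht x hx
  classical
  set c0 : ℝ := x * Real.exp t with hc0def
  have hc0 : 0 < c0 := by positivity
  obtain ⟨K, hK0, hK⟩ := Mito.exists_K hB hc0
  set M : ℝ := K * Real.exp (K * t) with hMdef
  have hMnn : 0 ≤ M := by positivity
  set r : ℝ := max t c0 with hrdef
  have hr0 : 0 < r := lt_of_lt_of_le hc0 (le_max_right _ _)
  obtain ⟨Cφ, hCφ⟩ := hφ r hr0
  obtain ⟨Cf, hCf⟩ := hf r hr0
  obtain ⟨Cf0, hCf0⟩ := hfn 0 r hr0
  choose Cn hCn using fun n => (hφn n).1 r hr0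
  set W : ℕ → ℝ → ℝ := Mito.Wfun B c0 φ with hWdef
  set Wn : ℕ → ℕ → ℝ → ℝ := fun n => Mito.Wfun B c0 (φn n) with hWndef
  set ρ : ℕ → ℝ → ℝ := Mito.rho B c0 with hρdef
  set lv : ℕ → ℝ := Mito.lev c0 with hlvdef
  have hlv : ∀ k, 0 < lv k := fun k => Mito.lev_pos hc0 k
  have hlvr : ∀ k, lv k ≤ r := fun k => (Mito.lev_le hc0 k).trans (le_max_right t c0)
  have hstar : ∀ k s, 0 ≤ s →
      W k s = f (lv k) + 2 * ∫ u in (0:ℝ)..s, ρ k u * W (k + 1) u :=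
    fun k s hs => Mito.star hB hc0 hφsol k hs
  have hstarn : ∀ n k s, 0 ≤ s →
      Wn n k s = fn n (lv k) + 2 * ∫ u in (0:ℝ)..s, ρ k u * Wn n (k + 1) u :=
    fun n k s hs => Mito.star hB hc0 (hφn n).2 k hs
  have hρc : ∀ k, Continuous (ρ k) := fun k => Mito.rho_cont hB hc0 k
  have hρb : ∀ k u, 0 ≤ u → u ≤ t → 0 ≤ ρ k u ∧ ρ k u ≤ M := fun k u hu hut =>
    ⟨Mito.rho_nonneg hB hc0 k u, Mito.rho_le hB hc0 hK hK0 k hu hut⟩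
  have hρabs : ∀ k u, 0 ≤ u → u ≤ t → |ρ k u| ≤ M := fun k u hu hut => by
    rw [abs_of_nonneg (hρb k u hu hut).1]; exact (hρb k u hu hut).2
  -- bounds on W and Wn
  have hWgen : ∀ (ψ : ℝ → ℝ → ℝ) (Cψ : ℝ),
      (∀ t' x', 0 ≤ t' → t' ≤ r → 0 < x' → x' ≤ r → |ψ t' x'| ≤ Cψ) →
      ∀ k s, 0 ≤ s → s ≤ t → |Mito.Wfun B c0 ψ k s| ≤ Real.exp (K * t) * Cψ := by
    intro ψ Cψ hCψ k s hs hst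
    rw [Mito.Wfun, abs_mul, abs_of_nonneg (Real.exp_nonneg _)]
    have h1 : Real.exp (Mito.Afun B c0 k s) ≤ Real.exp (K * t) := by
      refine Real.exp_le_exp.mpr ((Mito.Afun_le hB hc0 hK k hs).trans ?_)
      nlinarith
    have h2 : |ψ s (Mito.lev c0 k * Real.exp (-s))| ≤ Cψ := by
      refine hCψ s _ hs (hst.trans (le_max_left t c0)) (by have := hlv k; positivity) ?_
      calc Mito.lev c0 k * Real.exp (-s) ≤ Mito.lev c0 k * 1 := by
            refine mul_le_mul_of_nonneg_left ?_ (hlv k).le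
            exact Real.exp_le_one_iff.mpr (neg_nonpos.mpr hs)
        _ = Mito.lev c0 k := mul_one _
        _ ≤ r := hlvr k
    exact mul_le_mul h1 h2 (abs_nonneg _) (Real.exp_nonneg _)
  have hWb : ∀ k s, 0 ≤ s → s ≤ t → |W k s| ≤ Real.exp (K * t) * Cφ :=
    hWgen φ Cφ hCφ
  have hWnb : ∀ n k s, 0 ≤ s → s ≤ t → |Wn n k s| ≤ Real.exp (K * t) * Cn n :=
    fun n => hWgen (φn n) (Cn n) (hCn n)
  -- integrability of the kernel integrands
  have hintW : ∀ k s, 0 ≤ s → s ≤ t →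
      IntervalIntegrable (fun u => ρ k u * W (k + 1) u) volume 0 s :=
    Mito.lemA ρ W (fun k => f (lv k)) t M (Real.exp (K * t) * Cφ) hρc hρabs hWb
      (fun k s hs => hstar k s hs)
  have hintWn : ∀ n k s, 0 ≤ s → s ≤ t →
      IntervalIntegrable (fun u => ρ k u * Wn n (k + 1) u) volume 0 s := fun n =>
    Mito.lemA ρ (Wn n) (fun k => fn n (lv k)) t M (Real.exp (K * t) * Cn n) hρc hρabs (hWnb n)
      (fun k s hs => hstarn n k s hs)
  -- monotonicity facts
  have hmono' : ∀ y, 0 < y → ∀ n p, n ≤ p → fn n y ≤ fn p y := by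
    intro y hy n p hnp
    induction p, hnp using Nat.le_induction with
    | base => exact le_refl _
    | succ p hnp ih => exact ih.trans (hmono p y hy)
  have hfnle : ∀ n y, 0 < y → fn n y ≤ f y := fun n y hy =>
    ge_of_tendsto (hlim y hy) (eventually_atTop.mpr ⟨n, fun p hp => hmono' y hy n p hp⟩)
  have hfn0le : ∀ n y, 0 < y → fn 0 y ≤ fn n y := fun n y hy => hmono' y hy 0 n (Nat.zero_le n)
  -- uniform data bound
  set D0 : ℝ := Cf0 + Cf with hD0def
  have hD0 : ∀ n k, |fn n (lv k)| ≤ D0 := by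
    intro n k
    have h1 := hCf0 _ (hlv k) (hlvr k)
    have h2 := hCf _ (hlv k) (hlvr k)
    have h3 := hfnle n _ (hlv k)
    have h4 := hfn0le n _ (hlv k)
    have hCf0nn : 0 ≤ Cf0 := (abs_nonneg _).trans h1
    have hCfnn : 0 ≤ Cf := (abs_nonneg _).trans h2
    rw [abs_le] at h1 h2 ⊢
    constructor <;> [linarith [h1.1]; linarith [h2.2]]
  have hD0nn : 0 ≤ D0 := (abs_nonneg _).trans (hD0 0 0)
  -- uniform bound on Wn via gron
  set C1 : ℝ := D0 * Real.exp (2 * M * t) with hC1def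
  have hUnif : ∀ n k s, 0 ≤ s → s ≤ t → |Wn n k s| ≤ C1 := by
    intro n k s hs hst
    have hCwnn : (0:ℝ) ≤ Real.exp (K * t) * Cn n :=
      le_trans (abs_nonneg _) (hWnb n 0 0 le_rfl ht)
    have hrec : ∀ k' s', 0 ≤ s' → s' ≤ t → |Wn n k' s'| ≤ |fn n (lv k')| +
        2 * |∫ u in (0:ℝ)..s', ρ k' u * Wn n (k' + 1) u| := by
      intro k' s' hs' hst'
      rw [hstarn n k' s' hs']
      refine (abs_add_le _ _).trans ?_
      rw [abs_mul, abs_two]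
    have hg := Mito.gron ρ (Wn n) (fun k => |fn n (lv k)|) M (Real.exp (K * t) * Cn n) t
      hMnn hCwnn (fun k => abs_nonneg _) hρb (hWnb n) (hintWn n) hrec
    have hm : ∀ m : ℕ, |Wn n k s| ≤ C1 +
        (Real.exp (K * t) * Cn n) * ((2 * M * s) ^ m / (Nat.factorial m)) := by
      intro m
      refine (hg m k s hs hst).trans ?_
      have hsum : (∑ j ∈ Finset.range m,
          |fn n (lv (k + j))| * ((2 * M * s) ^ j / (Nat.factorial j))) ≤ C1 := by
        calc (∑ j ∈ Finset.range m,
            |fn n (lv (k + j))| * ((2 * M * s) ^ j / (Nat.factorial j)))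
            ≤ ∑ j ∈ Finset.range m, D0 * ((2 * M * s) ^ j / (Nat.factorial j)) := by
              refine Finset.sum_le_sum (fun j _ => mul_le_mul_of_nonneg_right (hD0 n (k + j)) ?_)
              have : (0:ℝ) < Nat.factorial j := by positivity
              positivity
          _ = D0 * ∑ j ∈ Finset.range m, (2 * M * s) ^ j / (Nat.factorial j) := by
              rw [Finset.mul_sum]
          _ ≤ D0 * Real.exp (2 * M * s) := by
              refine mul_le_mul_of_nonneg_left ?_ hD0nn
              exact Real.sum_le_exp_of_nonneg (by positivity) m
          _ ≤ C1 := by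
              refine mul_le_mul_of_nonneg_left (Real.exp_le_exp.mpr ?_) hD0nn
              nlinarith
      linarith
    have htend : Tendsto (fun m : ℕ => C1 +
        (Real.exp (K * t) * Cn n) * ((2 * M * s) ^ m / (Nat.factorial m))) atTop
        (𝓝 (C1 + (Real.exp (K * t) * Cn n) * 0)) :=
      tendsto_const_nhds.add
        ((FloorSemiring.tendsto_pow_div_factorial_atTop (2 * M * s)).const_mul _)
    have := ge_of_tendsto htend (Eventually.of_forall hm)
    simpa using this
  have hC2nn : (0:ℝ) ≤ Real.exp (K * t) * Cφ + C1 :=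
    add_nonneg (le_trans (abs_nonneg _) (hWb 0 0 le_rfl ht))
      (le_trans (abs_nonneg _) (hUnif 0 0 0 le_rfl ht))
  -- Gronwall for the difference
  have hgron2 : ∀ n m k s, 0 ≤ s → s ≤ t → |W k s - Wn n k s| ≤
      (∑ j ∈ Finset.range m,
        (f (lv (k + j)) - fn n (lv (k + j))) * ((2 * M * s) ^ j / (Nat.factorial j)))
      + (Real.exp (K * t) * Cφ + C1) * ((2 * M * s) ^ m / (Nat.factorial m)) := by
    intro n
    have hdint : ∀ k s, 0 ≤ s → s ≤ t → IntervalIntegrable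
        (fun u => ρ k u * (W (k + 1) u - Wn n (k + 1) u)) volume 0 s := by
      intro k s hs hst
      have h1 := (hintW k s hs hst).sub (hintWn n k s hs hst)
      have hfe : (fun u => ρ k u * W (k + 1) u - ρ k u * Wn n (k + 1) u)
          = fun u => ρ k u * (W (k + 1) u - Wn n (k + 1) u) := by
        funext u; ring
      rwa [hfe] at h1
    have hdrec : ∀ k s, 0 ≤ s → s ≤ t → |W k s - Wn n k s| ≤
        (f (lv k) - fn n (lv k)) +
        2 * |∫ u in (0:ℝ)..s, ρ k u * (W (k + 1) u - Wn n (k + 1) u)| := by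
      intro k s hs hst
      have hsplit : W k s - Wn n k s = (f (lv k) - fn n (lv k)) +
          2 * ∫ u in (0:ℝ)..s, ρ k u * (W (k + 1) u - Wn n (k + 1) u) := by
        rw [hstar k s hs, hstarn n k s hs]
        have hsub : (∫ u in (0:ℝ)..s, ρ k u * (W (k + 1) u - Wn n (k + 1) u))
            = (∫ u in (0:ℝ)..s, ρ k u * W (k + 1) u)
              - ∫ u in (0:ℝ)..s, ρ k u * Wn n (k + 1) u := by
          rw [← intervalIntegral.integral_sub (hintW k s hs hst) (hintWn n k s hs hst)]
          congr 1; funext u; ring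
        rw [hsub]; ring
      rw [hsplit]
      refine (abs_add_le _ _).trans ?_
      rw [abs_mul, abs_two, abs_of_nonneg (sub_nonneg.mpr (hfnle n _ (hlv k)))]
    have hdbd : ∀ k s, 0 ≤ s → s ≤ t →
        |W k s - Wn n k s| ≤ Real.exp (K * t) * Cφ + C1 := by
      intro k s hs hst
      refine (abs_sub _ _).trans ?_
      exact add_le_add (hWb k s hs hst) (hUnif n k s hs hst)
    exact Mito.gron ρ (fun k s => W k s - Wn n k s)
      (fun k => f (lv k) - fn n (lv k)) M (Real.exp (K * t) * Cφ + C1) t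
      hMnn hC2nn (fun k => sub_nonneg.mpr (hfnle n _ (hlv k))) hρb hdbd hdint hdrec
  -- identification at (t, x)
  have hx0 : lv 0 * Real.exp (-t) = x := by
    rw [hlvdef, Mito.lev, pow_zero, div_one, hc0def, mul_assoc, ← Real.exp_add]
    simp
  have hφW : ∀ (ψ : ℝ → ℝ → ℝ), ψ t x = Real.exp (-(Mito.Afun B c0 0 t)) * Mito.Wfun B c0 ψ 0 t := by
    intro ψ
    rw [Mito.Wfun, hx0, ← mul_assoc, ← Real.exp_add]
    simp
  have hdiff : ∀ n, |φn n t x - φ t x| ≤ |W 0 t - Wn n 0 t| := by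
    intro n
    rw [hφW φ, hφW (φn n)]
    rw [← mul_sub, abs_mul, abs_of_nonneg (Real.exp_nonneg _), abs_sub_comm]
    calc Real.exp (-(Mito.Afun B c0 0 t)) * |W 0 t - Wn n 0 t|
        ≤ 1 * |W 0 t - Wn n 0 t| := by
          refine mul_le_mul_of_nonneg_right ?_ (abs_nonneg _)
          exact Real.exp_le_one_iff.mpr (neg_nonpos.mpr (Mito.Afun_nonneg hB hc0 0 ht))
      _ = |W 0 t - Wn n 0 t| := one_mul _
  -- final limit argument
  rw [Metric.tendsto_atTop]
  intro ε hε
  obtain ⟨m, hm⟩ : ∃ m : ℕ, (Real.exp (K * t) * Cφ + C1) *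
      ((2 * M * t) ^ m / (Nat.factorial m)) < ε / 2 := by
    have h1 : Tendsto (fun m : ℕ => (Real.exp (K * t) * Cφ + C1) *
        ((2 * M * t) ^ m / (Nat.factorial m))) atTop (𝓝 0) := by
      simpa using (FloorSemiring.tendsto_pow_div_factorial_atTop (2 * M * t)).const_mul
        (Real.exp (K * t) * Cφ + C1)
    obtain ⟨m, hm⟩ := (Metric.tendsto_atTop.mp h1 (ε / 2) (half_pos hε)) 
    refine ⟨m, ?_⟩
    have := hm m le_rfl
    rw [Real.dist_eq, sub_zero] at this
    exact lt_of_le_of_lt (le_abs_self _) this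
  have hsumtend : Tendsto (fun n => ∑ j ∈ Finset.range m,
      (f (lv (0 + j)) - fn n (lv (0 + j))) * ((2 * M * t) ^ j / (Nat.factorial j)))
      atTop (𝓝 0) := by
    have h1 : ∀ j ∈ Finset.range m, Tendsto (fun n =>
        (f (lv (0 + j)) - fn n (lv (0 + j))) * ((2 * M * t) ^ j / (Nat.factorial j)))
        atTop (𝓝 0) := by
      intro j _
      have h2 : Tendsto (fun n => f (lv (0 + j)) - fn n (lv (0 + j))) atTop (𝓝 0) := by
        have h3 := (tendsto_const_nhds (x := f (lv (0 + j))) (f := atTop (α := ℕ))).sub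
          (hlim (lv (0 + j)) (hlv (0 + j)))
        simpa using h3
      simpa using h2.mul_const _
    have := tendsto_finset_sum (Finset.range m) h1
    simpa using this
  obtain ⟨N, hN⟩ := Metric.tendsto_atTop.mp hsumtend (ε / 2) (half_pos hε)
  refine ⟨N, fun n hn => ?_⟩
  have hb := hgron2 n m 0 t ht le_rfl
  have hsumlt : (∑ j ∈ Finset.range m,
      (f (lv (0 + j)) - fn n (lv (0 + j))) * ((2 * M * t) ^ j / (Nat.factorial j))) < ε / 2 := by
    have := hN n hn
    rw [Real.dist_eq, sub_zero] at this
    exact lt_of_le_of_lt (le_abs_self _) this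
  rw [Real.dist_eq]
  calc |φn n t x - φ t x| ≤ |W 0 t - Wn n 0 t| := hdiff n
    _ ≤ (∑ j ∈ Finset.range m,
        (f (lv (0 + j)) - fn n (lv (0 + j))) * ((2 * M * t) ^ j / (Nat.factorial j)))
      + (Real.exp (K * t) * Cφ + C1) * ((2 * M * t) ^ m / (Nat.factorial m)) := hb
    _ < ε / 2 + ε / 2 := by exact add_lt_add hsumlt hm
    _ = ε := add_halves ε
end
end
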